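/- arXiv:2104.06027 — 7 statements merged into one kernel-verified Lean document; each statement's English description precedes it below -/
import Mathlib

section
/- Let ℓ : [0,∞) → (0,∞) be a continuous slowly varying function. Then ℓ(x)·∫₁ˣ dv/(v·ℓ(v)) → ∞ as x → ∞. -/
open Filter MeasureTheory Set intervalIntegral

/-- A function `l : [0,∞) → (0,∞)` is slowly varying if `l(λx)/l(x) → 1` as `x → ∞`
for every `λ > 0`. -/
def SlowlyVarying (l : ℝ → ℝ) : Prop :=
  ∀ lam : ℝ, 0 < lam → Tendsto (fun x => l (lam * x) / l x) atTop (nhds 1)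

/-- If `l` is a continuous slowly varying function, positive on `[0,∞)`, then
`l(x) · ∫₁ˣ dv/(v·l(v)) → ∞` as `x → ∞`. -/
theorem tendsto_atTop_mul_integral_inv_mul
    (l : ℝ → ℝ) (hcont : ContinuousOn l (Set.Ici 0))
    (hpos : ∀ x ∈ Set.Ici (0 : ℝ), 0 < l x)
    (hsv : SlowlyVarying l) :
    Tendsto (fun x => l x * ∫ v in (1 : ℝ)..x, (v * l v)⁻¹) atTop atTop := by
  set g : ℝ → ℝ := fun v => (v * l v)⁻¹ with hgdef
  have hgcont : ContinuousOn g (Ici 1) := by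
    apply ContinuousOn.inv₀
    · exact continuousOn_id.mul (hcont.mono (Ici_subset_Ici.mpr zero_le_one))
    · intro v hv
      have hv0 : (0:ℝ) < v := lt_of_lt_of_le one_pos hv
      exact ne_of_gt (mul_pos hv0 (hpos v hv0.le))
  rw [tendsto_atTop]
  intro M
  by_contra hM
  rw [Filter.not_eventually] at hM
  set lam : ℝ := Real.exp (max M 0 + 1) with hlamdef
  have hmax : (0:ℝ) < max M 0 + 1 := by
    have := le_max_right M 0; linarith
  have hlam1 : (1:ℝ) < lam := Real.one_lt_exp_iff.mpr hmax
  have hlampos : (0:ℝ) < lam := lt_trans one_pos hlam1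
  have hloglam : Real.log lam = max M 0 + 1 := Real.log_exp _
  have hlaminv : (0:ℝ) < lam⁻¹ := inv_pos.mpr hlampos
  have hlaminv1 : lam⁻¹ ≤ 1 := by
    rw [inv_le_one_iff₀]; right; exact hlam1.le
  -- extract a sequence
  have hfreq := Filter.frequently_atTop.mp hM
  choose xs hxs hxs2 using fun n : ℕ => hfreq (max (n:ℝ) lam)
  have hxlam : ∀ n : ℕ, lam ≤ xs n := fun n : ℕ => le_trans (le_max_right _ _) (hxs n)
  have hxge : ∀ n : ℕ, (n:ℝ) ≤ xs n := fun n : ℕ => le_trans (le_max_left _ _) (hxs n)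
  have hxtop : Tendsto xs atTop atTop :=
    tendsto_atTop_mono hxge tendsto_natCast_atTop_atTop
  have hxpos : ∀ n : ℕ, 0 < xs n := fun n => lt_of_lt_of_le hlampos (hxlam n)
  have hx1 : ∀ n : ℕ, 1 ≤ xs n := fun n => le_trans hlam1.le (hxlam n)
  -- the key per-n bound
  set G : ℕ → ℝ → ENNReal := fun n u => ENNReal.ofReal (l (xs n) / (u * l (u * xs n)))
    with hGdef
  have hqcont : ∀ n : ℕ, ContinuousOn (fun u => l (xs n) / (u * l (u * xs n)))
      (Icc lam⁻¹ 1) := by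
    intro n
    apply ContinuousOn.div continuousOn_const
    · apply continuousOn_id.mul
      apply hcont.comp (continuousOn_id.mul continuousOn_const)
      intro u hu
      exact mul_nonneg (le_trans hlaminv.le hu.1) (hxpos n).le
    · intro u hu
      have hu0 : 0 < u := lt_of_lt_of_le hlaminv hu.1
      exact ne_of_gt (mul_pos hu0 (hpos _ (mul_nonneg hu0.le (hxpos n).le)))
  have hqnn : ∀ n : ℕ, ∀ u ∈ Icc lam⁻¹ 1, 0 ≤ l (xs n) / (u * l (u * xs n)) := by
    intro n u hu
    have hu0 : 0 < u := lt_of_lt_of_le hlaminv hu.1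
    exact le_of_lt (div_pos (hpos _ (hxpos n).le)
      (mul_pos hu0 (hpos _ (mul_nonneg hu0.le (hxpos n).le))))
  have key : ∀ n : ℕ, ∫⁻ u in Ioc lam⁻¹ 1, G n u ≤ ENNReal.ofReal M := by
    intro n
    set x := xs n with hxdef
    have hx0 : 0 < x := hxpos n
    have hxlam' : lam ≤ x := hxlam n
    have hmid : 1 ≤ x * lam⁻¹ := by
      rw [le_mul_inv_iff₀ hlampos, one_mul]; exact hxlam'
    have hmidx : x * lam⁻¹ ≤ x := by
      nlinarith [mul_pos hx0 hlaminv]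
    -- integrability of g on subintervals of [1, x]
    have hint1 : IntervalIntegrable g volume 1 (x * lam⁻¹) := by
      apply (hgcont.mono _).intervalIntegrable
      rw [uIcc_of_le hmid]
      exact Icc_subset_Ici_self
    have hint2 : IntervalIntegrable g volume (x * lam⁻¹) x := by
      apply (hgcont.mono _).intervalIntegrable
      rw [uIcc_of_le hmidx]
      exact fun v hv => le_trans hmid hv.1
    -- split
    have hsplit : (∫ v in (1:ℝ)..x, g v)
        = (∫ v in (1:ℝ)..(x * lam⁻¹), g v) + ∫ v in (x * lam⁻¹)..x, g v :=
      (integral_add_adjacent_intervals hint1 hint2).symm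
    have hfirst : 0 ≤ ∫ v in (1:ℝ)..(x * lam⁻¹), g v := by
      apply intervalIntegral.integral_nonneg hmid
      intro v hv
      have hv0 : 0 < v := lt_of_lt_of_le one_pos hv.1
      exact le_of_lt (inv_pos.mpr (mul_pos hv0 (hpos v hv0.le)))
    -- substitution
    have hsub : l x * ∫ v in (x * lam⁻¹)..x, g v
        = ∫ u in lam⁻¹..(1:ℝ), l x / (u * l (u * x)) := by
      have h1 : (∫ u in lam⁻¹..(1:ℝ), g (x * u)) = x⁻¹ • ∫ v in x * lam⁻¹..x * 1, g v :=
        intervalIntegral.integral_comp_mul_left g (ne_of_gt hx0)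
      rw [mul_one] at h1
      have h2 : (∫ v in x * lam⁻¹..x, g v) = x * ∫ u in lam⁻¹..(1:ℝ), g (x * u) := by
        rw [h1, smul_eq_mul, ← mul_assoc, mul_inv_cancel₀ (ne_of_gt hx0), one_mul]
      rw [h2, ← mul_assoc, ← intervalIntegral.integral_const_mul]
      apply intervalIntegral.integral_congr
      intro u hu
      rw [uIcc_of_le hlaminv1] at hu
      have hu0 : 0 < u := lt_of_lt_of_le hlaminv hu.1
      have hl1 : 0 < l (x * u) := hpos _ (mul_nonneg hx0.le hu0.le)
      have hl2 : 0 < l x := hpos _ hx0.le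
      show l x * x * ((x * u) * l (x * u))⁻¹ = l x / (u * l (u * x))
      rw [mul_comm u x]
      field_simp
    -- the real bound
    have hbound : (∫ u in Ioc lam⁻¹ 1, l x / (u * l (u * x))) ≤ l x * ∫ v in (1:ℝ)..x, g v := by
      rw [← intervalIntegral.integral_of_le hlaminv1, ← hsub, hsplit, mul_add]
      have hl2 : 0 < l x := hpos _ hx0.le
      nlinarith [mul_nonneg hl2.le hfirst]
    have hMx : l x * ∫ v in (1:ℝ)..x, g v ≤ M := le_of_lt (lt_of_not_ge (hxs2 n))
    -- convert to lintegral
    have hqint : IntegrableOn (fun u => l x / (u * l (u * x))) (Ioc lam⁻¹ 1) volume := by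
      apply IntegrableOn.mono_set ((hqcont n).integrableOn_Icc) Ioc_subset_Icc_self
    have hqnn' : 0 ≤ᵐ[volume.restrict (Ioc lam⁻¹ 1)] fun u => l x / (u * l (u * x)) := by
      rw [EventuallyLE, ae_restrict_iff' measurableSet_Ioc]
      exact ae_of_all _ fun u hu => hqnn n u (Ioc_subset_Icc_self hu)
    have heq : ENNReal.ofReal (∫ u in Ioc lam⁻¹ 1, l x / (u * l (u * x)))
        = ∫⁻ u in Ioc lam⁻¹ 1, G n u :=
      MeasureTheory.ofReal_integral_eq_lintegral_ofReal hqint hqnn'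
    rw [← heq]
    exact ENNReal.ofReal_le_ofReal (le_trans hbound hMx)
  -- Fatou
  have hmeas : ∀ n : ℕ, AEMeasurable (G n) (volume.restrict (Ioc lam⁻¹ 1)) := by
    intro n
    apply ENNReal.measurable_ofReal.comp_aemeasurable
    exact (((hqcont n).mono Ioc_subset_Icc_self).aemeasurable measurableSet_Ioc)
  have hfatou := MeasureTheory.lintegral_liminf_le' (u := atTop) hmeas
  -- pointwise liminf
  have hlim : ∀ u ∈ Ioc lam⁻¹ 1,
      Filter.liminf (fun n => G n u) atTop = ENNReal.ofReal u⁻¹ := by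
    intro u hu
    have hu0 : 0 < u := lt_of_lt_of_le hlaminv hu.1.le
    have h1 : Tendsto (fun n => l (u * xs n) / l (xs n)) atTop (nhds 1) :=
      (hsv u hu0).comp hxtop
    have h2 : Tendsto (fun n => l (xs n) / l (u * xs n)) atTop (nhds 1) := by
      have := h1.inv₀ one_ne_zero
      simpa [inv_div] using this
    have h3 : Tendsto (fun n => l (xs n) / (u * l (u * xs n))) atTop (nhds u⁻¹) := by
      have h2' := h2.const_mul u⁻¹
      rw [mul_one] at h2'
      refine h2'.congr fun n => ?_
      have hln : l (u * xs n) ≠ 0 := ne_of_gt (hpos _ (mul_nonneg hu0.le (hxpos n).le))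
      field_simp
    exact ((ENNReal.continuous_ofReal.tendsto _).comp h3).liminf_eq
  have hleft : ∫⁻ u in Ioc lam⁻¹ 1, Filter.liminf (fun n => G n u) atTop
      = ENNReal.ofReal (Real.log lam) := by
    rw [MeasureTheory.setLIntegral_congr_fun measurableSet_Ioc hlim]
    have hinvint : IntegrableOn (fun u : ℝ => u⁻¹) (Ioc lam⁻¹ 1) volume := by
      apply IntegrableOn.mono_set _ Ioc_subset_Icc_self
      apply ContinuousOn.integrableOn_Icc
      apply ContinuousOn.inv₀ continuousOn_id
      intro u hu; exact ne_of_gt (lt_of_lt_of_le hlaminv hu.1)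
    have hnn : 0 ≤ᵐ[volume.restrict (Ioc lam⁻¹ 1)] fun u : ℝ => u⁻¹ := by
      rw [EventuallyLE, ae_restrict_iff' measurableSet_Ioc]
      exact ae_of_all _ fun u hu => le_of_lt (inv_pos.mpr (lt_of_lt_of_le hlaminv hu.1.le))
    rw [← MeasureTheory.ofReal_integral_eq_lintegral_ofReal hinvint hnn]
    congr 1
    rw [← intervalIntegral.integral_of_le hlaminv1]
    rw [integral_inv]
    · rw [one_div, inv_inv]
    · rw [uIcc_of_le hlaminv1]
      intro h
      exact absurd h.1 (not_le.mpr hlaminv)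
  -- combine
  have hub : Filter.liminf (fun n => ∫⁻ u in Ioc lam⁻¹ 1, G n u) atTop
      ≤ ENNReal.ofReal M :=
    Filter.liminf_le_of_frequently_le' (Filter.Frequently.of_forall key)
  have hfinal : ENNReal.ofReal (Real.log lam) ≤ ENNReal.ofReal M := by
    calc ENNReal.ofReal (Real.log lam)
        = ∫⁻ u in Ioc lam⁻¹ 1, Filter.liminf (fun n => G n u) atTop := hleft.symm
      _ ≤ Filter.liminf (fun n => ∫⁻ u in Ioc lam⁻¹ 1, G n u) atTop := hfatou
      _ ≤ ENNReal.ofReal M := hub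
  rw [hloglam] at hfinal
  have h1 : ENNReal.ofReal M ≤ ENNReal.ofReal (max M 0) :=
    ENNReal.ofReal_le_ofReal (le_max_left M 0)
  have h2 : ENNReal.ofReal (max M 0 + 1) ≤ ENNReal.ofReal (max M 0) := le_trans hfinal h1
  rw [ENNReal.ofReal_le_ofReal_iff (le_max_right M 0)] at h2
  linarith
end

section
/- Let ℓ : [0,∞) → (0,∞) be a continuous slowly varying function such that ∫₁^∞ dv/(v·ℓ(v)) < ∞. Then the function N(x) = ∫ₓ^∞ dv/(v·ℓ(v)) is slowly varying, and moreover ℓ(x)·N(x) → ∞ as x → ∞. -/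
open Filter MeasureTheory Set intervalIntegral

namespace SVAux

/-- The tail integral `N(x) = ∫ₓ^∞ dv/(v l(v))`. -/
noncomputable def N (l : ℝ → ℝ) (x : ℝ) : ℝ := ∫ v in Set.Ioi x, (v * l v)⁻¹

variable {l : ℝ → ℝ}

lemma contOn (hc : Continuous l) (hp : ∀ v, 0 < l v) {a b : ℝ} (ha : 0 < a) :
    ContinuousOn (fun v : ℝ => (v * l v)⁻¹) (Icc a b) := by
  apply ContinuousOn.inv₀ (continuous_id.mul hc).continuousOn
  intro v hv
  exact (mul_pos (lt_of_lt_of_le ha hv.1) (hp v)).ne'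

lemma intOn_Ioc (hc : Continuous l) (hp : ∀ v, 0 < l v) {a b : ℝ} (ha : 0 < a) :
    IntegrableOn (fun v : ℝ => (v * l v)⁻¹) (Ioc a b) :=
  ((contOn hc hp ha).integrableOn_Icc).mono_set Ioc_subset_Icc_self

lemma intOn_Ioi (hc : Continuous l) (hp : ∀ v, 0 < l v)
    (hint : IntegrableOn (fun v : ℝ => (v * l v)⁻¹) (Ioi 1)) {x : ℝ} (hx : 0 < x) :
    IntegrableOn (fun v : ℝ => (v * l v)⁻¹) (Ioi x) := by
  have h1 : IntegrableOn (fun v : ℝ => (v * l v)⁻¹) (Ioi (max x 1)) :=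
    hint.mono_set (Ioi_subset_Ioi (le_max_right _ _))
  have h2 := (intOn_Ioc hc hp hx (b := max x 1)).union h1
  rwa [Ioc_union_Ioi_eq_Ioi (le_max_left x 1)] at h2

lemma split (hc : Continuous l) (hp : ∀ v, 0 < l v)
    (hint : IntegrableOn (fun v : ℝ => (v * l v)⁻¹) (Ioi 1)) {x y : ℝ}
    (hx : 0 < x) (hxy : x ≤ y) :
    N l x = (∫ v in Ioc x y, (v * l v)⁻¹) + N l y := by
  rw [N, N, ← Ioc_union_Ioi_eq_Ioi hxy,
    MeasureTheory.setIntegral_union (Ioc_disjoint_Ioi le_rfl) measurableSet_Ioi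
      (intOn_Ioc hc hp hx) (intOn_Ioi hc hp hint (hx.trans_le hxy))]

lemma Npos (hc : Continuous l) (hp : ∀ v, 0 < l v)
    (hint : IntegrableOn (fun v : ℝ => (v * l v)⁻¹) (Ioi 1)) {x : ℝ} (hx : 0 < x) :
    0 < N l x := by
  rw [N, MeasureTheory.setIntegral_pos_iff_support_of_nonneg_ae]
  · refine lt_of_lt_of_le ?_ (measure_mono (fun v (hv : v ∈ Ioi x) =>
      (⟨(inv_pos.2 (mul_pos (hx.trans hv) (hp v))).ne', hv⟩ :
        v ∈ Function.support (fun v : ℝ => (v * l v)⁻¹) ∩ Ioi x)))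
    rw [Real.volume_Ioi]
    exact ENNReal.zero_lt_top
  · filter_upwards [ae_restrict_mem measurableSet_Ioi] with v hv
    exact (inv_pos.2 (mul_pos (hx.trans hv) (hp v))).le
  · exact intOn_Ioi hc hp hint hx

lemma Nanti (hc : Continuous l) (hp : ∀ v, 0 < l v)
    (hint : IntegrableOn (fun v : ℝ => (v * l v)⁻¹) (Ioi 1)) {x y : ℝ}
    (hx : 0 < x) (hxy : x ≤ y) : N l y ≤ N l x := by
  rw [split hc hp hint hx hxy]
  refine le_add_of_nonneg_left (setIntegral_nonneg measurableSet_Ioc fun v hv => ?_)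
  exact (inv_pos.2 (mul_pos (hx.trans hv.1) (hp v))).le

lemma subst (hp : ∀ v, 0 < l v) {x m : ℝ} (hx : 0 < x) (hm : 1 ≤ m) :
    (∫ t in Ioc 1 m, l x * (t * l (x * t))⁻¹) =
      l x * ∫ v in Ioc x (m * x), (v * l v)⁻¹ := by
  have hxm : x ≤ m * x := le_mul_of_one_le_left hx.le hm
  rw [← intervalIntegral.integral_of_le hm, ← intervalIntegral.integral_of_le hxm]
  have h := intervalIntegral.integral_comp_mul_left (a := 1) (b := m)
    (fun v : ℝ => (v * l v)⁻¹) hx.ne'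
  have hxne : x ≠ 0 := hx.ne'
  have heq : ∀ t : ℝ, l x * (t * l (x * t))⁻¹ = (x * l x) * (x * t * l (x * t))⁻¹ := by
    intro t
    have h0 : (x * t * l (x * t))⁻¹ = x⁻¹ * (t * l (x * t))⁻¹ := by
      rw [mul_assoc, mul_inv]
    rw [h0, show x * l x * (x⁻¹ * (t * l (x * t))⁻¹)
        = (x * x⁻¹) * (l x * (t * l (x * t))⁻¹) from by ring,
      mul_inv_cancel₀ hxne, one_mul]
  calc (∫ t in (1:ℝ)..m, l x * (t * l (x * t))⁻¹)
      = ∫ t in (1:ℝ)..m, (x * l x) * (x * t * l (x * t))⁻¹ := by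
        simp only [heq]
    _ = (x * l x) * ∫ t in (1:ℝ)..m, (x * t * l (x * t))⁻¹ := by
        rw [intervalIntegral.integral_const_mul]
    _ = l x * ∫ v in x..m * x, (v * l v)⁻¹ := by
        rw [h, mul_one, mul_comm x m, smul_eq_mul]
        field_simp

lemma core (hc : Continuous l) (hp : ∀ v, 0 < l v) (hsv : SlowlyVarying l)
    {m C : ℝ} (hC : 0 ≤ C) (hm : C < Real.log m) (hm1 : 1 ≤ m) :
    ∀ᶠ x in atTop, C ≤ ∫ t in Ioc 1 m, l x * (t * l (x * t))⁻¹ := by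
  by_contra hcon
  rw [Filter.not_eventually] at hcon
  have hfreq := Filter.frequently_atTop.1 hcon
  choose xs hxs hlt using fun n : ℕ => hfreq ((n : ℝ) + 1)
  have hxpos : ∀ n, 0 < xs n := fun n => lt_of_lt_of_le (by positivity) (hxs n)
  have hxtop : Tendsto xs atTop atTop :=
    tendsto_atTop_mono (fun n => le_trans (by linarith) (hxs n)) tendsto_natCast_atTop_atTop
  set g : ℕ → ℝ → ENNReal := fun n t => ENNReal.ofReal (l (xs n) * (t * l (xs n * t))⁻¹)
    with hgdef
  have hmeas : ∀ n, Measurable (g n) := by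
    intro n
    apply ENNReal.measurable_ofReal.comp
    exact (((measurable_id.mul ((hc.measurable.comp
      (measurable_const.mul measurable_id)))).inv).const_mul _)
  have hgcont : ∀ n, IntegrableOn (fun t => l (xs n) * (t * l (xs n * t))⁻¹) (Ioc 1 m) := by
    intro n
    refine (ContinuousOn.integrableOn_Icc ?_).mono_set Ioc_subset_Icc_self
    refine continuousOn_const.mul (ContinuousOn.inv₀ ?_ ?_)
    · exact (continuous_id.mul (hc.comp (continuous_const.mul continuous_id))).continuousOn
    · intro t ht
      exact (mul_pos (lt_of_lt_of_le one_pos ht.1) (hp _)).ne'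
  have hgnn : ∀ n, (0:ℝ → ℝ) ≤ᶠ[ae (volume.restrict (Ioc 1 m))]
      fun t => l (xs n) * (t * l (xs n * t))⁻¹ := by
    intro n
    filter_upwards [ae_restrict_mem measurableSet_Ioc] with t ht
    exact (mul_pos (hp _) (inv_pos.2 (mul_pos (lt_trans one_pos ht.1) (hp _)))).le
  have hfatou := MeasureTheory.lintegral_liminf_le hmeas (μ := volume.restrict (Ioc 1 m)) (u := atTop)
  have hlhs : (∫⁻ t in Ioc 1 m, liminf (fun n => g n t) atTop) =
      ENNReal.ofReal (Real.log m) := by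
    have hae : ∀ᵐ t ∂(volume.restrict (Ioc 1 m)),
        liminf (fun n => g n t) atTop = ENNReal.ofReal t⁻¹ := by
      filter_upwards [ae_restrict_mem measurableSet_Ioc] with t ht
      have ht0 : 0 < t := lt_trans one_pos ht.1
      have h2 : Tendsto (fun n => l (t * xs n) / l (xs n)) atTop (nhds 1) :=
        (hsv t ht0).comp hxtop
      have h4 := (h2.inv₀ one_ne_zero).mul_const t⁻¹
      rw [inv_one, one_mul] at h4
      have h3 : Tendsto (fun n => l (xs n) * (t * l (xs n * t))⁻¹) atTop (nhds t⁻¹) := by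
        refine h4.congr fun n => ?_
        rw [mul_comm (xs n) t, mul_inv, inv_div, div_eq_mul_inv]
        ring
      exact ((ENNReal.continuous_ofReal.tendsto _).comp h3).liminf_eq
    rw [MeasureTheory.lintegral_congr_ae hae]
    have hintinv : IntegrableOn (fun t : ℝ => t⁻¹) (Ioc 1 m) := by
      refine (ContinuousOn.integrableOn_Icc (ContinuousOn.inv₀ continuousOn_id ?_)).mono_set
        Ioc_subset_Icc_self
      exact fun t ht => (lt_of_lt_of_le one_pos ht.1).ne'
    rw [← MeasureTheory.ofReal_integral_eq_lintegral_ofReal hintinv]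
    · congr 1
      rw [← intervalIntegral.integral_of_le hm1,
        integral_inv_of_pos one_pos (lt_of_lt_of_le one_pos hm1), div_one]
    · filter_upwards [ae_restrict_mem measurableSet_Ioc] with t ht
      exact (inv_pos.2 (lt_trans one_pos ht.1)).le
  have hrhs : liminf (fun n => ∫⁻ t in Ioc 1 m, g n t) atTop ≤ ENNReal.ofReal C := by
    have heach : ∀ n, (∫⁻ t in Ioc 1 m, g n t) ≤ ENNReal.ofReal C := by
      intro n
      rw [hgdef]
      rw [← MeasureTheory.ofReal_integral_eq_lintegral_ofReal (hgcont n) (hgnn n)]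
      exact ENNReal.ofReal_le_ofReal (le_of_lt (lt_of_not_ge (hlt n)))
    calc liminf (fun n => ∫⁻ t in Ioc 1 m, g n t) atTop
        ≤ liminf (fun _ : ℕ => ENNReal.ofReal C) atTop :=
          Filter.liminf_le_liminf (Eventually.of_forall heach)
      _ = ENNReal.ofReal C := liminf_const _
  have hfinal : ENNReal.ofReal (Real.log m) ≤ ENNReal.ofReal C :=
    le_trans (le_of_eq hlhs.symm) (le_trans hfatou hrhs)
  rw [ENNReal.ofReal_le_ofReal_iff hC] at hfinal
  linarith

lemma partb (hc : Continuous l) (hp : ∀ v, 0 < l v) (hsv : SlowlyVarying l)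
    (hint : IntegrableOn (fun v : ℝ => (v * l v)⁻¹) (Ioi 1)) :
    Tendsto (fun x => l x * N l x) atTop atTop := by
  rw [tendsto_atTop]
  intro C0
  set C := max C0 0 with hCdef
  have hC0 : 0 ≤ C := le_max_right _ _
  set m := Real.exp (C + 1) with hmdef
  have hm1 : 1 ≤ m := Real.one_le_exp (by linarith)
  have hlog : Real.log m = C + 1 := Real.log_exp _
  have hcore := core hc hp hsv hC0 (by rw [hlog]; linarith) hm1
  filter_upwards [hcore, eventually_gt_atTop 0] with x hx hx0
  have hsub := subst hp hx0 hm1 (l := l)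
  have hle : (∫ v in Ioc x (m * x), (v * l v)⁻¹) ≤ N l x := by
    rw [split hc hp hint hx0 (le_mul_of_one_le_left hx0.le hm1)]
    exact le_add_of_nonneg_right (Npos hc hp hint (by positivity)).le
  calc C0 ≤ C := le_max_left _ _
    _ ≤ ∫ t in Ioc 1 m, l x * (t * l (x * t))⁻¹ := hx
    _ = l x * ∫ v in Ioc x (m * x), (v * l v)⁻¹ := hsub
    _ ≤ l x * N l x := mul_le_mul_of_nonneg_left hle (hp x).le

lemma key (hc : Continuous l) (hp : ∀ v, 0 < l v) (hsv : SlowlyVarying l)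
    (hint : IntegrableOn (fun v : ℝ => (v * l v)⁻¹) (Ioi 1)) {m : ℝ} (hm : 1 ≤ m) :
    Tendsto (fun x => (N l x - N l (m * x)) / N l x) atTop (nhds 0) := by
  rw [Metric.tendsto_nhds]
  intro ε hε
  have hlm : 0 ≤ Real.log m := Real.log_nonneg hm
  have hD : 0 < Real.log m + 1 := by linarith
  have hb := (tendsto_atTop.1 (partb hc hp hsv hint)) ((Real.log m + 1) / ε)
  obtain ⟨X, hX⟩ := eventually_atTop.1 (hb.and (eventually_ge_atTop (1:ℝ)))
  filter_upwards [eventually_ge_atTop (max X 1)] with x hx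
  have hx1 : (1:ℝ) ≤ x := le_trans (le_max_right _ _) hx
  have hxX : X ≤ x := le_trans (le_max_left _ _) hx
  have hx0 : 0 < x := lt_of_lt_of_le one_pos hx1
  have hNx := Npos hc hp hint hx0
  have hxm : x ≤ m * x := le_mul_of_one_le_left hx0.le hm
  have hnum : N l x - N l (m * x) = ∫ v in Ioc x (m * x), (v * l v)⁻¹ := by
    rw [split hc hp hint hx0 hxm]; ring
  set c := ε / (Real.log m + 1) * N l x with hcdef
  have hcpos : 0 < c := by positivity
  have hbound : (∫ v in Ioc x (m * x), (v * l v)⁻¹) ≤ ∫ v in Ioc x (m * x), c * v⁻¹ := by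
    refine setIntegral_mono_on (intOn_Ioc hc hp hx0) ?_ measurableSet_Ioc ?_
    · refine Integrable.const_mul ?_ _
      refine (ContinuousOn.integrableOn_Icc (ContinuousOn.inv₀ continuousOn_id ?_)).mono_set
        Ioc_subset_Icc_self
      exact fun v hv => (lt_of_lt_of_le hx0 hv.1).ne'
    · intro v hv
      have hv0 : 0 < v := lt_trans hx0 hv.1
      have hvX : X ≤ v := le_trans hxX hv.1.le
      have hlN := (hX v hvX).1
      have hNle : N l v ≤ N l x := Nanti hc hp hint hx0 hv.1.le
      have hlN' : Real.log m + 1 ≤ l v * N l v * ε := (div_le_iff₀ hε).1 hlN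
      have hlv : (l v)⁻¹ ≤ c := by
        rw [inv_eq_one_div, div_le_iff₀ (hp v)]
        rw [hcdef, div_mul_eq_mul_div, div_mul_eq_mul_div, le_div_iff₀ hD, one_mul]
        nlinarith [mul_nonneg (mul_nonneg hε.le (hp v).le) (sub_nonneg.2 hNle)]
      rw [mul_inv, mul_comm c v⁻¹]
      exact mul_le_mul_of_nonneg_left hlv (inv_pos.2 hv0).le
  have hintc : (∫ v in Ioc x (m * x), c * v⁻¹) = c * Real.log m := by
    rw [MeasureTheory.integral_const_mul, ← intervalIntegral.integral_of_le hxm,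
      integral_inv_of_pos hx0 (by positivity)]
    congr 2
    field_simp
  have h5 : N l x - N l (m * x) ≤ ε * Real.log m / (Real.log m + 1) * N l x := by
    rw [hnum]
    calc (∫ v in Ioc x (m * x), (v * l v)⁻¹) ≤ ∫ v in Ioc x (m * x), c * v⁻¹ := hbound
      _ = c * Real.log m := hintc
      _ = ε * Real.log m / (Real.log m + 1) * N l x := by rw [hcdef]; ring
  have hnn : 0 ≤ (N l x - N l (m * x)) / N l x := by
    refine div_nonneg ?_ hNx.le
    rw [hnum]
    exact setIntegral_nonneg measurableSet_Ioc fun v hv =>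
      (inv_pos.2 (mul_pos (lt_trans hx0 hv.1) (hp v))).le
  rw [Real.dist_eq, sub_zero, abs_of_nonneg hnn]
  calc (N l x - N l (m * x)) / N l x ≤ ε * Real.log m / (Real.log m + 1) := by
        rw [div_le_iff₀ hNx]; exact h5
    _ < ε := by rw [div_lt_iff₀ hD]; nlinarith

lemma ratio_one (hc : Continuous l) (hp : ∀ v, 0 < l v) (hsv : SlowlyVarying l)
    (hint : IntegrableOn (fun v : ℝ => (v * l v)⁻¹) (Ioi 1)) {m : ℝ} (hm : 1 ≤ m) :
    Tendsto (fun x => N l (m * x) / N l x) atTop (nhds 1) := by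
  have hk := (tendsto_const_nhds (x := (1:ℝ)) (f := atTop)).sub (key hc hp hsv hint hm)
  rw [sub_zero] at hk
  refine hk.congr' ?_
  filter_upwards [eventually_gt_atTop 0] with x hx0
  have hNx := (Npos hc hp hint hx0).ne'
  rw [sub_div, div_self hNx]
  ring

end SVAux

/-- If `l` is a continuous slowly varying function, positive on `[0,∞)`, with
`∫₁^∞ dv/(v·l(v)) < ∞`, then `N(x) = ∫ₓ^∞ dv/(v·l(v))` is slowly varying
and `l(x)·N(x) → ∞` as `x → ∞`. -/
theorem slowlyVarying_tail_integral
    (l : ℝ → ℝ) (hcont : ContinuousOn l (Set.Ici 0))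
    (hpos : ∀ x ∈ Set.Ici (0 : ℝ), 0 < l x)
    (hsv : SlowlyVarying l)
    (hint : IntegrableOn (fun v => (v * l v)⁻¹) (Set.Ioi (1 : ℝ))) :
    SlowlyVarying (fun x => ∫ v in Set.Ioi x, (v * l v)⁻¹) ∧
      Tendsto (fun x => l x * ∫ v in Set.Ioi x, (v * l v)⁻¹) atTop atTop := by
  set l' : ℝ → ℝ := fun v => l (max v 0) with hl'def
  have hc' : Continuous l' :=
    hcont.comp_continuous (continuous_id.max continuous_const) fun x => (le_max_right _ _ : (0:ℝ) ≤ max x 0)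
  have hp' : ∀ v, 0 < l' v := fun v => hpos _ (le_max_right _ _ : (0:ℝ) ≤ max v 0)
  have hleq : ∀ v : ℝ, 0 ≤ v → l' v = l v := fun v hv => by
    simp only [hl'def, max_eq_left hv]
  have hsv' : SlowlyVarying l' := by
    intro lam hlam
    refine (hsv lam hlam).congr' ?_
    filter_upwards [eventually_ge_atTop 0] with x hx
    rw [hleq x hx, hleq (lam * x) (by positivity)]
  have hint' : IntegrableOn (fun v : ℝ => (v * l' v)⁻¹) (Set.Ioi 1) := by
    refine hint.congr_fun (fun v hv => ?_) measurableSet_Ioi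
    rw [hleq v (le_of_lt (lt_of_le_of_lt zero_le_one hv))]
  have hNeq : ∀ x : ℝ, 0 ≤ x → (∫ v in Set.Ioi x, (v * l v)⁻¹) = SVAux.N l' x := by
    intro x hx
    rw [SVAux.N]
    refine setIntegral_congr_fun measurableSet_Ioi fun v hv => ?_
    show (v * l v)⁻¹ = (v * l' v)⁻¹
    rw [hleq v (le_of_lt (lt_of_le_of_lt hx hv))]
  constructor
  · intro lam hlam
    rcases le_or_gt 1 lam with h1 | h1
    · refine (SVAux.ratio_one hc' hp' hsv' hint' h1).congr' ?_
      filter_upwards [eventually_ge_atTop 0] with x hx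
      rw [hNeq x hx, hNeq (lam * x) (by positivity)]
    · have hm1 : (1:ℝ) ≤ lam⁻¹ := (one_le_inv₀ hlam).2 h1.le
      have hcomp : Tendsto (fun x : ℝ => lam * x) atTop atTop :=
        Tendsto.const_mul_atTop hlam tendsto_id
      have h2 := (SVAux.ratio_one hc' hp' hsv' hint' hm1).comp hcomp
      have h3 := h2.inv₀ one_ne_zero
      rw [inv_one] at h3
      refine h3.congr' ?_
      filter_upwards [eventually_ge_atTop 0] with x hx
      simp only [Function.comp]
      rw [inv_mul_cancel_left₀ hlam.ne', inv_div,
        hNeq x hx, hNeq (lam * x) (by positivity)]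
  · refine (SVAux.partb hc' hp' hsv' hint').congr' ?_
    filter_upwards [eventually_ge_atTop 0] with x hx
    rw [hNeq x hx, hleq x hx]
end

section
/- Let ℓ : [0,∞) → (0,∞) be a continuous slowly varying function. Then the function M(x) = ∫₁ˣ (∫ᵥ^∞ du/(u^{3/2} ℓ(u)))² dv is slowly varying, and moreover ℓ(x)²·M(x) → ∞ as x → ∞. -/
open Filter MeasureTheory Set intervalIntegral

namespace SVaux

/-- Baire-category step: local uniformity of the slow-variation limit. -/
lemma unif_small {H : ℝ → ℝ} (hc : Continuous H)
    (hp : ∀ t : ℝ, Tendsto (fun x => H (x + t) - H x) atTop (nhds 0))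
    {ε : ℝ} (hε : 0 < ε) :
    ∃ s : ℝ, 0 < s ∧ ∃ X : ℝ, ∀ x, X ≤ x → ∀ t, 0 ≤ t → t ≤ s → |H (x + t) - H x| ≤ ε := by
  set E : ℕ → Set ℝ := fun n => {t | ∀ x : ℝ, (n : ℝ) ≤ x → |H (x + t) - H x| ≤ ε / 2} with hE
  have hEc : ∀ n, IsClosed (E n) := by
    intro n
    have h1 : E n = ⋂ x : ℝ, {t | (n : ℝ) ≤ x → |H (x + t) - H x| ≤ ε / 2} := by
      ext t; simp [hE, Set.mem_iInter, Set.mem_setOf_eq]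
    rw [h1]
    refine isClosed_iInter fun x => ?_
    by_cases hx : (n : ℝ) ≤ x
    · have h2 : {t : ℝ | (n:ℝ) ≤ x → |H (x + t) - H x| ≤ ε / 2}
          = {t : ℝ | |H (x + t) - H x| ≤ ε / 2} := by
        ext t; simp [hx]
      rw [h2]
      exact isClosed_le (((hc.comp (continuous_const.add continuous_id)).sub
        continuous_const).abs) continuous_const
    · have h2 : {t : ℝ | (n:ℝ) ≤ x → |H (x + t) - H x| ≤ ε / 2} = univ := by
        ext t; simp [hx]
      rw [h2]; exact isClosed_univ
  have hEu : (⋃ n, E n) = univ := by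
    ext t
    simp only [mem_iUnion, mem_univ, iff_true]
    have h3 := (Metric.tendsto_nhds.mp (hp t)) (ε/2) (by positivity)
    rcases eventually_atTop.mp h3 with ⟨X, hX⟩
    rcases exists_nat_ge X with ⟨n, hn⟩
    refine ⟨n, fun x hx => ?_⟩
    have := hX x (le_trans hn hx)
    rw [Real.dist_eq, sub_zero] at this
    exact this.le
  obtain ⟨n, t₀, ht₀⟩ := nonempty_interior_of_iUnion_of_closed hEc hEu
  rcases Metric.mem_nhds_iff.mp (mem_interior_iff_mem_nhds.mp ht₀) with ⟨r, hr, hball⟩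
  set a := t₀ - r/2 with ha
  have haE : ∀ u, 0 ≤ u → u ≤ r/2 → (a + u) ∈ E n := by
    intro u hu hur
    apply hball
    rw [Metric.mem_ball, Real.dist_eq]
    have : a + u - t₀ = u - r/2 := by rw [ha]; ring
    rw [this, abs_lt]
    constructor <;> linarith
  refine ⟨r/2, by linarith, (n : ℝ) + |a| + 1, fun x hx u hu hur => ?_⟩
  have hxa : (n : ℝ) ≤ x - a := by
    have := abs_le.mp (le_refl |a|)
    have h1 : a ≤ |a| := le_abs_self a
    linarith
  have h1 : |H ((x - a) + (a + u)) - H (x - a)| ≤ ε / 2 :=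
    haE u hu hur (x - a) hxa
  have h2 : |H ((x - a) + (a + 0)) - H (x - a)| ≤ ε / 2 :=
    haE 0 le_rfl (by linarith) (x - a) hxa
  have e1 : (x - a) + (a + u) = x + u := by ring
  have e2 : (x - a) + (a + 0) = x := by ring
  rw [e1] at h1
  rw [e2] at h2
  calc |H (x + u) - H x|
      = |(H (x + u) - H (x - a)) - (H x - H (x - a))| := by ring_nf
    _ ≤ |H (x + u) - H (x - a)| + |H x - H (x - a)| := abs_sub _ _
    _ ≤ ε / 2 + ε / 2 := add_le_add h1 h2
    _ = ε := by ring

end SVaux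

namespace SVaux2
open SVaux

/-- Uniform convergence theorem on compact t-intervals. -/
lemma unif_compact {H : ℝ → ℝ} (hc : Continuous H)
    (hp : ∀ t : ℝ, Tendsto (fun x => H (x + t) - H x) atTop (nhds 0))
    {T ε : ℝ} (hT : 0 < T) (hε : 0 < ε) :
    ∃ X : ℝ, ∀ x, X ≤ x → ∀ t, 0 ≤ t → t ≤ T → |H (x + t) - H x| ≤ ε := by
  obtain ⟨s, hs, X₁, h₁⟩ := SVaux.unif_small hc hp (half_pos hε)
  set N : ℕ := ⌈T / s⌉₊ with hN
  have hgrid : ∀ᶠ x in atTop, ∀ i ∈ Finset.range (N + 1), |H (x + i * s) - H x| ≤ ε / 2 := by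
    rw [eventually_all_finset]
    intro i _
    have h3 := (Metric.tendsto_nhds.mp (hp (i * s))) (ε/2) (half_pos hε)
    filter_upwards [h3] with x hx
    rw [Real.dist_eq, sub_zero] at hx
    exact hx.le
  have hX₁ : ∀ᶠ x in atTop, X₁ ≤ x := eventually_ge_atTop X₁
  rcases eventually_atTop.mp (hgrid.and hX₁) with ⟨X, hX⟩
  refine ⟨X, fun x hx t ht htT => ?_⟩
  obtain ⟨hg, hx1⟩ := hX x hx
  set i : ℕ := ⌊t / s⌋₊ with hi
  have his : (i : ℝ) ≤ t / s := Nat.floor_le (by positivity)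
  have hiN : i ≤ N := by
    have h4 : (i : ℝ) ≤ (N : ℝ) := by
      refine le_trans his (le_trans ?_ (Nat.le_ceil _))
      exact (div_le_div_iff_of_pos_right hs).mpr htT
    exact_mod_cast h4
  have hist : (i : ℝ) * s ≤ t := by
    rw [← le_div_iff₀ hs]
    exact his
  have htis : t - i * s ≤ s := by
    have := Nat.lt_floor_add_one (t / s)
    have h5 : t / s < (i : ℝ) + 1 := by exact_mod_cast this
    rw [div_lt_iff₀ hs] at h5
    linarith
  have h6 : |H ((x + i * s) + (t - i * s)) - H (x + i * s)| ≤ ε / 2 := by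
    refine h₁ (x + i * s) ?_ _ (by linarith) htis
    have : (0:ℝ) ≤ (i:ℝ) * s := by positivity
    linarith
  have h7 : |H (x + i * s) - H x| ≤ ε / 2 := hg i (Finset.mem_range.mpr (Nat.lt_succ_of_le hiN))
  have e1 : (x + i * s) + (t - i * s) = x + t := by ring
  rw [e1] at h6
  calc |H (x + t) - H x|
      = |(H (x + t) - H (x + i * s)) + (H (x + i * s) - H x)| := by ring_nf
    _ ≤ |H (x + t) - H (x + i * s)| + |H (x + i * s) - H x| := abs_add_le _ _
    _ ≤ ε / 2 + ε / 2 := add_le_add h6 h7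
    _ = ε := by ring

/-- Additive Potter bound. -/
lemma potter_additive {H : ℝ → ℝ} (hc : Continuous H)
    (hp : ∀ t : ℝ, Tendsto (fun x => H (x + t) - H x) atTop (nhds 0))
    {ε δ : ℝ} (hε : 0 < ε) (hδ : 0 < δ) :
    ∃ X : ℝ, ∀ x, X ≤ x → ∀ t, 0 ≤ t → |H (x + t) - H x| ≤ ε + δ * t := by
  set ε' : ℝ := min ε δ with hε'
  have hε'0 : 0 < ε' := lt_min hε hδ
  obtain ⟨X, hX⟩ := unif_compact hc hp one_pos hε'0
  have key : ∀ k : ℕ, ∀ x, X ≤ x → ∀ t, 0 ≤ t → t ≤ (k : ℝ) + 1 →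
      |H (x + t) - H x| ≤ ((k : ℝ) + 1) * ε' := by
    intro k
    induction k with
    | zero => intro x hx t ht ht1; simpa using hX x hx t ht (by simpa using ht1)
    | succ k ih =>
      intro x hx t ht ht1
      by_cases hcase : t ≤ (k : ℝ) + 1
      · refine (ih x hx t ht hcase).trans ?_
        have : ((k:ℝ) + 1) ≤ ((k:ℝ) + 1 + 1) := by linarith
        push_cast
        nlinarith [hε'0.le]
      · push_neg at hcase
        have h1 : |H ((x + 1) + (t - 1)) - H (x + 1)| ≤ ((k : ℝ) + 1) * ε' := by
          refine ih (x + 1) (by linarith) (t - 1) (by linarith) ?_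
          push_cast at ht1 ⊢
          linarith
        have h2 : |H (x + 1) - H x| ≤ ε' := hX x hx 1 zero_le_one le_rfl
        have e1 : (x + 1) + (t - 1) = x + t := by ring
        rw [e1] at h1
        calc |H (x + t) - H x|
            = |(H (x + t) - H (x + 1)) + (H (x + 1) - H x)| := by ring_nf
          _ ≤ |H (x + t) - H (x + 1)| + |H (x + 1) - H x| := abs_add_le _ _
          _ ≤ ((k : ℝ) + 1) * ε' + ε' := add_le_add h1 h2
          _ = ((k : ℝ) + 1 + 1) * ε' := by ring
          _ = (((k + 1 : ℕ) : ℝ) + 1) * ε' := by push_cast; ring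
  refine ⟨X, fun x hx t ht => ?_⟩
  set k : ℕ := ⌊t⌋₊ with hk
  have hk1 : t ≤ (k : ℝ) + 1 := (Nat.lt_floor_add_one t).le
  have hkt : (k : ℝ) ≤ t := Nat.floor_le ht
  have := key k x hx t ht hk1
  have h8 : ((k : ℝ) + 1) * ε' ≤ (t + 1) * ε' := by nlinarith [hε'0.le]
  have h9 : (t + 1) * ε' ≤ ε + δ * t := by
    have h10 : ε' ≤ ε := min_le_left _ _
    have h11 : ε' ≤ δ := min_le_right _ _
    nlinarith [hε'0.le]
  linarith

end SVaux2

section Potter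
open Real

variable {l : ℝ → ℝ}

lemma potter (hcont : ContinuousOn l (Set.Ici 0))
    (hpos : ∀ x ∈ Set.Ici (0:ℝ), 0 < l x) (hsv : SlowlyVarying l)
    {ε δ : ℝ} (hε : 0 < ε) (hδ : 0 < δ) :
    ∃ X : ℝ, 1 ≤ X ∧ ∀ x u : ℝ, X ≤ x → x ≤ u →
      Real.exp (-ε) * (u / x) ^ (-δ) * l x ≤ l u ∧
      l u ≤ Real.exp ε * (u / x) ^ δ * l x := by
  set H : ℝ → ℝ := fun y => Real.log (l (Real.exp y)) with hH
  have hlexp : ∀ y : ℝ, 0 < l (Real.exp y) := fun y => hpos _ (le_of_lt (Real.exp_pos y))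
  have hHc : Continuous H := by
    have h1 : Continuous fun y => l (Real.exp y) :=
      hcont.comp_continuous Real.continuous_exp fun y => (Real.exp_pos y).le
    exact h1.log fun y => (hlexp y).ne'
  have hHp : ∀ t : ℝ, Tendsto (fun y => H (y + t) - H y) atTop (nhds 0) := by
    intro t
    have h1 : Tendsto (fun x : ℝ => l (Real.exp t * x) / l x) atTop (nhds 1) :=
      hsv (Real.exp t) (Real.exp_pos t)
    have h2 : Tendsto (fun y : ℝ => l (Real.exp t * Real.exp y) / l (Real.exp y))
        atTop (nhds 1) := h1.comp Real.tendsto_exp_atTop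
    have h3 : Tendsto (fun y : ℝ => Real.log (l (Real.exp t * Real.exp y) / l (Real.exp y)))
        atTop (nhds 0) := by
      have := (Real.continuousAt_log one_ne_zero).tendsto.comp h2
      simpa [Function.comp_def] using this
    refine h3.congr fun y => ?_
    rw [Real.log_div (hpos (Real.exp t * Real.exp y) (Set.mem_Ici.mpr (by positivity))).ne' (hlexp y).ne']
    rw [hH]
    congr 2
    rw [← Real.exp_add]
    ring_nf
  obtain ⟨X', hX'⟩ := SVaux2.potter_additive hHc hHp hε hδ
  refine ⟨max 1 (Real.exp X'), le_max_left _ _, fun x u hx hxu => ?_⟩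
  have hx0 : (0:ℝ) < x := lt_of_lt_of_le one_pos (le_trans (le_max_left _ _) hx)
  have hu0 : (0:ℝ) < u := lt_of_lt_of_le hx0 hxu
  have hlx : 0 < l x := hpos _ hx0.le
  have hlu : 0 < l u := hpos _ hu0.le
  have hlogx : X' ≤ Real.log x := by
    rw [← Real.log_exp X']
    exact Real.log_le_log (Real.exp_pos _) (le_trans (le_max_right _ _) hx)
  have hlog_le : Real.log x ≤ Real.log u := Real.log_le_log hx0 hxu
  set t : ℝ := Real.log u - Real.log x with hht
  have hkey := hX' (Real.log x) hlogx t (by linarith)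
  have e1 : Real.log x + t = Real.log u := by rw [hht]; ring
  have e2 : H (Real.log u) = Real.log (l u) := by rw [hH]; simp [Real.exp_log hu0]
  have e3 : H (Real.log x) = Real.log (l x) := by rw [hH]; simp [Real.exp_log hx0]
  rw [e1, e2, e3] at hkey
  have habs := abs_le.mp hkey
  have hratio : Real.log (u / x) = t := by rw [Real.log_div hu0.ne' hx0.ne', hht]
  have hrpow : ∀ c : ℝ, (u / x) ^ c = Real.exp (c * t) := by
    intro c
    rw [Real.rpow_def_of_pos (by positivity), hratio, mul_comm]
  constructor
  · have h4 : Real.log (l x) - (ε + δ * t) ≤ Real.log (l u) := by linarith [habs.1]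
    have h5 : Real.exp (Real.log (l x) - (ε + δ * t)) ≤ l u := by
      rw [← Real.exp_log hlu]
      exact Real.exp_le_exp.mpr h4
    calc Real.exp (-ε) * (u / x) ^ (-δ) * l x
        = Real.exp (Real.log (l x) - (ε + δ * t)) := by
          rw [hrpow (-δ), show Real.log (l x) - (ε + δ * t)
            = (-ε) + ((-δ) * t) + Real.log (l x) by ring,
            Real.exp_add, Real.exp_add, Real.exp_log hlx]
      _ ≤ l u := h5
  · have h4 : Real.log (l u) ≤ Real.log (l x) + (ε + δ * t) := by linarith [habs.2]
    have h5 : l u ≤ Real.exp (Real.log (l x) + (ε + δ * t)) := by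
      rw [← Real.exp_log hlu]
      exact Real.exp_le_exp.mpr h4
    refine h5.trans_eq ?_
    rw [hrpow δ, show Real.log (l x) + (ε + δ * t)
      = ε + (δ * t) + Real.log (l x) by ring,
      Real.exp_add, Real.exp_add, Real.exp_log hlx]

end Potter

section Gpart
open Real

variable {l : ℝ → ℝ}

noncomputable def ff (l : ℝ → ℝ) (u : ℝ) : ℝ := (u ^ ((3:ℝ)/2) * l u)⁻¹

noncomputable def Gf (l : ℝ → ℝ) (v : ℝ) : ℝ := ∫ u in Ioi v, (u ^ ((3:ℝ)/2) * l u)⁻¹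

lemma Gf_eq (v : ℝ) : Gf l v = ∫ u in Ioi v, ff l u := rfl

lemma ff_cont (hcont : ContinuousOn l (Set.Ici 0))
    (hpos : ∀ x ∈ Set.Ici (0:ℝ), 0 < l x) : ContinuousOn (ff l) (Ioi 0) := by
  apply ContinuousOn.inv₀
  · exact (continuousOn_id.rpow_const fun x hx => Or.inl (ne_of_gt hx)).mul
      (hcont.mono fun x hx => mem_Ici.mpr (le_of_lt (mem_Ioi.mp hx)))
  · intro x hx
    have : 0 < x ^ ((3:ℝ)/2) * l x :=
      mul_pos (Real.rpow_pos_of_pos hx _) (hpos x (mem_Ici.mpr (le_of_lt hx)))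
    exact this.ne'

lemma ff_pos (hpos : ∀ x ∈ Set.Ici (0:ℝ), 0 < l x) {u : ℝ} (hu : 0 < u) : 0 < ff l u :=
  inv_pos.mpr (mul_pos (Real.rpow_pos_of_pos hu _) (hpos u hu.le))

lemma ff_le (hpos : ∀ x ∈ Set.Ici (0:ℝ), 0 < l x) {X ε δ : ℝ}
    (hX1 : 1 ≤ X)
    (pot_low : ∀ x u : ℝ, X ≤ x → x ≤ u → Real.exp (-ε) * (u/x) ^ (-δ) * l x ≤ l u) :
    ∀ v, X ≤ v → ∀ u, v ≤ u → ff l u ≤ (Real.exp ε * v ^ (-δ) / l v) * u ^ (δ - 3/2) := by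
  intro v hv u hu
  have hv0 : (0:ℝ) < v := lt_of_lt_of_le one_pos (le_trans hX1 hv)
  have hu0 : (0:ℝ) < u := lt_of_lt_of_le hv0 hu
  have hlv : 0 < l v := hpos v hv0.le
  have hlu : 0 < l u := hpos u hu0.le
  have key := pot_low v u hv hu
  have e1 : (u/v) ^ (-δ) = u ^ (-δ) * v ^ δ := by
    rw [Real.div_rpow hu0.le hv0.le, div_eq_mul_inv, ← Real.rpow_neg hv0.le, neg_neg]
  have i2 : u ^ ((3:ℝ)/2) * u ^ (-δ) = u ^ ((3:ℝ)/2 - δ) := by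
    rw [← Real.rpow_add hu0]; ring_nf
  have i1 : (u ^ ((3:ℝ)/2 - δ))⁻¹ = u ^ (δ - (3:ℝ)/2) := by
    rw [← Real.rpow_neg hu0.le]; ring_nf
  have hBpos : 0 < Real.exp (-ε) * (u/v) ^ (-δ) * l v :=
    mul_pos (mul_pos (Real.exp_pos _) (Real.rpow_pos_of_pos (by positivity) _)) hlv
  have step : ff l u ≤ (u ^ ((3:ℝ)/2) * (Real.exp (-ε) * (u/v) ^ (-δ) * l v))⁻¹ := by
    rw [ff]
    apply inv_anti₀
    · exact mul_pos (Real.rpow_pos_of_pos hu0 _) hBpos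
    · exact mul_le_mul_of_nonneg_left key (Real.rpow_pos_of_pos hu0 _).le
  refine step.trans_eq ?_
  rw [e1, show u ^ ((3:ℝ)/2) * (Real.exp (-ε) * (u ^ (-δ) * v ^ δ) * l v)
      = Real.exp (-ε) * v ^ δ * l v * (u ^ ((3:ℝ)/2) * u ^ (-δ)) by ring,
    i2, mul_inv, mul_inv, mul_inv, Real.exp_neg, inv_inv, i1]
  rw [show (v ^ δ)⁻¹ = v ^ (-δ) by rw [← Real.rpow_neg hv0.le]]
  rw [div_eq_mul_inv]
  ring

lemma ff_ge (hpos : ∀ x ∈ Set.Ici (0:ℝ), 0 < l x) {X ε δ : ℝ}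
    (hX1 : 1 ≤ X)
    (pot_up : ∀ x u : ℝ, X ≤ x → x ≤ u → l u ≤ Real.exp ε * (u/x) ^ δ * l x) :
    ∀ v, X ≤ v → ∀ u, v ≤ u → (Real.exp (-ε) * v ^ δ / l v) * u ^ (-δ - 3/2) ≤ ff l u := by
  intro v hv u hu
  have hv0 : (0:ℝ) < v := lt_of_lt_of_le one_pos (le_trans hX1 hv)
  have hu0 : (0:ℝ) < u := lt_of_lt_of_le hv0 hu
  have hlv : 0 < l v := hpos v hv0.le
  have hlu : 0 < l u := hpos u hu0.le
  have key := pot_up v u hv hu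
  have e1 : (u/v) ^ δ = u ^ δ * v ^ (-δ) := by
    rw [Real.div_rpow hu0.le hv0.le, div_eq_mul_inv, ← Real.rpow_neg hv0.le]
  have i2 : u ^ ((3:ℝ)/2) * u ^ δ = u ^ ((3:ℝ)/2 + δ) := by
    rw [← Real.rpow_add hu0]
  have i1 : (u ^ ((3:ℝ)/2 + δ))⁻¹ = u ^ (-δ - (3:ℝ)/2) := by
    rw [← Real.rpow_neg hu0.le]; ring_nf
  have step : (u ^ ((3:ℝ)/2) * (Real.exp ε * (u/v) ^ δ * l v))⁻¹ ≤ ff l u := by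
    rw [ff]
    apply inv_anti₀
    · exact mul_pos (Real.rpow_pos_of_pos hu0 _) hlu
    · exact mul_le_mul_of_nonneg_left key (Real.rpow_pos_of_pos hu0 _).le
  refine le_trans (le_of_eq ?_) step
  rw [e1, show u ^ ((3:ℝ)/2) * (Real.exp ε * (u ^ δ * v ^ (-δ)) * l v)
      = Real.exp ε * v ^ (-δ) * l v * (u ^ ((3:ℝ)/2) * u ^ δ) by ring,
    i2, mul_inv, mul_inv, mul_inv, i1]
  rw [show (v ^ (-δ))⁻¹ = v ^ δ by rw [← Real.rpow_neg hv0.le, neg_neg], Real.exp_neg,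
    div_eq_mul_inv]

lemma integrableOn_rpow_const_mul {C p v : ℝ} (hp : p < -1) (hv : 0 < v) :
    IntegrableOn (fun u : ℝ => C * u ^ p) (Ioi v) :=
  (integrableOn_Ioi_rpow_of_lt hp hv).const_mul C

lemma integral_rpow_const_mul {C p v : ℝ} (hp : p < -1) (hv : 0 < v) :
    ∫ u in Ioi v, C * u ^ p = C * (v ^ (p+1) / (-(p+1))) := by
  rw [MeasureTheory.integral_const_mul, integral_Ioi_rpow_of_lt hp hv]
  rw [neg_div, div_neg]

lemma integrableOn_ff (hcont : ContinuousOn l (Set.Ici 0))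
    (hpos : ∀ x ∈ Set.Ici (0:ℝ), 0 < l x) {X ε δ : ℝ} (hδ0 : 0 < δ) (hδ : δ < 1/2)
    (hX1 : 1 ≤ X)
    (pot_low : ∀ x u : ℝ, X ≤ x → x ≤ u → Real.exp (-ε) * (u/x) ^ (-δ) * l x ≤ l u) :
    ∀ v : ℝ, 0 < v → IntegrableOn (ff l) (Ioi v) := by
  have hmeas : ∀ v : ℝ, 0 < v → AEStronglyMeasurable (ff l) (volume.restrict (Ioi v)) := by
    intro v hv
    exact ((ff_cont hcont hpos).mono (fun u (hu : u ∈ Ioi v) => lt_of_le_of_lt hv.le hu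
      : Ioi v ⊆ Ioi 0)).aestronglyMeasurable measurableSet_Ioi
  have hIX : IntegrableOn (ff l) (Ioi X) := by
    have hX0 : (0:ℝ) < X := lt_of_lt_of_le one_pos hX1
    refine Integrable.mono' (g := fun u => (Real.exp ε * X ^ (-δ) / l X) * u ^ (δ - 3/2))
      (integrableOn_rpow_const_mul (by linarith) hX0) (hmeas X hX0) ?_
    rw [ae_restrict_iff' measurableSet_Ioi]
    filter_upwards with u hu
    have hu' : X ≤ u := le_of_lt hu
    rw [Real.norm_eq_abs, abs_of_nonneg (ff_pos hpos (lt_of_lt_of_le hX0 hu')).le]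
    exact ff_le hpos hX1 pot_low X le_rfl u hu'
  intro v hv
  rcases le_or_gt X v with hvX | hvX
  · exact hIX.mono_set (Ioi_subset_Ioi hvX)
  · have hsplit : Ioi v = Ioc v X ∪ Ioi X := (Ioc_union_Ioi_eq_Ioi hvX.le).symm
    rw [hsplit]
    refine IntegrableOn.union ?_ hIX
    have hcf : ContinuousOn (ff l) (Icc v X) :=
      (ff_cont hcont hpos).mono (fun u hu => lt_of_lt_of_le hv hu.1)
    exact hcf.integrableOn_Icc.mono_set Ioc_subset_Icc_self

lemma Gf_le (hpos : ∀ x ∈ Set.Ici (0:ℝ), 0 < l x) {X ε δ : ℝ}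
    (hδ0 : 0 < δ) (hδ : δ < 1/2) (hX1 : 1 ≤ X)
    (hint : ∀ v : ℝ, 0 < v → IntegrableOn (ff l) (Ioi v))
    (pot_low : ∀ x u : ℝ, X ≤ x → x ≤ u → Real.exp (-ε) * (u/x) ^ (-δ) * l x ≤ l u) :
    ∀ v, X ≤ v → Gf l v ≤ Real.exp ε / ((1:ℝ)/2 - δ) * (v ^ (-(1:ℝ)/2) / l v) := by
  intro v hv
  have hv0 : (0:ℝ) < v := lt_of_lt_of_le one_pos (le_trans hX1 hv)
  have hlv : 0 < l v := hpos v hv0.le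
  have hb := integrableOn_rpow_const_mul
    (C := Real.exp ε * v ^ (-δ) / l v) (p := δ - 3/2) (by linarith) hv0
  have mono := setIntegral_mono_on (hint v hv0) hb measurableSet_Ioi
    (fun u hu => ff_le hpos hX1 pot_low v hv u (le_of_lt hu))
  rw [Gf_eq]
  refine le_trans mono ?_
  rw [integral_rpow_const_mul (by linarith) hv0]
  have i1 : v ^ (-δ) * v ^ (δ - 3/2 + 1) = v ^ (-(1:ℝ)/2) := by
    rw [← Real.rpow_add hv0]; ring_nf
  rw [show -(δ - 3/2 + 1) = (1:ℝ)/2 - δ by ring, ← i1]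
  apply le_of_eq
  field_simp

lemma Gf_ge (hpos : ∀ x ∈ Set.Ici (0:ℝ), 0 < l x) {X ε δ : ℝ}
    (hδ0 : 0 < δ) (hX1 : 1 ≤ X)
    (hint : ∀ v : ℝ, 0 < v → IntegrableOn (ff l) (Ioi v))
    (pot_up : ∀ x u : ℝ, X ≤ x → x ≤ u → l u ≤ Real.exp ε * (u/x) ^ δ * l x) :
    ∀ v, X ≤ v → Real.exp (-ε) / ((1:ℝ)/2 + δ) * (v ^ (-(1:ℝ)/2) / l v) ≤ Gf l v := by
  intro v hv
  have hv0 : (0:ℝ) < v := lt_of_lt_of_le one_pos (le_trans hX1 hv)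
  have hlv : 0 < l v := hpos v hv0.le
  have hb := integrableOn_rpow_const_mul
    (C := Real.exp (-ε) * v ^ δ / l v) (p := -δ - 3/2) (by linarith) hv0
  have mono := setIntegral_mono_on hb (hint v hv0) measurableSet_Ioi
    (fun u hu => ff_ge hpos hX1 pot_up v hv u (le_of_lt hu))
  rw [Gf_eq]
  refine le_trans ?_ mono
  rw [integral_rpow_const_mul (by linarith) hv0]
  have i1 : v ^ δ * v ^ (-δ - 3/2 + 1) = v ^ (-(1:ℝ)/2) := by
    rw [← Real.rpow_add hv0]; ring_nf
  rw [show -(-δ - 3/2 + 1) = (1:ℝ)/2 + δ by ring, ← i1]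
  have h2 : (0:ℝ) < (1:ℝ)/2 + δ := by linarith
  apply le_of_eq
  field_simp

lemma Gf_nonneg (hpos : ∀ x ∈ Set.Ici (0:ℝ), 0 < l x) {v : ℝ} (hv : 0 < v) :
    0 ≤ Gf l v :=
  setIntegral_nonneg measurableSet_Ioi fun u hu => (ff_pos hpos (hv.trans hu)).le

lemma Gf_anti (hpos : ∀ x ∈ Set.Ici (0:ℝ), 0 < l x)
    (hint : ∀ v : ℝ, 0 < v → IntegrableOn (ff l) (Ioi v)) :
    AntitoneOn (Gf l) (Ioi 0) := by
  intro a ha b hb hab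
  rw [Gf_eq, Gf_eq]
  refine setIntegral_mono_set (hint a ha) ?_ (HasSubset.Subset.eventuallyLE (Ioi_subset_Ioi hab))
  rw [EventuallyLE, ae_restrict_iff' measurableSet_Ioi]
  filter_upwards with u hu
  exact (ff_pos hpos (lt_trans ha hu)).le

lemma Gsq_anti (hpos : ∀ x ∈ Set.Ici (0:ℝ), 0 < l x)
    (hint : ∀ v : ℝ, 0 < v → IntegrableOn (ff l) (Ioi v)) :
    AntitoneOn (fun v => (Gf l v) ^ 2) (Ioi 0) := by
  intro a ha b hb hab
  exact pow_le_pow_left₀ (Gf_nonneg hpos hb) (Gf_anti hpos hint ha hb hab) 2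

lemma Gsq_intInt (hpos : ∀ x ∈ Set.Ici (0:ℝ), 0 < l x)
    (hint : ∀ v : ℝ, 0 < v → IntegrableOn (ff l) (Ioi v))
    {a b : ℝ} (ha : 0 < a) (hb : 0 < b) :
    IntervalIntegrable (fun v => (Gf l v) ^ 2) volume a b := by
  apply AntitoneOn.intervalIntegrable
  refine (Gsq_anti hpos hint).mono fun x hx => ?_
  rw [Set.mem_uIcc] at hx
  rcases hx with ⟨h1, _⟩ | ⟨h1, _⟩
  · exact lt_of_lt_of_le ha h1
  · exact lt_of_lt_of_le hb h1

end Gpart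

section Main
open Real

variable {l : ℝ → ℝ}

set_option maxHeartbeats 1000000 in
lemma part2 (hcont : ContinuousOn l (Set.Ici 0))
    (hpos : ∀ x ∈ Set.Ici (0:ℝ), 0 < l x) (hsv : SlowlyVarying l) :
    Tendsto (fun x => l x ^ 2 * ∫ v in (1:ℝ)..x, (Gf l v) ^ 2) atTop atTop := by
  -- fixed Potter instance for integrability
  obtain ⟨X₀, hX₀1, hpot0⟩ := potter hcont hpos hsv (ε := Real.log 2) (δ := 1/4)
    (Real.log_pos one_lt_two) (by norm_num)
  have hint : ∀ v : ℝ, 0 < v → IntegrableOn (ff l) (Ioi v) :=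
    integrableOn_ff hcont hpos (by norm_num) (by norm_num) hX₀1
      (fun x u hx hxu => (hpot0 x u hx hxu).1)
  rw [tendsto_atTop]
  intro C
  set C' : ℝ := max C 1 with hC'
  have hC'1 : (1:ℝ) ≤ C' := le_max_right _ _
  set lam : ℝ := Real.exp (3 * C') with hlamdef
  have hlam0 : 0 < lam := Real.exp_pos _
  have hloglam : Real.log lam = 3 * C' := Real.log_exp _
  have hloglam_pos : 0 < Real.log lam := by rw [hloglam]; linarith
  have hlam1 : 1 < lam := by
    rw [hlamdef, ← Real.exp_zero]
    exact Real.exp_lt_exp.mpr (by linarith)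
  set δ : ℝ := min (1/4) (Real.log 2 / (4 * Real.log lam)) with hδdef
  have hδ0 : 0 < δ := lt_min (by norm_num) (by positivity)
  have hδ14 : δ ≤ 1/4 := min_le_left _ _
  set ε : ℝ := Real.log 2 / 6 with hεdef
  have hε0 : 0 < ε := by positivity
  obtain ⟨X₁, hX₁1, hpot1⟩ := potter hcont hpos hsv hε0 hδ0
  set X₂ : ℝ := max X₀ X₁ with hX₂def
  have hX₂1 : (1:ℝ) ≤ X₂ := le_trans hX₀1 (le_max_left _ _)
  -- numeric constant
  have hnum : (1:ℝ)/3 ≤ (Real.exp (-ε) / ((1:ℝ)/2 + δ) / (Real.exp (2*ε) * lam ^ (2*δ))) ^ 2 := by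
    have e6 : Real.exp (-(6:ℝ)*ε) = 1/2 := by
      rw [show -(6:ℝ)*ε = -Real.log 2 by rw [hεdef]; ring, Real.exp_neg,
        Real.exp_log two_pos]
      norm_num
    have hlam4 : lam ^ ((4:ℝ)*δ) ≤ 2 := by
      rw [Real.rpow_def_of_pos hlam0]
      rw [show (2:ℝ) = Real.exp (Real.log 2) by rw [Real.exp_log two_pos]]
      apply Real.exp_le_exp.mpr
      have hδ2 : δ ≤ Real.log 2 / (4 * Real.log lam) := min_le_right _ _
      rw [le_div_iff₀ (by positivity : (0:ℝ) < 4 * Real.log lam)] at hδ2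
      nlinarith [hloglam_pos]
    have hsq : (lam ^ ((2:ℝ)*δ)) ^ 2 = lam ^ ((4:ℝ)*δ) := by
      rw [sq, ← Real.rpow_add hlam0]; ring_nf
    have step1 : Real.exp (-ε) / ((1:ℝ)/2 + δ) / (Real.exp (2*ε) * lam ^ (2*δ))
        = Real.exp (-3*ε) / (((1:ℝ)/2 + δ) * lam ^ ((2:ℝ)*δ)) := by
      rw [show Real.exp (-3*ε) = Real.exp (-ε) / Real.exp (2*ε) by
        rw [← Real.exp_sub]; ring_nf]
      have hL : (0:ℝ) < lam ^ ((2:ℝ)*δ) := Real.rpow_pos_of_pos hlam0 _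
      field_simp
    have step2 : (Real.exp (-ε) / ((1:ℝ)/2 + δ) / (Real.exp (2*ε) * lam ^ (2*δ))) ^ 2
        = Real.exp (-(6:ℝ)*ε) / (((1:ℝ)/2 + δ)^2 * lam ^ ((4:ℝ)*δ)) := by
      rw [step1, div_pow, mul_pow, hsq,
        show Real.exp (-3*ε)^2 = Real.exp (-(6:ℝ)*ε) by rw [sq, ← Real.exp_add]; ring_nf]
    rw [step2, e6]
    have h1 : ((1:ℝ)/2 + δ)^2 ≤ 9/16 := by nlinarith
    have h2 : (0:ℝ) < lam ^ ((4:ℝ)*δ) := Real.rpow_pos_of_pos hlam0 _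
    have h3 : ((1:ℝ)/2 + δ)^2 * lam ^ ((4:ℝ)*δ) ≤ (9/16) * 2 := by
      apply mul_le_mul h1 hlam4 h2.le (by norm_num)
    have h4 : (0:ℝ) < ((1:ℝ)/2 + δ)^2 * lam ^ ((4:ℝ)*δ) := by positivity
    rw [le_div_iff₀ h4]
    nlinarith
  -- eventual lower bound
  filter_upwards [eventually_ge_atTop (lam * X₂)] with x hx
  have hX₂0 : (0:ℝ) < X₂ := lt_of_lt_of_le one_pos hX₂1
  have hx0 : (0:ℝ) < x := lt_of_lt_of_le (by positivity) hx
  have hxlam : X₂ ≤ x / lam := (le_div_iff₀ hlam0).mpr (by linarith [hx, mul_comm lam X₂])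
  have hq1 : (1:ℝ) ≤ x / lam := le_trans hX₂1 hxlam
  have hxl0 : (0:ℝ) < x / lam := lt_of_lt_of_le one_pos hq1
  have hxx : x / lam ≤ x := div_le_self hx0.le hlam1.le
  have hX₁x : X₁ ≤ x / lam := le_trans (le_max_right _ _) hxlam
  have hlx : 0 < l x := hpos x hx0.le
  set a : ℝ := Real.exp (-ε) / ((1:ℝ)/2 + δ) with hadef
  set E2 : ℝ := Real.exp (2*ε) * lam ^ ((2:ℝ)*δ) with hE2def
  have ha0 : 0 < a := by
    rw [hadef]; positivity
  have hE2pos : 0 < E2 := by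
    rw [hE2def]
    exact mul_pos (Real.exp_pos _) (Real.rpow_pos_of_pos hlam0 _)
  have hptw : ∀ v ∈ Icc (x/lam) x, (1:ℝ)/3 * (l x ^ 2)⁻¹ * v⁻¹ ≤ (Gf l v)^2 := by
    intro v hv
    obtain ⟨hv1, hv2⟩ := hv
    have hv0 : (0:ℝ) < v := lt_of_lt_of_le hxl0 hv1
    have hlv : 0 < l v := hpos v hv0.le
    have hrp : (0:ℝ) < v ^ (-(1:ℝ)/2) := Real.rpow_pos_of_pos hv0 _
    have hG1 : a * (v ^ (-(1:ℝ)/2) / l v) ≤ Gf l v :=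
      Gf_ge hpos hδ0 hX₁1 hint (fun y u hy hyu => (hpot1 y u hy hyu).2) v
        (le_trans hX₁x hv1)
    -- l v ≤ E2 * l x
    have h5 : l v ≤ Real.exp ε * (v/(x/lam)) ^ δ * l (x/lam) :=
      (hpot1 (x/lam) v hX₁x hv1).2
    have h6 : (v/(x/lam)) ^ δ ≤ lam ^ δ := by
      apply Real.rpow_le_rpow (by positivity) _ hδ0.le
      rw [div_le_iff₀ hxl0]
      calc v ≤ x := hv2
        _ = lam * (x / lam) := by field_simp
    have h7pre := (hpot1 (x/lam) x hX₁x hxx).1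
    have hxq : x / (x/lam) = lam := by
      field_simp
    rw [hxq] at h7pre
    have hpp : (0:ℝ) < Real.exp (-ε) * lam ^ (-δ) :=
      mul_pos (Real.exp_pos _) (Real.rpow_pos_of_pos hlam0 _)
    have hP : Real.exp ε * lam ^ δ = (Real.exp (-ε) * lam ^ (-δ))⁻¹ := by
      rw [mul_inv, Real.exp_neg, inv_inv, ← Real.rpow_neg hlam0.le, neg_neg]
    have h7 : l (x/lam) ≤ Real.exp ε * lam ^ δ * l x := by
      rw [hP]
      calc l (x/lam)
          = (Real.exp (-ε) * lam ^ (-δ))⁻¹ * (Real.exp (-ε) * lam ^ (-δ) * l (x/lam)) := by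
            field_simp
        _ ≤ (Real.exp (-ε) * lam ^ (-δ))⁻¹ * l x :=
            mul_le_mul_of_nonneg_left h7pre (inv_nonneg.mpr hpp.le)
    have hlv_le : l v ≤ E2 * l x := by
      have hee : (0:ℝ) ≤ Real.exp ε := (Real.exp_pos _).le
      have hld : (0:ℝ) ≤ l (x/lam) := (hpos _ hxl0.le).le
      calc l v ≤ Real.exp ε * (v/(x/lam)) ^ δ * l (x/lam) := h5
        _ ≤ Real.exp ε * lam ^ δ * l (x/lam) := by gcongr
        _ ≤ Real.exp ε * lam ^ δ * (Real.exp ε * lam ^ δ * l x) := by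
            have h0 : (0:ℝ) ≤ Real.exp ε * lam ^ δ := by positivity
            exact mul_le_mul_of_nonneg_left h7 h0
        _ = (Real.exp ε * Real.exp ε) * (lam ^ δ * lam ^ δ) * l x := by ring
        _ = E2 * l x := by
            rw [← Real.exp_add, ← Real.rpow_add hlam0, hE2def, two_mul, two_mul]
    have h9 : v ^ (-(1:ℝ)/2) / (E2 * l x) ≤ v ^ (-(1:ℝ)/2) / l v :=
      div_le_div_of_nonneg_left hrp.le hlv hlv_le
    have hstep : a / E2 * (v ^ (-(1:ℝ)/2) / l x) ≤ a * (v ^ (-(1:ℝ)/2) / l v) := by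
      calc a / E2 * (v ^ (-(1:ℝ)/2) / l x)
          = a * (v ^ (-(1:ℝ)/2) / (E2 * l x)) := by
            field_simp
        _ ≤ a * (v ^ (-(1:ℝ)/2) / l v) := mul_le_mul_of_nonneg_left h9 ha0.le
    have hG2 : a / E2 * (v ^ (-(1:ℝ)/2) / l x) ≤ Gf l v := le_trans hstep hG1
    have hGsq : (a / E2 * (v ^ (-(1:ℝ)/2) / l x))^2 ≤ (Gf l v)^2 :=
      pow_le_pow_left₀ (by positivity) hG2 2
    refine le_trans ?_ hGsq
    have hvsq : (v ^ (-(1:ℝ)/2))^2 = v⁻¹ := by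
      rw [sq, ← Real.rpow_add hv0, show -(1:ℝ)/2 + -(1:ℝ)/2 = -1 by ring,
        Real.rpow_neg_one]
    rw [mul_pow, div_pow (v ^ (-(1:ℝ)/2)), hvsq]
    calc (1:ℝ)/3 * (l x ^ 2)⁻¹ * v⁻¹
        ≤ (a/E2)^2 * (l x ^ 2)⁻¹ * v⁻¹ := by
          exact mul_le_mul_of_nonneg_right
            (mul_le_mul_of_nonneg_right hnum (by positivity)) (by positivity)
      _ = (a/E2)^2 * (v⁻¹ / l x ^ 2) := by ring
  -- integral comparison
  have hII2 := Gsq_intInt hpos hint hxl0 hx0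
  have hII1 : IntervalIntegrable (fun v => (1:ℝ)/3 * (l x ^ 2)⁻¹ * v⁻¹) volume (x/lam) x := by
    apply ContinuousOn.intervalIntegrable
    refine ContinuousOn.mul continuousOn_const (ContinuousOn.inv₀ continuousOn_id fun v hv => ?_)
    rw [Set.mem_uIcc] at hv
    rcases hv with ⟨h1, _⟩ | ⟨h1, _⟩
    · exact (lt_of_lt_of_le hxl0 h1).ne'
    · exact (lt_of_lt_of_le hx0 h1).ne'
  have hmono := intervalIntegral.integral_mono_on hxx hII1 hII2 hptw
  have hcalc : ∫ v in (x/lam)..x, (1:ℝ)/3 * (l x ^ 2)⁻¹ * v⁻¹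
      = (1:ℝ)/3 * (l x ^ 2)⁻¹ * Real.log lam := by
    rw [intervalIntegral.integral_const_mul, integral_inv_of_pos hxl0 hx0,
      show x / (x/lam) = lam by field_simp]
  have hIa := Gsq_intInt hpos hint one_pos hxl0
  have hsplit := intervalIntegral.integral_add_adjacent_intervals hIa hII2
  have hnn : 0 ≤ ∫ v in (1:ℝ)..(x/lam), (Gf l v)^2 :=
    intervalIntegral.integral_nonneg hq1 (fun u _ => sq_nonneg _)
  have hMx : (1:ℝ)/3 * (l x ^ 2)⁻¹ * Real.log lam ≤ ∫ v in (1:ℝ)..x, (Gf l v)^2 := by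
    rw [← hsplit, ← hcalc]
    linarith [hmono, hnn]
  have hlx2 : (0:ℝ) < l x ^ 2 := by positivity
  calc C ≤ C' := le_max_left _ _
    _ = l x ^ 2 * ((1:ℝ)/3 * (l x ^ 2)⁻¹ * Real.log lam) := by
        rw [hloglam]
        field_simp
    _ ≤ l x ^ 2 * ∫ v in (1:ℝ)..x, (Gf l v)^2 :=
        mul_le_mul_of_nonneg_left hMx hlx2.le

set_option maxHeartbeats 1000000 in
lemma part1 (hcont : ContinuousOn l (Set.Ici 0))
    (hpos : ∀ x ∈ Set.Ici (0:ℝ), 0 < l x) (hsv : SlowlyVarying l) :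
    SlowlyVarying (fun x => ∫ v in (1:ℝ)..x, (Gf l v) ^ 2) := by
  obtain ⟨X₀, hX₀1, hpot0⟩ := potter hcont hpos hsv (ε := Real.log 2) (δ := 1/4)
    (Real.log_pos one_lt_two) (by norm_num)
  have hint : ∀ v : ℝ, 0 < v → IntegrableOn (ff l) (Ioi v) :=
    integrableOn_ff hcont hpos (by norm_num) (by norm_num) hX₀1
      (fun x u hx hxu => (hpot0 x u hx hxu).1)
  have hT := part2 hcont hpos hsv
  set M : ℝ → ℝ := fun x => ∫ v in (1:ℝ)..x, (Gf l v) ^ 2 with hMdef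
  intro lam hlam
  set p : ℝ := min 1 lam with hpdef
  set q : ℝ := max 1 lam with hqdef
  have hp0 : 0 < p := lt_min one_pos hlam
  have hpq : p ≤ q := min_le_max
  have hp1 : p ≤ 1 := min_le_left _ _
  have h1q : (1:ℝ) ≤ q := le_max_left _ _
  set K : ℝ := 64 * (q - p) / p with hKdef
  have hK0 : 0 ≤ K := by
    rw [hKdef]
    apply div_nonneg _ hp0.le
    nlinarith
  -- key eventual bound
  have hkey : ∀ᶠ x in atTop, |M (lam*x) - M x| ≤ K * (l (p*x) ^ 2)⁻¹ := by
    filter_upwards [eventually_ge_atTop (X₀ / p), eventually_ge_atTop 1] with x hx1 hx2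
    have hx0 : (0:ℝ) < x := lt_of_lt_of_le one_pos hx2
    have hpx : X₀ ≤ p * x := by
      rw [div_le_iff₀ hp0] at hx1
      linarith [hx1, mul_comm x p]
    have hpx1 : (1:ℝ) ≤ p * x := le_trans hX₀1 hpx
    have hpx0 : (0:ℝ) < p * x := lt_of_lt_of_le one_pos hpx1
    have hqx0 : (0:ℝ) < q * x := by positivity
    have hpxqx : p * x ≤ q * x := by nlinarith
    have hI1 : IntervalIntegrable (fun v => (Gf l v)^2) volume 1 x :=
      Gsq_intInt hpos hint one_pos hx0
    have hI2 : IntervalIntegrable (fun v => (Gf l v)^2) volume x (lam * x) :=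
      Gsq_intInt hpos hint hx0 (by positivity)
    have hsplit := intervalIntegral.integral_add_adjacent_intervals hI1 hI2
    have hdiff : M (lam*x) - M x = ∫ v in x..(lam*x), (Gf l v)^2 := by
      rw [hMdef]
      simp only
      rw [← hsplit]
      ring
    have habs : |∫ v in x..(lam*x), (Gf l v)^2| = ∫ v in (p*x)..(q*x), (Gf l v)^2 := by
      rcases le_total 1 lam with hl1 | hl1
      · have hp' : p = 1 := min_eq_left hl1
        have hq' : q = lam := max_eq_right hl1
        rw [hp', hq', one_mul]
        exact abs_of_nonneg (intervalIntegral.integral_nonneg (by nlinarith)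
          fun u _ => sq_nonneg _)
      · have hp' : p = lam := min_eq_right hl1
        have hq' : q = 1 := max_eq_left hl1
        rw [hp', hq', one_mul, intervalIntegral.integral_symm, abs_neg]
        exact abs_of_nonneg (intervalIntegral.integral_nonneg (by nlinarith)
          fun u _ => sq_nonneg _)
    have hIpq : IntervalIntegrable (fun v => (Gf l v)^2) volume (p*x) (q*x) :=
      Gsq_intInt hpos hint hpx0 hqx0
    have hconst : ∫ v in (p*x)..(q*x), (Gf l v)^2 ≤ (q*x - p*x) * (Gf l (p*x))^2 := by
      have hmono := intervalIntegral.integral_mono_on hpxqx hIpq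
        (_root_.intervalIntegrable_const (c := (Gf l (p*x))^2))
        (fun v hv => Gsq_anti hpos hint (mem_Ioi.mpr hpx0)
          (mem_Ioi.mpr (lt_of_lt_of_le hpx0 hv.1)) hv.1)
      simpa [intervalIntegral.integral_const, smul_eq_mul] using hmono
    have hlpx : 0 < l (p*x) := hpos _ hpx0.le
    have hGb : Gf l (p*x) ≤ 8 * ((p*x) ^ (-(1:ℝ)/2) / l (p*x)) := by
      have h2 := Gf_le hpos (by norm_num) (by norm_num : (1:ℝ)/4 < 1/2) hX₀1 hint
        (fun y u hy hyu => (hpot0 y u hy hyu).1) (p*x) hpx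
      refine h2.trans_eq ?_
      rw [Real.exp_log two_pos]
      norm_num
    have hvsq : ((p*x) ^ (-(1:ℝ)/2))^2 = (p*x)⁻¹ := by
      rw [sq, ← Real.rpow_add hpx0, show -(1:ℝ)/2 + -(1:ℝ)/2 = -1 by ring,
        Real.rpow_neg_one]
    have hGb2 : (Gf l (p*x))^2 ≤ 64 * ((p*x)⁻¹ / l (p*x)^2) := by
      have h2 := pow_le_pow_left₀ (Gf_nonneg hpos hpx0) hGb 2
      refine h2.trans_eq ?_
      rw [mul_pow, div_pow, hvsq]
      norm_num
    rw [hdiff, habs]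
    calc ∫ v in (p*x)..(q*x), (Gf l v)^2
        ≤ (q*x - p*x) * (Gf l (p*x))^2 := hconst
      _ ≤ (q*x - p*x) * (64 * ((p*x)⁻¹ / l (p*x)^2)) := by
          apply mul_le_mul_of_nonneg_left hGb2 (by nlinarith)
      _ = K * (l (p*x) ^ 2)⁻¹ := by
          rw [hKdef]
          field_simp
  -- M positive eventually
  have hMpos : ∀ᶠ x in atTop, 0 < M x := by
    filter_upwards [(tendsto_atTop.mp hT) 1, eventually_ge_atTop 0] with x hx hx0
    have hlx2 : 0 < l x ^ 2 := pow_pos (hpos x hx0) 2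
    nlinarith
  -- limit of the bounding function
  have hr1 : Tendsto (fun x => l (p*x) / l x) atTop (nhds 1) := hsv p hp0
  have hr2 : Tendsto (fun x => (l x / l (p*x))^2) atTop (nhds 1) := by
    have h3 : Tendsto (fun x => (l (p*x)/l x)⁻¹) atTop (nhds 1⁻¹) := hr1.inv₀ one_ne_zero
    rw [inv_one] at h3
    have h4 := h3.pow 2
    rw [one_pow] at h4
    refine h4.congr fun x => by rw [inv_div]
  have hr3 : Tendsto (fun x => (l x ^ 2 * M x)⁻¹) atTop (nhds 0) := hT.inv_tendsto_atTop
  have hD : Tendsto (fun x => K * (l x / l (p*x))^2 * (l x ^ 2 * M x)⁻¹) atTop (nhds 0) := by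
    have h5 := ((tendsto_const_nhds (x := K) (f := atTop)).mul hr2).mul hr3
    simpa using h5
  have hsq : ∀ᶠ x in atTop,
      ‖M (lam*x) / M x - 1‖ ≤ K * (l x / l (p*x))^2 * (l x ^ 2 * M x)⁻¹ := by
    filter_upwards [hkey, hMpos, eventually_ge_atTop 0] with x h1 h2 h3
    have hlx : 0 < l x := hpos x h3
    have hlpx : 0 < l (p*x) := hpos _ (mul_nonneg hp0.le h3)
    have e1 : M (lam*x)/M x - 1 = (M (lam*x) - M x)/M x := by
      field_simp
    rw [Real.norm_eq_abs, e1, abs_div, abs_of_pos h2, div_le_iff₀ h2]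
    calc |M (lam*x) - M x| ≤ K * (l (p*x)^2)⁻¹ := h1
      _ = K * (l x / l (p*x))^2 * (l x ^ 2 * M x)⁻¹ * M x := by
          field_simp
  have h5 : Tendsto (fun x => M (lam*x)/M x - 1) atTop (nhds 0) :=
    squeeze_zero_norm' hsq hD
  have h6 := h5.add (tendsto_const_nhds (x := (1:ℝ)) (f := atTop))
  rw [zero_add] at h6
  refine h6.congr fun x => by ring

end Main

/-- If `l` is a continuous slowly varying function, positive on `[0,∞)`, then
`M(x) = ∫₁ˣ (∫ᵥ^∞ du/(u^{3/2} l(u)))² dv` is slowly varying and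
`l(x)² · M(x) → ∞` as `x → ∞`. -/
theorem slowlyVarying_M
    (l : ℝ → ℝ) (hcont : ContinuousOn l (Set.Ici 0))
    (hpos : ∀ x ∈ Set.Ici (0 : ℝ), 0 < l x)
    (hsv : SlowlyVarying l) :
    SlowlyVarying
        (fun x => ∫ v in (1 : ℝ)..x,
          (∫ u in Set.Ioi v, (u ^ ((3 : ℝ) / 2) * l u)⁻¹) ^ 2) ∧
      Tendsto
        (fun x => (l x) ^ 2 * ∫ v in (1 : ℝ)..x,
          (∫ u in Set.Ioi v, (u ^ ((3 : ℝ) / 2) * l u)⁻¹) ^ 2)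
        atTop atTop := by
  exact ⟨part1 hcont hpos hsv, part2 hcont hpos hsv⟩
end

section
/- Let b, σ be continuous with σ > 0, let 𝔰 be the scale function and m(x) = [σ²(x)𝔰'(x)]^{-1} the speed measure density with κ^{-1} = ∫_ℝ m(x)dx < ∞, and let μ(dx) = κ m(x)dx. Let f : ℝ → ℝ be Borel, locally bounded, and suppose there exist α > 1, real numbers f₊, f₋ with |f₊|+|f₋| > 0, and a continuous slowly varying function ℓ such that [σ(x)𝔰'(x)]^{-2}|𝔰(x)|^{2−1/α}ℓ(|𝔰(x)|)f(x) → f₊ as x → +∞ and → f₋ as x → −∞. Then f is integrable with respect to μ. -/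
open Filter MeasureTheory Set intervalIntegral

/-- Uniform convergence theorem for "additively slowly varying" functions. -/
lemma uct_aux (h : ℝ → ℝ) (hcont : Continuous h)
    (hh : ∀ u : ℝ, Tendsto (fun x => h (x + u) - h x) atTop (nhds 0))
    (ε : ℝ) (hε : 0 < ε) :
    ∃ X : ℝ, ∀ x, X ≤ x → ∀ u ∈ Icc (0:ℝ) 1, |h (x + u) - h x| ≤ 3 * ε := by
  set F : ℕ → Set ℝ := fun n => {u | ∀ x, (n:ℝ) ≤ x → |h (x + u) - h x| ≤ ε} with hF
  have hclosed : ∀ n, IsClosed (F n) := by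
    intro n
    have : F n = ⋂ (x : ℝ) (_ : (n:ℝ) ≤ x), (fun u => |h (x + u) - h x|) ⁻¹' Iic ε := by
      ext u; simp [hF, mem_iInter]
    rw [this]
    exact isClosed_iInter fun x => isClosed_iInter fun _ =>
      IsClosed.preimage (by continuity) isClosed_Iic
  have hcover : (⋃ n, F n) = univ := by
    ext u; simp only [mem_iUnion, mem_univ, iff_true]
    obtain ⟨N, hN⟩ := (Metric.tendsto_atTop.1 (hh u)) ε hε
    refine ⟨⌈N⌉₊, fun x hx => ?_⟩
    have := hN x (le_trans (Nat.le_ceil N) hx)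
    rw [Real.dist_eq, sub_zero] at this
    exact this.le
  obtain ⟨N, a, haN⟩ := nonempty_interior_of_iUnion_of_closed hclosed hcover
  obtain ⟨r, hr, hball⟩ := Metric.isOpen_iff.1 isOpen_interior a haN
  have hsub : Metric.ball a r ⊆ F N := hball.trans interior_subset
  set d : ℝ := min (r/2) 1 with hd
  have hd0 : 0 < d := lt_min (by linarith) one_pos
  have hd1 : d ≤ 1 := min_le_right _ _
  have haF : a ∈ F N := hsub (Metric.mem_ball_self hr)
  have hstep : ∀ x, (N:ℝ) ≤ x → ∀ u, 0 ≤ u → u ≤ d → |h (x + u) - h x| ≤ 2 * ε := by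
    intro x hx u hu0 hud
    have haU : a + u ∈ F N := by
      apply hsub
      rw [Metric.mem_ball, Real.dist_eq]
      have : |a + u - a| = u := by rw [add_sub_cancel_left, abs_of_nonneg hu0]
      rw [this]
      calc u ≤ d := hud
        _ ≤ r/2 := min_le_left _ _
        _ < r := by linarith
    have h1 : |h (x + (a + u)) - h x| ≤ ε := haU x hx
    have h2 : |h ((x + u) + a) - h (x + u)| ≤ ε := haF (x + u) (by linarith)
    have key : h (x + u) - h x = (h (x + (a + u)) - h x) - (h ((x + u) + a) - h (x + u)) := by
      have : x + (a + u) = (x + u) + a := by ring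
      rw [this]; ring
    rw [key]
    calc |(h (x + (a + u)) - h x) - (h ((x + u) + a) - h (x + u))|
        ≤ |h (x + (a + u)) - h x| + |h ((x + u) + a) - h (x + u)| := abs_sub _ _
      _ ≤ 2 * ε := by linarith
  set k : ℕ := ⌈1/d⌉₊ with hk
  have hgrid : ∀ᶠ x in atTop, ∀ j ∈ Finset.range (k+1), |h (x + j*d) - h x| ≤ ε := by
    rw [Filter.eventually_all_finset]
    intro j _
    obtain ⟨M, hM⟩ := (Metric.tendsto_atTop.1 (hh (j*d))) ε hε
    filter_upwards [eventually_ge_atTop M] with x hx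
    have := hM x hx
    rw [Real.dist_eq, sub_zero] at this
    exact this.le
  obtain ⟨N₂, hN₂⟩ := eventually_atTop.1 hgrid
  refine ⟨max (N:ℝ) N₂, fun x hx u hu => ?_⟩
  have hxN : (N:ℝ) ≤ x := le_trans (le_max_left _ _) hx
  have hxN₂ : N₂ ≤ x := le_trans (le_max_right _ _) hx
  obtain ⟨hu0, hu1⟩ := hu
  set j : ℕ := ⌊u/d⌋₊ with hj
  have hjd : (j:ℝ) * d ≤ u := by
    have := Nat.floor_le (by positivity : 0 ≤ u/d)
    calc (j:ℝ) * d ≤ (u/d) * d := by nlinarith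
      _ = u := by field_simp
  have hjd2 : u < ((j:ℝ) + 1) * d := by
    have := Nat.lt_floor_add_one (u/d)
    calc u = (u/d) * d := by field_simp
      _ < ((j:ℝ)+1) * d := by nlinarith
  have hjk : j ∈ Finset.range (k+1) := by
    rw [Finset.mem_range, Nat.lt_succ_iff, hj, hk]
    calc ⌊u/d⌋₊ ≤ ⌊1/d⌋₊ := Nat.floor_le_floor (by gcongr)
      _ ≤ ⌈1/d⌉₊ := Nat.floor_le_ceil _
  set v : ℝ := u - j*d with hv
  have hv0 : 0 ≤ v := by linarith
  have hvd : v ≤ d := by nlinarith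
  have hjd0 : 0 ≤ (j:ℝ) * d := by positivity
  have h1 : |h ((x + j*d) + v) - h (x + j*d)| ≤ 2*ε :=
    hstep (x + j*d) (by linarith) v hv0 hvd
  have h2 : |h (x + j*d) - h x| ≤ ε := hN₂ x hxN₂ j hjk
  have hxu : x + u = (x + j*d) + v := by rw [hv]; ring
  calc |h (x + u) - h x|
      = |(h ((x + j*d) + v) - h (x + j*d)) + (h (x + j*d) - h x)| := by rw [hxu]; ring_nf
    _ ≤ |h ((x + j*d) + v) - h (x + j*d)| + |h (x + j*d) - h x| := abs_add_le _ _
    _ ≤ 3 * ε := by linarith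


/-- Potter-type lower bound for a continuous positive slowly varying function. -/
lemma potter_lower (l : ℝ → ℝ) (hlcont : ContinuousOn l (Set.Ici 0))
    (hlpos : ∀ x ∈ Set.Ici (0 : ℝ), 0 < l x) (hlsv : SlowlyVarying l)
    (ρ : ℝ) (hρ : 0 < ρ) :
    ∃ T c : ℝ, 1 ≤ T ∧ 0 < c ∧ ∀ t, T ≤ t → c * t ^ (-ρ) ≤ l t := by
  have hlpos' : ∀ y : ℝ, 0 < l (Real.exp y) := fun y => hlpos _ (Real.exp_pos y).le
  set h : ℝ → ℝ := fun y => -Real.log (l (Real.exp y)) with hdefh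
  have hcont : Continuous h := by
    rw [continuous_iff_continuousAt]
    intro y
    have c1 : ContinuousAt l (Real.exp y) :=
      hlcont.continuousAt (Ici_mem_nhds (Real.exp_pos y))
    have c2 : ContinuousAt (fun y => l (Real.exp y)) y :=
      c1.comp Real.continuous_exp.continuousAt
    exact (c2.log (hlpos' y).ne').neg
  have hh : ∀ u : ℝ, Tendsto (fun x => h (x + u) - h x) atTop (nhds 0) := by
    intro u
    have h2 : Tendsto (fun x => l (Real.exp u * Real.exp x) / l (Real.exp x)) atTop (nhds 1) :=
      (hlsv _ (Real.exp_pos u)).comp Real.tendsto_exp_atTop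
    have h3 : Tendsto (fun x => -Real.log (l (Real.exp u * Real.exp x) / l (Real.exp x)))
        atTop (nhds 0) := by
      have := ((Real.continuousAt_log one_ne_zero).tendsto.comp h2).neg
      rwa [Real.log_one, neg_zero] at this
    refine h3.congr fun x => ?_
    have e1 : Real.exp (x + u) = Real.exp u * Real.exp x := by
      rw [Real.exp_add]; ring
    simp only [hdefh]
    rw [Real.log_div (hlpos _ (by positivity : (0:ℝ) ≤ Real.exp u * Real.exp x)).ne'
      (hlpos' x).ne', e1]
    ring
  obtain ⟨X, hX⟩ := uct_aux h hcont hh (ρ/3) (by linarith)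
  have hbound : ∀ x, X ≤ x → ∀ u ∈ Icc (0:ℝ) 1, h (x + u) ≤ h x + ρ := by
    intro x hx u hu
    obtain ⟨h1, h2⟩ := abs_le.1 (hX x hx u hu)
    ring_nf at h2 ⊢
    linarith
  have hchain : ∀ n : ℕ, h (X + n) ≤ h X + ρ * n := by
    intro n
    induction n with
    | zero => simp
    | succ n ih =>
      have hXn : X ≤ X + (n:ℝ) := by
        have : (0:ℝ) ≤ (n:ℝ) := Nat.cast_nonneg n
        linarith
      have : h ((X + n) + 1) ≤ h (X + n) + ρ :=
        hbound (X + n) hXn 1 ⟨zero_le_one, le_refl 1⟩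
      have e : X + ((n:ℝ) + 1) = (X + n) + 1 := by ring
      push_cast
      rw [e]
      push_cast at ih
      linarith
  have hlin : ∀ y, X ≤ y → h y ≤ h X + ρ * (y - X) + ρ := by
    intro y hy
    set n : ℕ := ⌊y - X⌋₊ with hn
    have hn1 : (n:ℝ) ≤ y - X := Nat.floor_le (by linarith)
    have hn2 : y - X < n + 1 := Nat.lt_floor_add_one _
    set u : ℝ := y - X - n with hu
    have hyeq : y = (X + n) + u := by rw [hu]; ring
    have h1 : h ((X + n) + u) ≤ h (X + n) + ρ :=
      hbound (X + n) (by linarith [Nat.cast_nonneg (α := ℝ) n]) u ⟨by linarith, by linarith⟩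
    rw [hyeq]
    have := hchain n
    nlinarith
  refine ⟨max (Real.exp X) 1, l (Real.exp X) * Real.exp (ρ * X - ρ), le_max_right _ _,
    mul_pos (hlpos' X) (Real.exp_pos _), fun t ht => ?_⟩
  have ht1 : (1:ℝ) ≤ t := le_trans (le_max_right _ _) ht
  have ht0 : (0:ℝ) < t := by linarith
  have hyX : X ≤ Real.log t := by
    rw [Real.le_log_iff_exp_le ht0]
    exact le_trans (le_max_left _ _) ht
  have hlt : 0 < l t := hlpos t (mem_Ici.2 (by linarith))
  have key := hlin (Real.log t) hyX
  rw [hdefh] at key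
  simp only [Real.exp_log ht0] at key
  -- key : -Real.log (l t) ≤ -Real.log (l (Real.exp X)) + ρ * (Real.log t - X) + ρ
  rw [← Real.log_le_log_iff
    (mul_pos (mul_pos (hlpos' X) (Real.exp_pos _)) (Real.rpow_pos_of_pos ht0 _)) hlt]
  rw [Real.log_mul (mul_pos (hlpos' X) (Real.exp_pos _)).ne'
    (Real.rpow_pos_of_pos ht0 _).ne', Real.log_mul (hlpos' X).ne'
    (Real.exp_ne_zero _), Real.log_exp, Real.log_rpow ht0]
  linarith


set_option maxHeartbeats 1000000 in
/-- If `f` satisfies the stable asymptotic condition with index `α > 1`, then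
`f ∈ L¹(μ)`, where `μ(dx) = κ m(x) dx` is the invariant probability measure. -/
theorem integrable_of_alpha_gt_one
    (b σ : ℝ → ℝ) (hb : Continuous b) (hσ : Continuous σ)
    (hσpos : ∀ x, 0 < σ x)
    (s : ℝ → ℝ)
    (hs : ∀ x, s x = ∫ v in (0 : ℝ)..x,
        Real.exp (-2 * ∫ u in (0 : ℝ)..v, b u / (σ u) ^ 2))
    (hstop : Tendsto s atTop atTop) (hsbot : Tendsto s atBot atBot)
    (m : ℝ → ℝ) (hm : ∀ x, m x = ((σ x) ^ 2 * deriv s x)⁻¹)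
    (hmint : Integrable m)
    (κ : ℝ) (hκ : κ = (∫ x, m x)⁻¹)
    (μ : Measure ℝ)
    (hμ : μ = (volume.withDensity fun x => ENNReal.ofReal (κ * m x)))
    (f : ℝ → ℝ) (hfmeas : Measurable f)
    (hfloc : ∀ r : ℝ, 0 < r → ∃ C : ℝ, ∀ x, |x| ≤ r → |f x| ≤ C)
    (α : ℝ) (hα : 1 < α)
    (fp fm : ℝ) (hne : 0 < |fp| + |fm|)
    (l : ℝ → ℝ) (hlcont : ContinuousOn l (Set.Ici 0))
    (hlpos : ∀ x ∈ Set.Ici (0 : ℝ), 0 < l x) (hlsv : SlowlyVarying l)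
    (hftop : Tendsto
      (fun x => ((σ x * deriv s x) ^ 2)⁻¹ * |s x| ^ (2 - 1 / α) * l |s x| * f x)
      atTop (nhds fp))
    (hfbot : Tendsto
      (fun x => ((σ x * deriv s x) ^ 2)⁻¹ * |s x| ^ (2 - 1 / α) * l |s x| * f x)
      atBot (nhds fm)) :
    Integrable f μ := by
  -- the derivative of the scale function
  have hgcont : Continuous fun v => b v / σ v ^ 2 :=
    hb.div (hσ.pow 2) fun v => (pow_pos (hσpos v) 2).ne'
  have hprim : Continuous fun x => ∫ u in (0:ℝ)..x, b u / σ u ^ 2 :=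
    intervalIntegral.continuous_primitive (fun a b => hgcont.intervalIntegrable a b) 0
  set E : ℝ → ℝ := fun x => Real.exp (-2 * ∫ u in (0:ℝ)..x, b u / σ u ^ 2) with hEdef
  have hEcont : Continuous E := Real.continuous_exp.comp (continuous_const.mul hprim)
  have hEpos : ∀ x, 0 < E x := fun x => Real.exp_pos _
  have hsfun : s = fun x => ∫ v in (0:ℝ)..x, E v := funext fun x => by rw [hs x]
  have hsderiv : ∀ x, HasDerivAt s (E x) x := by
    intro x
    rw [hsfun]
    exact (hEcont.integral_hasStrictDerivAt 0 x).hasDerivAt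
  have hderiv : deriv s = E := funext fun x => (hsderiv x).deriv
  have hscont : Continuous s := by
    rw [hsfun]
    exact intervalIntegral.continuous_primitive (fun a b => hEcont.intervalIntegrable a b) 0
  have hm' : ∀ x, m x = (σ x ^ 2 * E x)⁻¹ := fun x => by rw [hm x, hderiv]
  have hmpos : ∀ x, 0 < m x := fun x => by
    rw [hm' x]; exact inv_pos.2 (mul_pos (pow_pos (hσpos x) 2) (hEpos x))
  have hmcont : Continuous m := by
    have h1 : Continuous fun x => (σ x ^ 2 * E x)⁻¹ :=
      ((hσ.pow 2).mul hEcont).inv₀ fun x => (mul_pos (pow_pos (hσpos x) 2) (hEpos x)).ne'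
    exact (funext hm' : m = _) ▸ h1
  simp only [hderiv] at hftop hfbot
  -- positivity of κ
  have hκpos : 0 < κ := by
    rw [hκ]
    apply inv_pos.2
    rw [integral_pos_iff_support_of_nonneg (fun x => (hmpos x).le) hmint]
    have hsupp : Function.support m = univ := eq_univ_of_forall fun x => (hmpos x).ne'
    rw [hsupp]
    simp
  -- reduce to integrability of f * m w.r.t. Lebesgue
  suffices hfm : Integrable (fun x => f x * m x) volume by
    rw [hμ, integrable_withDensity_iff (by exact (measurable_const.mul hmcont.measurable).ennreal_ofReal : Measurable fun x => ENNReal.ofReal (κ * m x))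
      (Filter.Eventually.of_forall fun x => ENNReal.ofReal_lt_top)]
    have heq : (fun x => f x * (ENNReal.ofReal (κ * m x)).toReal)
        = fun x => κ * (f x * m x) := by
      funext x
      rw [ENNReal.toReal_ofReal (mul_nonneg hκpos.le (hmpos x).le)]
      ring
    rw [heq]
    exact hfm.const_mul κ
  -- exponents and the Potter bound
  set ρ : ℝ := (1 - 1/α)/2 with hρdef
  have hα0 : 0 < α := by linarith
  have hinv : 1/α < 1 := by rw [div_lt_one hα0]; linarith
  have hρ : 0 < ρ := by rw [hρdef]; linarith
  have hexp_eq : 2 - 1/α = (1 + ρ) + ρ := by rw [hρdef]; ring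
  obtain ⟨T, c, hT1, hc, hTc⟩ := potter_lower l hlcont hlpos hlsv ρ hρ
  -- thresholds
  have hevtop : ∀ᶠ x in atTop, max T 1 ≤ s x ∧
      |((σ x * E x) ^ 2)⁻¹ * |s x| ^ (2 - 1 / α) * l |s x| * f x - fp| < 1 :=
    (hstop.eventually (eventually_ge_atTop (max T 1))).and (by
      have := Metric.tendsto_nhds.1 hftop 1 one_pos
      simpa [Real.dist_eq] using this)
  obtain ⟨A, hA⟩ := eventually_atTop.1 hevtop
  have hevbot : ∀ᶠ x in atBot, s x ≤ -(max T 1) ∧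
      |((σ x * E x) ^ 2)⁻¹ * |s x| ^ (2 - 1 / α) * l |s x| * f x - fm| < 1 :=
    (hsbot.eventually (eventually_le_atBot (-(max T 1)))).and (by
      have := Metric.tendsto_nhds.1 hfbot 1 one_pos
      simpa [Real.dist_eq] using this)
  obtain ⟨B₀, hB₀⟩ := eventually_atBot.1 hevbot
  set B : ℝ := min B₀ A with hBdef
  have hB : ∀ x, x ≤ B → s x ≤ -(max T 1) ∧
      |((σ x * E x) ^ 2)⁻¹ * |s x| ^ (2 - 1 / α) * l |s x| * f x - fm| < 1 :=
    fun x hx => hB₀ x (le_trans hx (min_le_left _ _))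
  have hBA : B ≤ A := min_le_right _ _
  -- pointwise bound on the right tail
  have keyP : ∀ x, A ≤ x → |f x * m x| ≤ ((|fp|+1) * c⁻¹) * (E x * s x ^ (-(1+ρ))) := by
    intro x hx
    obtain ⟨hsge, hΦ⟩ := hA x hx
    have hsx1 : (1:ℝ) ≤ s x := le_trans (le_max_right T 1) hsge
    have hsxT : T ≤ s x := le_trans (le_max_left T 1) hsge
    have hsx0 : (0:ℝ) < s x := by linarith
    have habs : |s x| = s x := abs_of_pos hsx0
    have hl0 : 0 < l (s x) := hlpos _ (mem_Ici.2 hsx0.le)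
    have hrpow_pos : ∀ q : ℝ, 0 < s x ^ q := fun q => Real.rpow_pos_of_pos hsx0 q
    have hlc : c ≤ s x ^ ρ * l (s x) := by
      have h1 := hTc (s x) hsxT
      have h2 : s x ^ (-ρ) * s x ^ ρ = 1 := by
        rw [← Real.rpow_add hsx0]; simp
      nlinarith [hrpow_pos ρ, hrpow_pos (-ρ)]
    have hΦabs : |((σ x * E x) ^ 2)⁻¹ * |s x| ^ (2 - 1 / α) * l |s x| * f x| ≤ |fp| + 1 := by
      have := abs_sub_abs_le_abs_sub
        (((σ x * E x) ^ 2)⁻¹ * |s x| ^ (2 - 1 / α) * l |s x| * f x) fp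
      linarith
    have hsplit : s x ^ (2 - 1/α) = s x ^ (1+ρ) * s x ^ ρ := by
      rw [hexp_eq, Real.rpow_add hsx0]
    have heq : f x * m x = (((σ x * E x) ^ 2)⁻¹ * |s x| ^ (2 - 1 / α) * l |s x| * f x)
        * (E x * ((s x ^ (1+ρ))⁻¹ * (s x ^ ρ * l (s x))⁻¹)) := by
      rw [hm' x, habs, hsplit]
      have hσx := (hσpos x).ne'
      have hEx := (hEpos x).ne'
      field_simp
    rw [heq, abs_mul]
    have hQ : 0 ≤ E x * ((s x ^ (1+ρ))⁻¹ * (s x ^ ρ * l (s x))⁻¹) :=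
      mul_nonneg (hEpos x).le (mul_nonneg (inv_nonneg.2 (hrpow_pos _).le)
        (inv_nonneg.2 (mul_nonneg (hrpow_pos ρ).le hl0.le)))
    rw [abs_of_nonneg hQ]
    calc _ ≤ (|fp| + 1) * (E x * ((s x ^ (1+ρ))⁻¹ * (s x ^ ρ * l (s x))⁻¹)) :=
        mul_le_mul_of_nonneg_right hΦabs hQ
      _ ≤ (|fp| + 1) * (E x * ((s x ^ (1+ρ))⁻¹ * c⁻¹)) := by
          gcongr
      _ = ((|fp|+1) * c⁻¹) * (E x * s x ^ (-(1+ρ))) := by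
          rw [Real.rpow_neg hsx0.le]
          ring
  -- pointwise bound on the left tail
  have keyN : ∀ x, x ≤ B → |f x * m x| ≤ ((|fm|+1) * c⁻¹) * (E x * (-s x) ^ (-(1+ρ))) := by
    intro x hx
    obtain ⟨hsle, hΦ⟩ := hB x hx
    have hsx1 : (1:ℝ) ≤ -s x := by
      have := le_max_right T 1; linarith
    have hsxT : T ≤ -s x := by
      have := le_max_left T 1; linarith
    have hsx0 : (0:ℝ) < -s x := by linarith
    have habs : |s x| = -s x := abs_of_neg (by linarith)
    have hl0 : 0 < l (-s x) := hlpos _ (mem_Ici.2 hsx0.le)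
    have hrpow_pos : ∀ q : ℝ, 0 < (-s x) ^ q := fun q => Real.rpow_pos_of_pos hsx0 q
    have hlc : c ≤ (-s x) ^ ρ * l (-s x) := by
      have h1 := hTc (-s x) hsxT
      have h2 : (-s x) ^ (-ρ) * (-s x) ^ ρ = 1 := by
        rw [← Real.rpow_add hsx0]; simp
      nlinarith [hrpow_pos ρ, hrpow_pos (-ρ)]
    have hΦabs : |((σ x * E x) ^ 2)⁻¹ * |s x| ^ (2 - 1 / α) * l |s x| * f x| ≤ |fm| + 1 := by
      have := abs_sub_abs_le_abs_sub
        (((σ x * E x) ^ 2)⁻¹ * |s x| ^ (2 - 1 / α) * l |s x| * f x) fm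
      linarith
    have hsplit : (-s x) ^ (2 - 1/α) = (-s x) ^ (1+ρ) * (-s x) ^ ρ := by
      rw [hexp_eq, Real.rpow_add hsx0]
    have heq : f x * m x = (((σ x * E x) ^ 2)⁻¹ * |s x| ^ (2 - 1 / α) * l |s x| * f x)
        * (E x * (((-s x) ^ (1+ρ))⁻¹ * ((-s x) ^ ρ * l (-s x))⁻¹)) := by
      rw [hm' x, habs, hsplit]
      have hσx := (hσpos x).ne'
      have hEx := (hEpos x).ne'
      field_simp
    rw [heq, abs_mul]
    have hQ : 0 ≤ E x * (((-s x) ^ (1+ρ))⁻¹ * ((-s x) ^ ρ * l (-s x))⁻¹) :=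
      mul_nonneg (hEpos x).le (mul_nonneg (inv_nonneg.2 (hrpow_pos _).le)
        (inv_nonneg.2 (mul_nonneg (hrpow_pos ρ).le hl0.le)))
    rw [abs_of_nonneg hQ]
    calc _ ≤ (|fm| + 1) * (E x * (((-s x) ^ (1+ρ))⁻¹ * ((-s x) ^ ρ * l (-s x))⁻¹)) :=
        mul_le_mul_of_nonneg_right hΦabs hQ
      _ ≤ (|fm| + 1) * (E x * (((-s x) ^ (1+ρ))⁻¹ * c⁻¹)) := by
          gcongr
      _ = ((|fm|+1) * c⁻¹) * (E x * (-s x) ^ (-(1+ρ))) := by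
          rw [Real.rpow_neg hsx0.le]
          ring
  -- integrability of the dominating function on the right tail
  have hsge1 : ∀ x, A ≤ x → (1:ℝ) ≤ s x :=
    fun x hx => le_trans (le_max_right T 1) (hA x hx).1
  have hsposA : ∀ x, A ≤ x → (0:ℝ) < s x := fun x hx => by linarith [hsge1 x hx]
  have hgPcont : ContinuousOn (fun x => E x * s x ^ (-(1+ρ))) (Ici A) :=
    hEcont.continuousOn.mul (hscont.continuousOn.rpow_const
      fun x hx => Or.inl (hsposA x hx).ne')
  have hgPpos : ∀ x, A ≤ x → 0 < E x * s x ^ (-(1+ρ)) := fun x hx =>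
    mul_pos (hEpos x) (Real.rpow_pos_of_pos (hsposA x hx) _)
  have hgPder : ∀ x, A ≤ x →
      HasDerivAt (fun y => -(1/ρ) * s y ^ (-ρ)) (E x * s x ^ (-(1+ρ))) x := by
    intro x hx
    have h1 := (hsderiv x).rpow_const (p := -ρ) (Or.inl (hsposA x hx).ne')
    have h2 := h1.const_mul (-(1/ρ))
    refine h2.congr_deriv ?_
    rw [show -(1+ρ) = -ρ - 1 from by ring]
    field_simp
  have hgPint : IntegrableOn (fun x => E x * s x ^ (-(1+ρ))) (Ioi A) volume := by
    refine integrableOn_Ioi_of_intervalIntegral_norm_bounded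
      ((1/ρ) * s A ^ (-ρ)) A (fun X => ?_) (tendsto_id (α := ℝ)) ?_
    · simp only [id_eq]
      rcases le_or_gt A X with h | h
      · exact ((hgPcont.mono (Icc_subset_Ici_self)).integrableOn_Icc).mono_set
          Ioc_subset_Icc_self
      · rw [Ioc_eq_empty (by exact fun hc => absurd hc (not_lt.2 h.le))]
        exact integrableOn_empty
    · filter_upwards [eventually_ge_atTop A] with X hX
      simp only [id_eq]
      have hIeq : (∫ x in A..X, ‖E x * s x ^ (-(1+ρ))‖)
          = ∫ x in A..X, E x * s x ^ (-(1+ρ)) := by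
        apply intervalIntegral.integral_congr
        intro t ht
        rw [uIcc_of_le hX] at ht
        exact Real.norm_of_nonneg (hgPpos t ht.1).le
      have hFTC : (∫ x in A..X, E x * s x ^ (-(1+ρ)))
          = (-(1/ρ) * s X ^ (-ρ)) - (-(1/ρ) * s A ^ (-ρ)) := by
        refine intervalIntegral.integral_eq_sub_of_hasDerivAt
          (f := fun y => -(1/ρ) * s y ^ (-ρ)) ?_ ?_
        · intro t ht
          rw [uIcc_of_le hX] at ht
          exact hgPder t ht.1
        · apply ContinuousOn.intervalIntegrable
          rw [uIcc_of_le hX]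
          exact hgPcont.mono fun t ht => ht.1
      rw [hIeq, hFTC]
      have h1 : 0 ≤ (1/ρ) * s X ^ (-ρ) :=
        mul_nonneg (by positivity) (Real.rpow_pos_of_pos (hsposA X hX) _).le
      linarith
  -- integrability of the dominating function on the left tail
  have hsge1' : ∀ x, x ≤ B → (1:ℝ) ≤ -s x := fun x hx => by
    have := (hB x hx).1; have := le_max_right T 1; linarith
  have hsposB : ∀ x, x ≤ B → (0:ℝ) < -s x := fun x hx => by linarith [hsge1' x hx]
  have hgNcont : ContinuousOn (fun x => E x * (-s x) ^ (-(1+ρ))) (Iic B) :=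
    hEcont.continuousOn.mul ((hscont.neg.continuousOn).rpow_const
      fun x hx => Or.inl (hsposB x hx).ne')
  have hgNpos : ∀ x, x ≤ B → 0 < E x * (-s x) ^ (-(1+ρ)) := fun x hx =>
    mul_pos (hEpos x) (Real.rpow_pos_of_pos (hsposB x hx) _)
  have hgNder : ∀ x, x ≤ B →
      HasDerivAt (fun y => (1/ρ) * (-s y) ^ (-ρ)) (E x * (-s x) ^ (-(1+ρ))) x := by
    intro x hx
    have h1 := ((hsderiv x).neg).rpow_const (p := -ρ) (Or.inl (hsposB x hx).ne')
    have h2 := h1.const_mul (1/ρ)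
    refine h2.congr_deriv ?_
    rw [show -(1+ρ) = -ρ - 1 from by ring]
    field_simp
    rfl
  have hgNint : IntegrableOn (fun x => E x * (-s x) ^ (-(1+ρ))) (Iic B) volume := by
    refine integrableOn_Iic_of_intervalIntegral_norm_bounded
      ((1/ρ) * (-s B) ^ (-ρ)) B (fun X => ?_) (tendsto_id (α := ℝ)) ?_
    · simp only [id_eq]
      rcases le_or_gt X B with h | h
      · exact ((hgNcont.mono (Icc_subset_Iic_self)).integrableOn_Icc).mono_set
          Ioc_subset_Icc_self
      · rw [Ioc_eq_empty (by exact fun hc => absurd hc (not_lt.2 h.le))]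
        exact integrableOn_empty
    · filter_upwards [eventually_le_atBot B] with X hX
      simp only [id_eq]
      have hIeq : (∫ x in X..B, ‖E x * (-s x) ^ (-(1+ρ))‖)
          = ∫ x in X..B, E x * (-s x) ^ (-(1+ρ)) := by
        apply intervalIntegral.integral_congr
        intro t ht
        rw [uIcc_of_le hX] at ht
        exact Real.norm_of_nonneg (hgNpos t ht.2).le
      have hFTC : (∫ x in X..B, E x * (-s x) ^ (-(1+ρ)))
          = ((1/ρ) * (-s B) ^ (-ρ)) - ((1/ρ) * (-s X) ^ (-ρ)) := by
        refine intervalIntegral.integral_eq_sub_of_hasDerivAt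
          (f := fun y => (1/ρ) * (-s y) ^ (-ρ)) ?_ ?_
        · intro t ht
          rw [uIcc_of_le hX] at ht
          exact hgNder t ht.2
        · apply ContinuousOn.intervalIntegrable
          rw [uIcc_of_le hX]
          exact hgNcont.mono fun t ht => ht.2
      rw [hIeq, hFTC]
      have h1 : 0 ≤ (1/ρ) * (-s X) ^ (-ρ) :=
        mul_nonneg (by positivity) (Real.rpow_pos_of_pos (hsposB X hX) _).le
      linarith
  -- assemble
  have hfmmeas : AEStronglyMeasurable (fun x => f x * m x) volume :=
    (hfmeas.mul hmcont.measurable).aestronglyMeasurable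
  have hPioi : IntegrableOn (fun x => f x * m x) (Ioi A) volume := by
    apply Integrable.mono (hgPint.const_mul ((|fp|+1) * c⁻¹)) hfmmeas.restrict
    rw [ae_restrict_iff' measurableSet_Ioi]
    apply Eventually.of_forall
    intro x hx
    rw [Real.norm_eq_abs, Real.norm_eq_abs]
    exact (keyP x (le_of_lt hx)).trans (le_abs_self _)
  have hNiic : IntegrableOn (fun x => f x * m x) (Iic B) volume := by
    apply Integrable.mono (hgNint.const_mul ((|fm|+1) * c⁻¹)) hfmmeas.restrict
    rw [ae_restrict_iff' measurableSet_Iic]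
    apply Eventually.of_forall
    intro x hx
    rw [Real.norm_eq_abs, Real.norm_eq_abs]
    exact (keyN x hx).trans (le_abs_self _)
  have hmid : IntegrableOn (fun x => f x * m x) (Icc B A) volume := by
    obtain ⟨C, hC⟩ := hfloc (max |B| |A| + 1) (by positivity)
    have hC0 : 0 ≤ C := le_trans (abs_nonneg _) (hC 0 (by rw [abs_zero]; positivity))
    obtain ⟨D, hD⟩ := (isCompact_Icc (a := B) (b := A)).exists_bound_of_continuousOn
      hmcont.continuousOn
    apply Measure.integrableOn_of_bounded (measure_Icc_lt_top).ne hfmmeas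
      (M := C * D)
    rw [ae_restrict_iff' measurableSet_Icc]
    apply Eventually.of_forall
    intro x hx
    have hxb : |x| ≤ max |B| |A| + 1 := by
      obtain ⟨h1, h2⟩ := hx
      rw [abs_le]
      constructor
      · have := neg_abs_le B
        have := le_max_left |B| |A|
        linarith
      · have := le_abs_self A
        have := le_max_right |B| |A|
        linarith
    have h1 := hC x hxb
    have h2 := hD x hx
    rw [Real.norm_eq_abs] at h2 ⊢
    rw [abs_mul]
    exact mul_le_mul h1 h2 (abs_nonneg _) hC0
  have hunion : (univ : Set ℝ) ⊆ Iic B ∪ (Icc B A ∪ Ioi A) := by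
    intro x _
    simp only [mem_union, mem_Iic, mem_Icc, mem_Ioi]
    by_cases h1 : x ≤ B
    · exact Or.inl h1
    by_cases h2 : x ≤ A
    · exact Or.inr (Or.inl ⟨(lt_of_not_ge h1).le, h2⟩)
    · exact Or.inr (Or.inr (lt_of_not_ge h2))
  have := (hNiic.union (hmid.union hPioi)).mono_set hunion
  exact integrableOn_univ.1 this
end

section
/- In the setting of the previous definitions (scale function 𝔰, speed density m, invariant probability μ), let f satisfy the asymptotic condition [σ(x)𝔰'(x)]^{-2}|𝔰(x)|^{2−1/α}ℓ(|𝔰(x)|)f(x) → f₊/f₋ as x → ±∞ with α = 1 and ∫₁^∞ dx/(x·ℓ(x)) = ∞. Then f is NOT integrable with respect to μ, provided |f₊|+|f₋| > 0. -/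
open Filter MeasureTheory Set intervalIntegral

private lemma tail_lemma (l : ℝ → ℝ) (hlcont : ContinuousOn l (Set.Ici 0))
    (hlpos : ∀ x ∈ Set.Ici (0:ℝ), 0 < l x)
    (hldiv : ¬ IntegrableOn (fun v => (v * l v)⁻¹) (Set.Ioi (1:ℝ)))
    (t t' : ℝ → ℝ) (hderiv : ∀ x, HasDerivAt t (t' x) x) (ht' : Continuous t')
    (ht'pos : ∀ x, 0 < t' x) (httop : Tendsto t atTop atTop)
    (c : ℝ) (hc : 0 < c) (A : ℝ) (hA : ∀ x, A ≤ x → 1 ≤ t x) :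
    ¬ IntegrableOn (fun x => c * (t' x / (t x * l (t x)))) (Set.Ioi A) := by
  intro hint
  set g₀ : ℝ → ℝ := fun v => (v * l v)⁻¹ with hg₀
  have hg₀pos : ∀ v : ℝ, 1 ≤ v → 0 < g₀ v := by
    intro v hv
    exact inv_pos.2 (mul_pos (lt_of_lt_of_le one_pos hv) (hlpos v (le_trans zero_le_one hv)))
  have hg₀cont : ContinuousOn g₀ (Set.Ici 1) := by
    apply ContinuousOn.inv₀
    · exact continuous_id.continuousOn.mul (hlcont.mono (Set.Ici_subset_Ici.2 zero_le_one))
    · intro v hv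
      exact ne_of_gt (mul_pos (lt_of_lt_of_le one_pos hv) (hlpos v (Set.mem_Ici.2 (le_trans zero_le_one (Set.mem_Ici.1 hv)))))
  have hg₀int : ∀ a c' : ℝ, 1 ≤ a → IntegrableOn g₀ (Set.Ioc a c') := by
    intro a c' ha
    rcases le_or_gt a c' with hab | hab
    · have hsub : Set.Icc a c' ⊆ Set.Ici 1 := fun x hx => le_trans ha hx.1
      exact ((hg₀cont.mono hsub).integrableOn_Icc).mono_set Set.Ioc_subset_Icc_self
    · rw [Set.Ioc_eq_empty (not_lt.2 hab.le)]
      exact integrableOn_empty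
  have htA : 1 ≤ t A := hA A le_rfl
  have hunb : ∀ C : ℝ, ∃ R, t A ≤ R ∧ C < ∫ v in (t A)..R, g₀ v := by
    intro C
    by_contra hcon
    push_neg at hcon
    have hIoi : IntegrableOn g₀ (Set.Ioi (t A)) := by
      apply MeasureTheory.integrableOn_Ioi_of_intervalIntegral_norm_bounded C (t A)
        (b := fun R : ℝ => R) (l := atTop)
      · intro R; exact hg₀int _ _ htA
      · exact tendsto_id
      · filter_upwards [eventually_ge_atTop (t A)] with R hR
        have heq : (∫ x in (t A)..R, ‖g₀ x‖) = ∫ x in (t A)..R, g₀ x := by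
          apply intervalIntegral.integral_congr
          intro v hv
          rw [Set.uIcc_of_le hR] at hv
          exact Real.norm_of_nonneg (hg₀pos v (le_trans htA hv.1)).le
        rw [heq]; exact hcon R hR
    apply hldiv
    have hun : IntegrableOn g₀ (Set.Ioc 1 (t A) ∪ Set.Ioi (t A)) :=
      (hg₀int 1 (t A) le_rfl).union hIoi
    apply hun.mono_set
    intro v hv
    rcases le_or_gt v (t A) with h | h
    · exact Or.inl ⟨hv, h⟩
    · exact Or.inr h
  set h₀ : ℝ → ℝ := fun x => c * (t' x / (t x * l (t x))) with hh₀
  set I := ∫ x in Set.Ioi A, h₀ x with hI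
  obtain ⟨R, hR1, hR2⟩ := hunb (I / c)
  obtain ⟨T, hTA, hTR⟩ : ∃ T, A ≤ T ∧ R ≤ t T := by
    rcases ((httop.eventually (eventually_ge_atTop R)).and (eventually_ge_atTop A)).exists
      with ⟨T, h1, h2⟩
    exact ⟨T, h2, h1⟩
  have hsubst : (∫ x in A..T, h₀ x) = c * ∫ v in (t A)..(t T), g₀ v := by
    have hcv : (∫ x in A..T, t' x • g₀ (t x)) = ∫ v in (t A)..(t T), g₀ v := by
      have := intervalIntegral.integral_comp_smul_deriv' (f := t) (f' := t') (g := g₀)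
        (a := A) (b := T) (fun x _ => hderiv x) ht'.continuousOn ?_
      · simpa [Function.comp] using this
      · apply hg₀cont.mono
        rintro v ⟨x, hx, rfl⟩
        rw [Set.uIcc_of_le hTA] at hx
        exact hA x hx.1
    calc (∫ x in A..T, h₀ x) = ∫ x in A..T, c * (t' x • g₀ (t x)) := by
          apply intervalIntegral.integral_congr
          intro x _
          simp only [hh₀, hg₀, smul_eq_mul, div_eq_mul_inv]
      _ = c * ∫ x in A..T, t' x • g₀ (t x) := intervalIntegral.integral_const_mul _ _
      _ = c * ∫ v in (t A)..(t T), g₀ v := by rw [hcv]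
  have hmono : (∫ v in (t A)..R, g₀ v) ≤ ∫ v in (t A)..(t T), g₀ v := by
    have h1 : IntervalIntegrable g₀ volume (t A) R :=
      (intervalIntegrable_iff_integrableOn_Ioc_of_le hR1).2 (hg₀int _ _ htA)
    have h2 : IntervalIntegrable g₀ volume R (t T) :=
      (intervalIntegrable_iff_integrableOn_Ioc_of_le hTR).2 (hg₀int _ _ (le_trans htA hR1))
    have hadd : (∫ v in (t A)..R, g₀ v) + (∫ v in R..(t T), g₀ v)
        = ∫ v in (t A)..(t T), g₀ v := intervalIntegral.integral_add_adjacent_intervals h1 h2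
    have hnn : 0 ≤ ∫ v in R..(t T), g₀ v := by
      apply intervalIntegral.integral_nonneg hTR
      intro v hv
      exact (hg₀pos v (le_trans (le_trans htA hR1) hv.1)).le
    linarith
  have hle : (∫ x in A..T, h₀ x) ≤ I := by
    rw [intervalIntegral.integral_of_le hTA]
    apply MeasureTheory.setIntegral_mono_set hint ?_ (HasSubset.Subset.eventuallyLE Set.Ioc_subset_Ioi_self)
    filter_upwards [ae_restrict_mem measurableSet_Ioi] with x hx
    simp only [Pi.zero_apply, hh₀]
    have h1 := hA x (le_of_lt hx)
    have : 0 ≤ t' x / (t x * l (t x)) :=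
      div_nonneg (ht'pos x).le
        (mul_pos (lt_of_lt_of_le one_pos h1) (hlpos _ (le_trans zero_le_one h1))).le
    exact mul_nonneg hc.le this
  have hIlt : I < c * ∫ v in (t A)..R, g₀ v := by
    rw [div_lt_iff₀ hc] at hR2
    linarith [hR2]
  have := mul_le_mul_of_nonneg_left hmono hc.le
  linarith

/-- Auxiliary: a single tail case leads to a contradiction. -/
private lemma case_lemma (l : ℝ → ℝ) (hlcont : ContinuousOn l (Set.Ici 0))
    (hlpos : ∀ x ∈ Set.Ici (0:ℝ), 0 < l x)
    (hldiv : ¬ IntegrableOn (fun v => (v * l v)⁻¹) (Set.Ioi (1:ℝ)))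
    (t t' : ℝ → ℝ) (hderiv : ∀ x, HasDerivAt t (t' x) x) (ht' : Continuous t')
    (ht'pos : ∀ x, 0 < t' x) (httop : Tendsto t atTop atTop)
    (F : ℝ → ℝ) (hFint : Integrable F volume)
    (c : ℝ) (hc : 0 < c)
    (hev : ∀ᶠ x in atTop, 1 ≤ t x ∧ c * (t' x / (t x * l (t x))) ≤ |F x|) : False := by
  obtain ⟨A, hAev⟩ := eventually_atTop.1 hev
  have htc : Continuous t := continuous_iff_continuousAt.2 fun x => (hderiv x).continuousAt
  apply tail_lemma l hlcont hlpos hldiv t t' hderiv ht' ht'pos httop c hc A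
    (fun x hx => (hAev x hx).1)
  have hcont : ContinuousOn (fun x => c * (t' x / (t x * l (t x)))) (Set.Ici A) := by
    apply (continuousOn_const.mul (ht'.continuousOn.div ?_ ?_))
    · apply ContinuousOn.mul htc.continuousOn
      apply hlcont.comp htc.continuousOn
      intro x hx
      exact le_trans zero_le_one (hAev x hx).1
    · intro x hx
      have h1 := (hAev x hx).1
      exact ne_of_gt (mul_pos (lt_of_lt_of_le one_pos h1) (hlpos _ (le_trans zero_le_one h1)))
  apply Integrable.mono (hFint.integrableOn (s := Set.Ioi A))
  · exact (hcont.aestronglyMeasurable measurableSet_Ici).mono_measure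
      (Measure.restrict_mono Set.Ioi_subset_Ici_self le_rfl)
  · rw [ae_restrict_iff' measurableSet_Ioi]
    refine ae_of_all _ fun x hx => ?_
    obtain ⟨h1, h2⟩ := hAev x (le_of_lt hx)
    have hnn : 0 ≤ c * (t' x / (t x * l (t x))) :=
      mul_nonneg hc.le (div_nonneg (ht'pos x).le
        (mul_pos (lt_of_lt_of_le one_pos h1) (hlpos _ (le_trans zero_le_one h1))).le)
    rw [Real.norm_eq_abs, Real.norm_eq_abs, abs_of_nonneg hnn]
    exact h2

/-- If `f` satisfies the stable asymptotic condition with index `α > 1`, then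
`f ∉ L¹(μ)` when `α = 1` and `∫₁^∞ dx/(x l(x)) = ∞`. -/
theorem not_integrable_of_alpha_eq_one
    (b σ : ℝ → ℝ) (hb : Continuous b) (hσ : Continuous σ)
    (hσpos : ∀ x, 0 < σ x)
    (s : ℝ → ℝ)
    (hs : ∀ x, s x = ∫ v in (0 : ℝ)..x,
        Real.exp (-2 * ∫ u in (0 : ℝ)..v, b u / (σ u) ^ 2))
    (hstop : Tendsto s atTop atTop) (hsbot : Tendsto s atBot atBot)
    (m : ℝ → ℝ) (hm : ∀ x, m x = ((σ x) ^ 2 * deriv s x)⁻¹)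
    (hmint : Integrable m)
    (κ : ℝ) (hκ : κ = (∫ x, m x)⁻¹)
    (μ : Measure ℝ)
    (hμ : μ = (volume.withDensity fun x => ENNReal.ofReal (κ * m x)))
    (f : ℝ → ℝ) (hfmeas : Measurable f)
    (hfloc : ∀ r : ℝ, 0 < r → ∃ C : ℝ, ∀ x, |x| ≤ r → |f x| ≤ C)
    (α : ℝ) (hα : α = 1)
    (fp fm : ℝ) (hne : 0 < |fp| + |fm|)
    (l : ℝ → ℝ) (hlcont : ContinuousOn l (Set.Ici 0))
    (hlpos : ∀ x ∈ Set.Ici (0 : ℝ), 0 < l x) (hlsv : SlowlyVarying l)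
    (hldiv : ¬ IntegrableOn (fun v => (v * l v)⁻¹) (Set.Ioi (1 : ℝ)))
    (hftop : Tendsto
      (fun x => ((σ x * deriv s x) ^ 2)⁻¹ * |s x| ^ (2 - 1 / α) * l |s x| * f x)
      atTop (nhds fp))
    (hfbot : Tendsto
      (fun x => ((σ x * deriv s x) ^ 2)⁻¹ * |s x| ^ (2 - 1 / α) * l |s x| * f x)
      atBot (nhds fm)) :
    ¬ Integrable f μ := by
  intro hint
  -- the derivative of the scale function
  set E : ℝ → ℝ := fun x => Real.exp (-2 * ∫ u in (0:ℝ)..x, b u / σ u ^ 2) with hE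
  have hcontinner : Continuous fun x => ∫ u in (0:ℝ)..x, b u / σ u ^ 2 := by
    apply intervalIntegral.continuous_primitive
    intro a c'
    exact (hb.div (hσ.pow 2) fun x => ne_of_gt (pow_pos (hσpos x) 2)).intervalIntegrable _ _
  have hEcont : Continuous E := Real.continuous_exp.comp (continuous_const.mul hcontinner)
  have hEpos : ∀ x, 0 < E x := fun x => Real.exp_pos _
  have hsderiv : ∀ x, HasDerivAt s (E x) x := by
    intro x
    have hfun : s = fun u => ∫ v in (0:ℝ)..u, E v := funext hs
    rw [hfun]
    exact intervalIntegral.integral_hasDerivAt_right (hEcont.intervalIntegrable _ _)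
      (hEcont.stronglyMeasurableAtFilter _ _) hEcont.continuousAt
  have hscont : Continuous s := continuous_iff_continuousAt.2 fun x => (hsderiv x).continuousAt
  have hmE : ∀ x, m x = (σ x ^ 2 * E x)⁻¹ := fun x => by rw [hm, (hsderiv x).deriv]
  have hmpos : ∀ x, 0 < m x := by
    intro x
    rw [hmE]
    exact inv_pos.2 (mul_pos (pow_pos (hσpos x) 2) (hEpos x))
  have hmcont : Continuous m := by
    have h : m = fun x => (σ x ^ 2 * E x)⁻¹ := funext hmE
    rw [h]
    exact ((hσ.pow 2).mul hEcont).inv₀ fun x =>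
      ne_of_gt (mul_pos (pow_pos (hσpos x) 2) (hEpos x))
  have hκpos : 0 < κ := by
    rw [hκ, inv_pos]
    rw [integral_pos_iff_support_of_nonneg (fun x => (hmpos x).le) hmint]
    have h : Function.support m = Set.univ := Set.eq_univ_of_forall fun x => (hmpos x).ne'
    rw [h]
    simp
  -- integrability with density
  have hdens : Measurable fun x => ENNReal.ofReal (κ * m x) :=
    ENNReal.measurable_ofReal.comp (measurable_const.mul hmcont.measurable)
  rw [hμ, integrable_withDensity_iff hdens (ae_of_all _ fun x => ENNReal.ofReal_lt_top)] at hint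
  have hFeq : (fun x => f x * (ENNReal.ofReal (κ * m x)).toReal) = fun x => f x * (κ * m x) := by
    funext x
    rw [ENNReal.toReal_ofReal (mul_nonneg hκpos.le (hmpos x).le)]
  rw [hFeq] at hint
  -- simplify the asymptotic condition
  subst hα
  have hexp : (2 - 1 / (1:ℝ)) = 1 := by norm_num
  rw [hexp] at hftop hfbot
  simp only [Real.rpow_one] at hftop hfbot
  have hdsE : deriv s = E := funext fun x => (hsderiv x).deriv
  rw [hdsE] at hftop hfbot
  -- the pointwise identity
  have habs : ∀ x, 1 ≤ |s x| →
      |f x * (κ * m x)| =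
        κ * |((σ x * E x) ^ 2)⁻¹ * |s x| * l |s x| * f x| * (E x / (|s x| * l |s x|)) := by
    intro x hx
    have hlp : 0 < l |s x| := hlpos _ (Set.mem_Ici.2 (abs_nonneg _))
    have hsabs : (0:ℝ) < |s x| := lt_of_lt_of_le one_pos hx
    have hσx : σ x ≠ 0 := (hσpos x).ne'
    have hEx : E x ≠ 0 := (hEpos x).ne'
    have key : f x * (κ * m x) =
        κ * (((σ x * E x) ^ 2)⁻¹ * |s x| * l |s x| * f x) * (E x / (|s x| * l |s x|)) := by
      rw [hmE]
      field_simp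
    rw [key, abs_mul, abs_mul, abs_of_pos hκpos,
      abs_of_pos (div_pos (hEpos x) (mul_pos hsabs hlp))]
  have hcase : fp ≠ 0 ∨ fm ≠ 0 := by
    by_contra h
    push_neg at h
    rw [h.1, h.2] at hne
    simp at hne
  rcases hcase with hfp | hfm
  · -- atTop case
    have hcpos : 0 < κ * (|fp| / 2) := mul_pos hκpos (half_pos (abs_pos.2 hfp))
    apply case_lemma l hlcont hlpos hldiv s E hsderiv hEcont hEpos hstop
      (fun x => f x * (κ * m x)) hint (κ * (|fp| / 2)) hcpos
    have hev1 : ∀ᶠ x in atTop,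
        |fp| / 2 < |((σ x * E x) ^ 2)⁻¹ * |s x| * l |s x| * f x| :=
      hftop.abs.eventually (eventually_gt_nhds (half_lt_self (abs_pos.2 hfp)))
    have hev2 : ∀ᶠ x in atTop, 1 ≤ s x := hstop.eventually (eventually_ge_atTop 1)
    filter_upwards [hev1, hev2] with x hg2 hs1
    refine ⟨hs1, ?_⟩
    have hspos : 0 < s x := lt_of_lt_of_le one_pos hs1
    have hab := habs x (by rw [abs_of_pos hspos]; exact hs1)
    rw [abs_of_pos hspos] at hab hg2
    rw [hab]
    have hlp : 0 < l (s x) := hlpos _ (le_trans zero_le_one hs1)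
    have hpnn : 0 ≤ E x / (s x * l (s x)) := (div_pos (hEpos x) (mul_pos hspos hlp)).le
    have h1 : κ * (|fp| / 2) ≤ κ * |((σ x * E x) ^ 2)⁻¹ * s x * l (s x) * f x| :=
      mul_le_mul_of_nonneg_left hg2.le hκpos.le
    calc κ * (|fp| / 2) * (E x / (s x * l (s x)))
        ≤ κ * |((σ x * E x) ^ 2)⁻¹ * s x * l (s x) * f x| * (E x / (s x * l (s x))) :=
          mul_le_mul_of_nonneg_right h1 hpnn
      _ ≤ _ := le_of_eq rfl
  · -- atBot case, via reflection
    set t : ℝ → ℝ := fun y => -s (-y) with ht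
    set t' : ℝ → ℝ := fun y => E (-y) with ht'
    have htderiv : ∀ y, HasDerivAt t (t' y) y := by
      intro y
      have h1 := ((hsderiv (-y)).comp y (hasDerivAt_neg y)).neg
      simp only [mul_neg, mul_one, neg_neg] at h1
      exact h1
    have ht'cont : Continuous t' := hEcont.comp continuous_neg
    have ht'pos : ∀ y, 0 < t' y := fun y => hEpos _
    have httop : Tendsto t atTop atTop := by
      have h1 : Tendsto (fun y : ℝ => s (-y)) atTop atBot :=
        hsbot.comp tendsto_neg_atTop_atBot
      exact tendsto_neg_atBot_atTop.comp h1
    have hFint : Integrable (fun y => f (-y) * (κ * m (-y))) volume := hint.comp_neg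
    have hcpos : 0 < κ * (|fm| / 2) := mul_pos hκpos (half_pos (abs_pos.2 hfm))
    apply case_lemma l hlcont hlpos hldiv t t' htderiv ht'cont ht'pos httop
      (fun y => f (-y) * (κ * m (-y))) hFint (κ * (|fm| / 2)) hcpos
    have hev1 : ∀ᶠ x in atBot,
        |fm| / 2 < |((σ x * E x) ^ 2)⁻¹ * |s x| * l |s x| * f x| :=
      hfbot.abs.eventually (eventually_gt_nhds (half_lt_self (abs_pos.2 hfm)))
    have hev2 : ∀ᶠ x in atBot, s x ≤ -1 := hsbot.eventually (eventually_le_atBot (-1))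
    have hev1' : ∀ᶠ y in atTop,
        |fm| / 2 < |((σ (-y) * E (-y)) ^ 2)⁻¹ * |s (-y)| * l |s (-y)| * f (-y)| :=
      tendsto_neg_atTop_atBot.eventually hev1
    have hev2' : ∀ᶠ y in atTop, s (-y) ≤ -1 := tendsto_neg_atTop_atBot.eventually hev2
    filter_upwards [hev1', hev2'] with y hg2 hs1
    have hsneg : s (-y) < 0 := lt_of_le_of_lt hs1 (by norm_num)
    have ht1 : 1 ≤ t y := by show (1:ℝ) ≤ -s (-y); linarith
    refine ⟨ht1, ?_⟩
    have hab := habs (-y) (by rw [abs_of_neg hsneg]; linarith)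
    rw [abs_of_neg hsneg] at hab hg2
    rw [hab]
    have hlp : 0 < l (-s (-y)) := hlpos _ (Set.mem_Ici.2 (by linarith))
    have hpnn : 0 ≤ E (-y) / (-s (-y) * l (-s (-y))) :=
      (div_pos (hEpos _) (mul_pos (by linarith) hlp)).le
    have h1 : κ * (|fm| / 2) ≤ κ * |((σ (-y) * E (-y)) ^ 2)⁻¹ * -s (-y) * l (-s (-y)) * f (-y)| :=
      mul_le_mul_of_nonneg_left hg2.le hκpos.le
    calc κ * (|fm| / 2) * (t' y / (t y * l (t y)))
        = κ * (|fm| / 2) * (E (-y) / (-s (-y) * l (-s (-y)))) := rfl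
      _ ≤ κ * |((σ (-y) * E (-y)) ^ 2)⁻¹ * -s (-y) * l (-s (-y)) * f (-y)| *
            (E (-y) / (-s (-y) * l (-s (-y)))) := mul_le_mul_of_nonneg_right h1 hpnn
end

section
/- Let α ∈ (0,1), (W_t) a Brownian motion, τ_t the inverse of its local time at 0, and for a, b ∈ ℝ set S_t = ∫₀^{τ_t} sgn_{a,b}(W_s)|W_s|^{1/α−2} ds where sgn_{a,b}(x) = a·1_{x>0} + b·1_{x<0}. Then (S_t) is strictly α-stable: for all c > 0, (S_t)_{t≥0} has the same law as (c^{−1/α} S_{ct})_{t≥0}. -/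
open Filter MeasureTheory Set ProbabilityTheory

/-- A (standard) Brownian motion: starts at 0, a.s. continuous paths, Gaussian
increments and independent increments. -/
def IsBrownianMotion {Ω : Type*} [MeasurableSpace Ω] (μ : Measure Ω)
    (W : ℝ → Ω → ℝ) : Prop :=
  (∀ t, Measurable (W t)) ∧
  (∀ ω, W 0 ω = 0) ∧
  (∀ᵐ ω ∂μ, Continuous fun t => W t ω) ∧
  (∀ s t : ℝ, 0 ≤ s → s ≤ t →
    μ.map (fun ω => W t ω - W s ω) = gaussianReal 0 (Real.toNNReal (t - s))) ∧
  (∀ n : ℕ, ∀ t : Fin (n + 1) → ℝ, Monotone t → 0 ≤ t 0 →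
    iIndepFun
      (fun i : Fin n => fun ω => W (t i.succ) ω - W (t i.castSucc) ω) μ)

/-- `L x t ω` is the (jointly continuous) local time family of the process `W`,
characterized by continuity, monotonicity in time and the occupation times formula. -/
def IsLocalTimeFamily {Ω : Type*} [MeasurableSpace Ω] (μ : Measure Ω)
    (W : ℝ → Ω → ℝ) (L : ℝ → ℝ → Ω → ℝ) : Prop :=
  (∀ x t, Measurable (L x t)) ∧
  (∀ᵐ ω ∂μ,
    Continuous (fun p : ℝ × ℝ => L p.1 p.2 ω) ∧
    (∀ x, Monotone fun t => L x t ω) ∧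
    (∀ x, L x 0 ω = 0) ∧
    (∀ t : ℝ, 0 ≤ t → ∀ φ : ℝ → ℝ, Measurable φ → (∀ y, 0 ≤ φ y) →
      ∫ s in (0:ℝ)..t, φ (W s ω) = ∫ x, φ x * L x t ω))

/-- The right-continuous generalized inverse of the local time at `0`. -/
noncomputable def invLocalTime {Ω : Type*} (L : ℝ → ℝ → Ω → ℝ)
    (t : ℝ) (ω : Ω) : ℝ :=
  sInf {u : ℝ | 0 ≤ u ∧ t < L 0 u ω}


/-- `sgn_{a,b}(x) = a·1_{x>0} + b·1_{x<0}`. -/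
noncomputable def sgnab (a b x : ℝ) : ℝ :=
  if 0 < x then a else if x < 0 then b else 0

/-! ### Auxiliary machinery for the proof -/

noncomputable section BMAux

open scoped ENNReal Pointwise

namespace BMAux

/-- Nonnegative rationals, as a countable index type. -/
abbrev QNN : Type := {q : ℚ // 0 ≤ q}

/-- The real value of a nonnegative rational. -/
def rq (q : QNN) : ℝ := (q.1 : ℝ)

lemma rq_nonneg (q : QNN) : 0 ≤ rq q := by
  have := q.2; unfold rq; exact_mod_cast this

lemma rq_mono {q q' : QNN} (h : q ≤ q') : rq q ≤ rq q' := by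
  have : q.1 ≤ q'.1 := h
  unfold rq; exact_mod_cast this

/-- Evaluation map on a countable product is jointly measurable. -/
lemma measurable_eval : Measurable fun p : (QNN → ℝ) × QNN => p.1 p.2 := by
  intro B hB
  have : (fun p : (QNN → ℝ) × QNN => p.1 p.2) ⁻¹' B
      = ⋃ q : QNN, ((fun v : QNN → ℝ => v q) ⁻¹' B) ×ˢ ({q} : Set QNN) := by
    ext ⟨v, q⟩
    constructor
    · intro hm
      exact Set.mem_iUnion.2 ⟨q, ⟨hm, rfl⟩⟩
    · intro hm
      obtain ⟨q', hq'⟩ := Set.mem_iUnion.1 hm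
      obtain ⟨h1, (h2 : q = q')⟩ := hq'
      subst h2
      exact h1
  rw [this]
  exact MeasurableSet.iUnion fun q =>
    ((measurable_pi_apply q) hB).prod (measurableSet_singleton q)

/-- Rational points approximating a real time from above. -/
def qseq (n : ℕ) (s : ℝ) : QNN :=
  ⟨(⌈s * (n + 1)⌉₊ : ℚ) / (n + 1), by positivity⟩

lemma measurable_qseq (n : ℕ) : Measurable (qseq n) := by
  apply measurable_to_countable
  intro y
  have hinj : ∀ s : ℝ, qseq n s = qseq n y ↔ ⌈s * (n + 1)⌉₊ = ⌈y * (n + 1)⌉₊ := by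
    intro s
    constructor
    · intro h
      have := congrArg (fun q : QNN => (q.1 * (n + 1) : ℚ)) h
      simp only [qseq] at this
      field_simp at this
      have h' : ⌈s * ((n:ℝ) + 1)⌉₊ = ⌈((n:ℝ) + 1) * y⌉₊ := by exact_mod_cast this
      rw [h', mul_comm]
    · intro h; simp only [qseq, h]
  have : qseq n ⁻¹' {qseq n y} = (fun s : ℝ => s * (n + 1)) ⁻¹' {x | ⌈x⌉₊ = ⌈y * (n + 1)⌉₊} := by
    ext s
    simp only [Set.mem_preimage, Set.mem_singleton_iff, Set.mem_setOf_eq, hinj]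
  rw [this]
  apply (measurable_id.mul_const _)
  rcases Nat.eq_zero_or_pos ⌈y * (n + 1)⌉₊ with h0 | hpos
  · have : {x : ℝ | ⌈x⌉₊ = ⌈y * (n + 1)⌉₊} = Set.Iic 0 := by
      ext x; simp [h0, Nat.ceil_eq_zero, Set.mem_Iic]
    rw [this]; exact measurableSet_Iic
  · have : {x : ℝ | ⌈x⌉₊ = ⌈y * (n + 1)⌉₊}
        = Set.Ioc ((⌈y * (n + 1)⌉₊ : ℝ) - 1) (⌈y * (n + 1)⌉₊ : ℝ) := by
      ext x
      simp only [Set.mem_setOf_eq, Set.mem_Ioc]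
      rw [Nat.ceil_eq_iff hpos.ne', Nat.cast_sub hpos]
      push_cast
      simp
    rw [this]; exact measurableSet_Ioc

lemma le_rq_qseq {s : ℝ} (n : ℕ) : s ≤ rq (qseq n s) := by
  have h1 : s * (n + 1) ≤ (⌈s * (n + 1)⌉₊ : ℝ) := Nat.le_ceil _
  have hn : (0 : ℝ) < n + 1 := by positivity
  have hv : rq (qseq n s) = (⌈s * (n + 1)⌉₊ : ℝ) / (n + 1) := by
    rw [rq, qseq]; push_cast; ring
  rw [hv, le_div_iff₀ hn]
  exact h1

lemma rq_qseq_lt {s : ℝ} (hs : 0 ≤ s) (n : ℕ) : rq (qseq n s) < s + 1 / (n + 1) := by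
  have hn : (0 : ℝ) < n + 1 := by positivity
  have h2 : (⌈s * (n + 1)⌉₊ : ℝ) < s * (n + 1) + 1 :=
    Nat.ceil_lt_add_one (by positivity)
  have hv : rq (qseq n s) = (⌈s * (n + 1)⌉₊ : ℝ) / (n + 1) := by
    rw [rq, qseq]; push_cast; ring
  rw [hv, div_lt_iff₀ hn]
  calc (⌈s * (n + 1)⌉₊ : ℝ) < s * (n + 1) + 1 := h2
  _ = (s + 1 / (n + 1)) * (n + 1) := by field_simp

lemma tendsto_rq_qseq {s : ℝ} (hs : 0 ≤ s) :
    Tendsto (fun n => rq (qseq n s)) atTop (nhds s) := by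
  have hlow : ∀ n : ℕ, s ≤ rq (qseq n s) := fun n => le_rq_qseq n
  have hup : ∀ n : ℕ, rq (qseq n s) ≤ s + 1 / (n + 1) := fun n => (rq_qseq_lt hs n).le
  have h1 : Tendsto (fun n : ℕ => s + 1 / (n + 1 : ℝ)) atTop (nhds (s + 0)) :=
    tendsto_const_nhds.add tendsto_one_div_add_atTop_nhds_zero_nat
  rw [add_zero] at h1
  exact tendsto_of_tendsto_of_tendsto_of_le_of_le tendsto_const_nhds h1 hlow hup

/-- Reconstruction of a continuous path from its values at nonnegative rationals. -/
def hatw (v : QNN → ℝ) (s : ℝ) : ℝ := liminf (fun n => v (qseq n s)) atTop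

lemma measurable_hatw : Measurable fun p : (QNN → ℝ) × ℝ => hatw p.1 p.2 := by
  apply Measurable.liminf
  intro n
  exact measurable_eval.comp (measurable_fst.prodMk ((measurable_qseq n).comp measurable_snd))

lemma hatw_eq {w : ℝ → ℝ} (hw : Continuous w) {s : ℝ} (hs : 0 ≤ s) :
    hatw (fun q => w (rq q)) s = w s := by
  have : Tendsto (fun n => w (rq (qseq n s))) atTop (nhds (w s)) :=
    (hw.tendsto s).comp (tendsto_rq_qseq hs)
  exact this.liminf_eq

/-- A generic indicator-integral functional of the rational samples, with a
measurable (sample-dependent) endpoint. -/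
lemma measurable_indicator_integral {g : ℝ → ℝ} (hg : Measurable g)
    {τ : (QNN → ℝ) → ℝ} (hτ : Measurable τ) :
    Measurable fun v : QNN → ℝ =>
      ∫ s : ℝ, (Set.Ioc (0:ℝ) (τ v)).indicator (fun s' => g (hatw v s')) s := by
  have hset : MeasurableSet {p : (QNN → ℝ) × ℝ | p.2 ∈ Set.Ioc (0:ℝ) (τ p.1)} := by
    have : {p : (QNN → ℝ) × ℝ | p.2 ∈ Set.Ioc (0:ℝ) (τ p.1)}
        = {p : (QNN → ℝ) × ℝ | (0:ℝ) < p.2} ∩ {p : (QNN → ℝ) × ℝ | p.2 ≤ τ p.1} := by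
      ext p; simp [Set.mem_Ioc, Set.mem_setOf_eq]
    rw [this]
    exact (measurable_snd measurableSet_Ioi).inter
      (measurableSet_le measurable_snd (hτ.comp measurable_fst))
  have hsm : StronglyMeasurable fun p : (QNN → ℝ) × ℝ =>
      (Set.Ioc (0:ℝ) (τ p.1)).indicator (fun s' => g (hatw p.1 s')) p.2 := by
    apply Measurable.stronglyMeasurable
    simp only [Set.indicator_apply]
    exact Measurable.ite hset (hg.comp measurable_hatw) measurable_const
  exact (hsm.integral_prod_right').measurable

/-- Rectangular kernel around `0` of half-width `1/(n+1)`. -/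
def phin (n : ℕ) : ℝ → ℝ :=
  (Set.Ioo (-(1/(n+1:ℝ))) (1/(n+1:ℝ))).indicator (fun _ => (1:ℝ))

lemma measurable_phin (n : ℕ) : Measurable (phin n) :=
  (measurable_const.indicator measurableSet_Ioo)

lemma phin_nonneg (n : ℕ) (y : ℝ) : 0 ≤ phin n y := by
  unfold phin
  exact Set.indicator_nonneg (fun _ _ => zero_le_one) y

/-- Approximations to the local time at 0 at time `u`, built from rational samples. -/
def elln (n : ℕ) (u : ℝ) (v : QNN → ℝ) : ℝ :=
  ((n + 1 : ℝ) / 2) * ∫ s : ℝ, (Set.Ioc (0:ℝ) u).indicator (fun s' => phin n (hatw v s')) s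

lemma measurable_elln (n : ℕ) (u : ℝ) : Measurable (elln n u) :=
  (measurable_indicator_integral (measurable_phin n) measurable_const).const_mul _

/-- The local time at 0 as a function of the rational samples of the path. -/
def ell0 (u : ℝ) (v : QNN → ℝ) : ℝ := liminf (fun n => elln n u v) atTop

lemma measurable_ell0 (u : ℝ) : Measurable (ell0 u) :=
  Measurable.liminf fun n => measurable_elln n u

/-- The inverse local time, as a function of the rational samples of the path. -/
def tauQ (t : ℝ) (v : QNN → ℝ) : ℝ :=
  (⨅ q : QNN, if t < ell0 (rq q) v then ENNReal.ofReal (rq q) else ⊤).toReal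

lemma measurable_tauQ (t : ℝ) : Measurable (tauQ t) := by
  apply ENNReal.measurable_toReal.comp
  apply Measurable.iInf
  intro q
  exact Measurable.ite ((measurable_ell0 (rq q)) measurableSet_Ioi) measurable_const
    measurable_const

/-- The additive functional, as a function of the rational samples of the path. -/
def SQ (g : ℝ → ℝ) (t : ℝ) (v : QNN → ℝ) : ℝ :=
  ∫ s : ℝ, (Set.Ioc (0:ℝ) (tauQ t v)).indicator (fun s' => g (hatw v s')) s

lemma measurable_SQ {g : ℝ → ℝ} (hg : Measurable g) (t : ℝ) : Measurable (SQ g t) :=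
  measurable_indicator_integral hg (measurable_tauQ t)

/-- A "good pair": a continuous path together with a local time family for it,
satisfying the occupation times formula. -/
def GoodPair (w : ℝ → ℝ) (ℓ : ℝ → ℝ → ℝ) : Prop :=
  Continuous w ∧
  Continuous (fun p : ℝ × ℝ => ℓ p.1 p.2) ∧
  (∀ x, Monotone (ℓ x)) ∧
  (∀ x, ℓ x 0 = 0) ∧
  (∀ t : ℝ, 0 ≤ t → ∀ φ : ℝ → ℝ, Measurable φ → (∀ y, 0 ≤ φ y) →
    ∫ s in (0:ℝ)..t, φ (w s) = ∫ x, φ x * ℓ x t)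

/-- The pathwise inverse local time of a deterministic local time family. -/
def itau (ℓ : ℝ → ℝ → ℝ) (t : ℝ) : ℝ := sInf {u : ℝ | 0 ≤ u ∧ t < ℓ 0 u}

lemma itau_nonneg (ℓ : ℝ → ℝ → ℝ) (t : ℝ) : 0 ≤ itau ℓ t := by
  rcases Set.eq_empty_or_nonempty {u : ℝ | 0 ≤ u ∧ t < ℓ 0 u} with h | h
  · rw [itau, h, Real.sInf_empty]
  · exact Real.sInf_nonneg fun x hx => hx.1

lemma GoodPair.ell0_eq {w : ℝ → ℝ} {ℓ : ℝ → ℝ → ℝ} (h : GoodPair w ℓ)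
    {u : ℝ} (hu : 0 ≤ u) : ell0 u (fun q => w (rq q)) = ℓ 0 u := by
  classical
  -- Step 1: identify the approximations with averages of the local time.
  have key : ∀ n : ℕ, elln n u (fun q => w (rq q))
      = ((n+1:ℝ)/2) * ∫ x in Set.Ioo (-(1/(n+1:ℝ))) (1/(n+1:ℝ)), ℓ x u := by
    intro n
    have hcong : (fun s : ℝ => (Set.Ioc (0:ℝ) u).indicator
        (fun s' => phin n (hatw (fun q => w (rq q)) s')) s)
        = fun s => (Set.Ioc (0:ℝ) u).indicator (fun s' => phin n (w s')) s := by
      funext s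
      by_cases hs : s ∈ Set.Ioc (0:ℝ) u
      · rw [Set.indicator_of_mem hs, Set.indicator_of_mem hs, hatw_eq h.1 hs.1.le]
      · rw [Set.indicator_of_notMem hs, Set.indicator_of_notMem hs]
    have h1 : (∫ s : ℝ, (Set.Ioc (0:ℝ) u).indicator (fun s' => phin n (w s')) s)
        = ∫ s in (0:ℝ)..u, phin n (w s) := by
      rw [integral_indicator measurableSet_Ioc, intervalIntegral.integral_of_le hu]
    have hocc := h.2.2.2.2 u hu (phin n) (measurable_phin n) (phin_nonneg n)
    have h2 : (fun x => phin n x * ℓ x u)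
        = fun x => (Set.Ioo (-(1/(n+1:ℝ))) (1/(n+1:ℝ))).indicator (fun x => ℓ x u) x := by
      funext x
      by_cases hx : x ∈ Set.Ioo (-(1/(n+1:ℝ))) (1/(n+1:ℝ))
      · rw [phin, Set.indicator_of_mem hx, Set.indicator_of_mem hx, one_mul]
      · rw [phin, Set.indicator_of_notMem hx, Set.indicator_of_notMem hx, zero_mul]
    rw [elln, hcong, h1, hocc, h2, integral_indicator measurableSet_Ioo]
  -- Step 2: the averages converge to `ℓ 0 u`.
  have hconv : Tendsto (fun n => elln n u (fun q => w (rq q))) atTop (nhds (ℓ 0 u)) := by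
    rw [Metric.tendsto_atTop]
    intro ε hε
    have hcont : ContinuousAt (fun x : ℝ => ℓ x u) 0 :=
      (h.2.1.comp (continuous_id.prodMk continuous_const)).continuousAt
    rw [Metric.continuousAt_iff] at hcont
    obtain ⟨δ, hδ, hδ'⟩ := hcont (ε/2) (by linarith)
    obtain ⟨N, hN⟩ := exists_nat_one_div_lt hδ
    refine ⟨N, fun n hn => ?_⟩
    set εn : ℝ := 1/(n+1:ℝ) with hεn
    have hεnpos : 0 < εn := by rw [hεn]; positivity
    have hεnδ : εn < δ := by
      rw [hεn]
      calc (1:ℝ)/(n+1) ≤ 1/(N+1) := by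
            apply one_div_le_one_div_of_le (by positivity)
            exact_mod_cast Nat.succ_le_succ hn
      _ < δ := hN
    -- volume of the window
    have hvol : (volume (Set.Ioo (-εn) εn)).toReal = 2 * εn := by
      rw [Real.volume_Ioo, ENNReal.toReal_ofReal (by linarith)]
      ring
    have hvolfin : volume (Set.Ioo (-εn) εn) < ⊤ := by
      rw [Real.volume_Ioo]; exact ENNReal.ofReal_lt_top
    -- the integrand is close to the constant on the window
    have hbound : ∀ x ∈ Set.Ioo (-εn) εn, ‖ℓ x u - ℓ 0 u‖ ≤ ε/2 := by
      intro x hx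
      have : dist x 0 < δ := by
        rw [Real.dist_eq, sub_zero]
        rw [abs_lt]
        exact ⟨by linarith [hx.1, hεnδ], by linarith [hx.2, hεnδ]⟩
      exact (le_of_lt (by simpa [Real.dist_eq] using hδ' this))
    have hint : IntegrableOn (fun x => ℓ x u) (Set.Ioo (-εn) εn) := by
      apply IntegrableOn.mono_set (s := Set.Ioo (-εn) εn) (t := Set.Icc (-εn) εn)
      · exact (h.2.1.comp (continuous_id.prodMk continuous_const)).integrableOn_Icc
      · exact Set.Ioo_subset_Icc_self
    have hdiff : ‖(∫ x in Set.Ioo (-εn) εn, ℓ x u) - (2*εn) * ℓ 0 u‖ ≤ ε/2 * (2*εn) := by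
      have hconst : (∫ x in Set.Ioo (-εn) εn, ℓ 0 u) = (2*εn) * ℓ 0 u := by
        rw [setIntegral_const, measureReal_def, hvol, smul_eq_mul]
      rw [← hconst, ← integral_sub hint (integrableOn_const hvolfin.ne)]
      have := norm_setIntegral_le_of_norm_le_const (μ := volume)
        (s := Set.Ioo (-εn) εn) (C := ε/2) (f := fun x => ℓ x u - ℓ 0 u)
        hvolfin hbound
      rw [measureReal_def, hvol] at this
      exact this
    rw [key n, Real.dist_eq]
    have hfact : ((n+1:ℝ)/2) * (2*εn) = 1 := by
      rw [hεn]; field_simp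
    have expand : ((n+1:ℝ)/2) * (∫ x in Set.Ioo (-εn) εn, ℓ x u) - ℓ 0 u
        = ((n+1:ℝ)/2) * ((∫ x in Set.Ioo (-εn) εn, ℓ x u) - (2*εn) * ℓ 0 u) := by
      rw [mul_sub, ← mul_assoc, hfact, one_mul]
    rw [expand, abs_mul, abs_of_nonneg (by positivity : (0:ℝ) ≤ (n+1:ℝ)/2)]
    calc ((n+1:ℝ)/2) * |(∫ x in Set.Ioo (-εn) εn, ℓ x u) - (2*εn) * ℓ 0 u|
        ≤ ((n+1:ℝ)/2) * (ε/2 * (2*εn)) := by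
          apply mul_le_mul_of_nonneg_left _ (by positivity)
          exact hdiff
      _ = ε/2 := by rw [mul_comm (ε/2) (2*εn), ← mul_assoc, hfact, one_mul]
      _ < ε := by linarith
  exact hconv.liminf_eq

lemma GoodPair.tauQ_eq {w : ℝ → ℝ} {ℓ : ℝ → ℝ → ℝ} (h : GoodPair w ℓ)
    (t : ℝ) : tauQ t (fun q => w (rq q)) = itau ℓ t := by
  classical
  have hv : ∀ q : QNN, ell0 (rq q) (fun q => w (rq q)) = ℓ 0 (rq q) :=
    fun q => h.ell0_eq (rq_nonneg q)
  set A := {u : ℝ | 0 ≤ u ∧ t < ℓ 0 u} with hA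
  haveI : Nonempty QNN := ⟨⟨0, le_refl 0⟩⟩
  rcases Set.eq_empty_or_nonempty A with hemp | hne
  · have hno : ∀ q : QNN, ¬ (t < ell0 (rq q) (fun q => w (rq q))) := by
      intro q hq
      rw [hv q] at hq
      have : rq q ∈ A := ⟨rq_nonneg q, hq⟩
      rw [hemp] at this
      exact this
    rw [tauQ]
    have : ∀ q : QNN, (if t < ell0 (rq q) (fun q => w (rq q))
        then ENNReal.ofReal (rq q) else ⊤) = ⊤ := fun q => if_neg (hno q)
    simp only [this, iInf_const]
    rw [itau, ← hA, hemp, Real.sInf_empty]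
    simp
  · set τ := sInf A with hτ
    have hbdd : BddBelow A := ⟨0, fun x hx => hx.1⟩
    have hτ0 : 0 ≤ τ := Real.sInf_nonneg fun x hx => hx.1
    have hup : ∀ {x y : ℝ}, x ∈ A → x ≤ y → y ∈ A := by
      intro x y hx hxy
      exact ⟨hx.1.trans hxy, lt_of_lt_of_le hx.2 (h.2.2.1 0 hxy)⟩
    have hlo : ENNReal.ofReal τ
        ≤ ⨅ q : QNN, (if t < ell0 (rq q) (fun q => w (rq q))
            then ENNReal.ofReal (rq q) else ⊤) := by
      apply le_iInf
      intro q
      split_ifs with hq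
      · apply ENNReal.ofReal_le_ofReal
        apply csInf_le hbdd
        rw [hv q] at hq
        exact ⟨rq_nonneg q, hq⟩
      · exact le_top
    have hhi : (⨅ q : QNN, (if t < ell0 (rq q) (fun q => w (rq q))
        then ENNReal.ofReal (rq q) else ⊤)) ≤ ENNReal.ofReal τ := by
      apply ENNReal.le_of_forall_pos_le_add
      intro ε hε _
      obtain ⟨a, haA, halt⟩ := Real.lt_sInf_add_pos hne (by exact_mod_cast hε : (0:ℝ) < ε)
      obtain ⟨q, hq1, hq2⟩ := exists_rat_btwn halt
      have hq0 : (0:ℚ) ≤ q := by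
        have : (0:ℝ) ≤ a := haA.1
        exact_mod_cast this.trans hq1.le
      set qq : QNN := ⟨q, hq0⟩ with hqq
      have hrq : rq qq = (q:ℝ) := rfl
      have hmem : rq qq ∈ A := hup haA (by rw [hrq]; exact hq1.le)
      have hcond : t < ell0 (rq qq) (fun q => w (rq q)) := by
        rw [hv qq]; exact hmem.2
      calc (⨅ q : QNN, (if t < ell0 (rq q) (fun q => w (rq q))
          then ENNReal.ofReal (rq q) else ⊤))
          ≤ (if t < ell0 (rq qq) (fun q => w (rq q))
              then ENNReal.ofReal (rq qq) else ⊤) := iInf_le _ qq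
        _ = ENNReal.ofReal (rq qq) := if_pos hcond
        _ ≤ ENNReal.ofReal (τ + ε) := by
            apply ENNReal.ofReal_le_ofReal
            rw [hrq]
            exact hq2.le
        _ = ENNReal.ofReal τ + ε := by
            rw [ENNReal.ofReal_add hτ0 (by exact_mod_cast hε.le : (0:ℝ) ≤ (ε:ℝ))]
            congr 1
            exact ENNReal.ofReal_coe_nnreal
    have heq : (⨅ q : QNN, (if t < ell0 (rq q) (fun q => w (rq q))
        then ENNReal.ofReal (rq q) else ⊤)) = ENNReal.ofReal τ := le_antisymm hhi hlo
    rw [tauQ, heq, ENNReal.toReal_ofReal hτ0]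
    rfl

lemma GoodPair.SQ_eq {w : ℝ → ℝ} {ℓ : ℝ → ℝ → ℝ} (h : GoodPair w ℓ)
    {g : ℝ → ℝ} (t : ℝ) :
    SQ g t (fun q => w (rq q)) = ∫ s in (0:ℝ)..(itau ℓ t), g (w s) := by
  have hτ : tauQ t (fun q => w (rq q)) = itau ℓ t := h.tauQ_eq t
  have hτ0 : 0 ≤ itau ℓ t := itau_nonneg ℓ t
  rw [SQ, hτ]
  have hcong : (fun s : ℝ => (Set.Ioc (0:ℝ) (itau ℓ t)).indicator
      (fun s' => g (hatw (fun q => w (rq q)) s')) s)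
      = fun s => (Set.Ioc (0:ℝ) (itau ℓ t)).indicator (fun s' => g (w s')) s := by
    funext s
    by_cases hs : s ∈ Set.Ioc (0:ℝ) (itau ℓ t)
    · rw [Set.indicator_of_mem hs, Set.indicator_of_mem hs, hatw_eq h.1 hs.1.le]
    · rw [Set.indicator_of_notMem hs, Set.indicator_of_notMem hs]
  rw [hcong, integral_indicator measurableSet_Ioc, intervalIntegral.integral_of_le hτ0]

/-- Brownian scaling of a good pair. -/
lemma GoodPair.scaled {w : ℝ → ℝ} {ℓ : ℝ → ℝ → ℝ} (h : GoodPair w ℓ)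
    {c : ℝ} (hc : 0 < c) :
    GoodPair (fun s => c⁻¹ * w (c ^ 2 * s)) (fun x u => c⁻¹ * ℓ (c * x) (c ^ 2 * u)) := by
  have hc2 : (c:ℝ)^2 ≠ 0 := by positivity
  refine ⟨?_, ?_, ?_, ?_, ?_⟩
  · exact continuous_const.mul (h.1.comp (continuous_const.mul continuous_id))
  · exact continuous_const.mul (h.2.1.comp
      ((continuous_const.mul continuous_fst).prodMk (continuous_const.mul continuous_snd)))
  · intro x u u' huu'
    have : c^2 * u ≤ c^2 * u' := by nlinarith
    exact mul_le_mul_of_nonneg_left (h.2.2.1 (c*x) this) (by positivity)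
  · intro x
    simp only [mul_zero, h.2.2.2.1 (c*x)]
  · intro t ht φ hφ hφ0
    have e1 : (∫ s in (0:ℝ)..t, φ (c⁻¹ * w (c^2*s)))
        = (c^2)⁻¹ • ∫ r in (0:ℝ)..(c^2*t), φ (c⁻¹ * w r) := by
      have := intervalIntegral.integral_comp_mul_left (a := (0:ℝ)) (b := t)
        (c := c^2) (fun r => φ (c⁻¹ * w r)) hc2
      simpa using this
    have e2 : (∫ r in (0:ℝ)..(c^2*t), φ (c⁻¹ * w r))
        = ∫ x, φ (c⁻¹ * x) * ℓ x (c^2*t) :=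
      h.2.2.2.2 _ (by positivity) _ (hφ.comp (measurable_const_mul _)) (fun y => hφ0 _)
    have e4 : (∫ x, φ x * ℓ (c*x) (c^2*t))
        = c⁻¹ * ∫ x, φ (c⁻¹ * x) * ℓ x (c^2*t) := by
      have h5 := Measure.integral_comp_mul_left (fun x => φ (c⁻¹ * x) * ℓ x (c^2*t)) c
      have h6 : (fun x : ℝ => φ (c⁻¹ * (c * x)) * ℓ (c * x) (c^2*t))
          = fun x : ℝ => φ x * ℓ (c*x) (c^2*t) := by
        funext x
        rw [inv_mul_cancel_left₀ hc.ne']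
      rw [h6] at h5
      rw [h5, abs_inv, abs_of_pos hc, smul_eq_mul]
    have e3 : (∫ x, φ x * (c⁻¹ * ℓ (c*x) (c^2*t)))
        = c⁻¹ * ∫ x, φ x * ℓ (c*x) (c^2*t) := by
      simp_rw [mul_left_comm _ (c⁻¹)]
      exact integral_const_mul c⁻¹ _
    rw [e1, e2, e3, e4, smul_eq_mul]
    ring

lemma itau_scaled {ℓ : ℝ → ℝ → ℝ} {c : ℝ} (hc : 0 < c) (t : ℝ) :
    itau (fun x u => c⁻¹ * ℓ (c * x) (c ^ 2 * u)) t = (c ^ 2)⁻¹ * itau ℓ (c * t) := by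
  have hc2 : (0:ℝ) < c^2 := by positivity
  have hiff : ∀ X : ℝ, (t < c⁻¹ * X) ↔ c*t < X := by
    intro X
    rw [← mul_lt_mul_iff_right₀ hc, mul_inv_cancel_left₀ hc.ne']
  have hset : {u : ℝ | 0 ≤ u ∧ t < c⁻¹ * ℓ (c * 0) (c^2*u)}
      = ((c^2)⁻¹) • {r : ℝ | 0 ≤ r ∧ c*t < ℓ 0 r} := by
    ext u
    simp only [Set.mem_smul_set, Set.mem_setOf_eq, mul_zero]
    constructor
    · intro hu
      refine ⟨c^2*u, ⟨by nlinarith [hu.1], (hiff _).1 hu.2⟩, ?_⟩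
      rw [smul_eq_mul, inv_mul_cancel_left₀ hc2.ne']
    · rintro ⟨r, ⟨hr0, hrt⟩, rfl⟩
      have hr : c^2 * ((c^2)⁻¹ • r) = r := by
        rw [smul_eq_mul, mul_inv_cancel_left₀ hc2.ne']
      constructor
      · rw [smul_eq_mul]; positivity
      · rw [hr, hiff]; exact hrt
  rw [itau, hset, Real.sInf_smul_of_nonneg (by positivity), smul_eq_mul, itau]

/-- Scaling of the additive functional's integral. -/
lemma integral_scaled {w : ℝ → ℝ} {c : ℝ} (hc : 0 < c) (α a b T : ℝ) :
    (∫ s in (0:ℝ)..((c^2)⁻¹ * T),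
        sgnab a b (c⁻¹ * w (c^2*s)) * |c⁻¹ * w (c^2*s)| ^ (1/α - 2))
      = c ^ (-(1/α)) * ∫ r in (0:ℝ)..T, sgnab a b (w r) * |w r| ^ (1/α - 2) := by
  set p : ℝ := 1/α - 2 with hp
  have hg : ∀ x : ℝ, sgnab a b (c⁻¹*x) * |c⁻¹*x| ^ p
      = c ^ (-p) * (sgnab a b x * |x| ^ p) := by
    intro x
    have hcinv : (0:ℝ) < c⁻¹ := by positivity
    have h1 : sgnab a b (c⁻¹*x) = sgnab a b x := by
      unfold sgnab
      rcases lt_trichotomy x 0 with hx | hx | hx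
      · have : c⁻¹ * x < 0 := mul_neg_of_pos_of_neg hcinv hx
        rw [if_neg (by linarith), if_pos this, if_neg (by linarith), if_pos hx]
      · subst hx; simp
      · have : 0 < c⁻¹ * x := mul_pos hcinv hx
        rw [if_pos this, if_pos hx]
    have h2 : |c⁻¹*x| ^ p = c ^ (-p) * |x| ^ p := by
      rw [abs_mul, abs_inv, abs_of_pos hc,
        Real.mul_rpow (inv_nonneg.2 hc.le) (abs_nonneg x),
        Real.inv_rpow hc.le, ← Real.rpow_neg hc.le]
    rw [h1, h2]; ring
  simp_rw [hg]
  rw [intervalIntegral.integral_const_mul]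
  have hcomp := intervalIntegral.integral_comp_mul_left (a := (0:ℝ))
    (b := (c^2)⁻¹ * T) (c := c^2)
    (fun r => sgnab a b (w r) * |w r| ^ p) (by positivity)
  rw [hcomp, mul_zero, mul_inv_cancel_left₀ (by positivity : (c:ℝ)^2 ≠ 0), smul_eq_mul,
    ← mul_assoc]
  congr 1
  have h7 : ((c:ℝ)^2)⁻¹ = c ^ (-(2:ℝ)) := by
    rw [Real.rpow_neg hc.le]
    congr 1
    rw [show ((2:ℝ)) = ((2:ℕ):ℝ) by norm_num, Real.rpow_natCast]
  rw [h7, ← Real.rpow_add hc]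
  congr 1
  rw [hp]; ring

end BMAux

end BMAux

/-! ### Finite dimensional distributions -/

section Prob

variable {Ω : Type*} [MeasurableSpace Ω] {μ : Measure Ω} [IsProbabilityMeasure μ]

/-- The joint law of an independent family of real random variables is the product of
the marginal laws. -/
lemma map_pi_of_iIndep {n : ℕ} (X : Fin n → Ω → ℝ) (hX : ∀ i, Measurable (X i))
    (h : iIndepFun X μ) :
    μ.map (fun ω i => X i ω) = Measure.pi (fun i => μ.map (X i)) := by
  haveI : ∀ i, IsProbabilityMeasure (μ.map (X i)) :=
    fun i => Measure.isProbabilityMeasure_map (hX i).aemeasurable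
  symm
  apply Measure.pi_eq
  intro s hs
  rw [Measure.map_apply (measurable_pi_lambda _ hX) (MeasurableSet.univ_pi hs)]
  have hpre : (fun ω i => X i ω) ⁻¹' (Set.univ.pi s) = ⋂ i ∈ Finset.univ, X i ⁻¹' s i := by
    ext ω
    simp [Set.mem_pi]
  rw [hpre, h.measure_inter_preimage_eq_mul Finset.univ (fun i _ => hs i)]
  exact Finset.prod_congr rfl fun i _ => (Measure.map_apply (hX i) (hs i)).symm

/-- Partial sums of a finite vector. -/
def partialSum (n : ℕ) (x : Fin n → ℝ) (i : Fin n) : ℝ :=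
  ∑ m ∈ Finset.range (i.val + 1), (if hm : m < n then x ⟨m, hm⟩ else 0)

lemma measurable_partialSum (n : ℕ) : Measurable (partialSum n) := by
  apply measurable_pi_lambda
  intro i
  apply Finset.measurable_sum
  intro m _
  by_cases hm : m < n
  · simp only [dif_pos hm]
    exact measurable_pi_apply _
  · simp only [dif_neg hm]
    exact measurable_const

lemma partialSum_eq {n : ℕ} (x : Fin n → ℝ) (f : ℕ → ℝ)
    (hx : ∀ m (hm : m < n), x ⟨m, hm⟩ = f (m + 1) - f m) (hf0 : f 0 = 0) (i : Fin n) :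
    partialSum n x i = f (i.val + 1) := by
  have hcong : ∀ m ∈ Finset.range (i.val + 1),
      (if hm : m < n then x ⟨m, hm⟩ else 0) = f (m + 1) - f m := by
    intro m hm
    have hmn : m < n := lt_of_lt_of_le (Finset.mem_range.1 hm) (Nat.succ_le_of_lt i.isLt)
    rw [dif_pos hmn]
    exact hx m hmn
  rw [partialSum, Finset.sum_congr rfl hcong, Finset.sum_range_sub f (i.val + 1), hf0, sub_zero]

open BMAux in
/-- Finite-dimensional laws of Brownian motion are invariant under Brownian scaling. -/
lemma fdd_eq {W : ℝ → Ω → ℝ} (hW : IsBrownianMotion μ W) {c : ℝ} (hc : 0 < c)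
    (J : Finset QNN) :
    μ.map (fun ω => fun j : J => W (rq j) ω)
      = μ.map (fun ω => fun j : J => c⁻¹ * W (c ^ 2 * rq j) ω) := by
  classical
  obtain ⟨hWm, hW0, -, hWg, hWi⟩ := hW
  set n := J.card with hn
  set e : Fin n ≃o {x // x ∈ J} := J.orderIsoOfFin hn.symm with he
  -- the sorted times, as a function on ℕ
  set TT : ℕ → ℝ := fun m =>
    Nat.casesOn m (0:ℝ) (fun k => if hk : k < n then rq (e ⟨k, hk⟩ : QNN) else 0) with hTT
  have hTT0 : TT 0 = 0 := rfl
  have hTTsucc : ∀ m (hm : m < n), TT (m + 1) = rq (e ⟨m, hm⟩ : QNN) := by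
    intro m hm
    show (if hk : m < n then rq (e ⟨m, hk⟩ : QNN) else 0) = rq (e ⟨m, hm⟩ : QNN)
    rw [dif_pos hm]
  have hTTnn : ∀ m, 0 ≤ TT m := by
    intro m
    rcases m with - | k
    · exact le_refl 0
    · show 0 ≤ if hk : k < n then rq (e ⟨k, hk⟩ : QNN) else 0
      split
      · exact rq_nonneg _
      · exact le_refl 0
  have hTTmono : ∀ m m', m ≤ m' → m' ≤ n → TT m ≤ TT m' := by
    intro m m' hmm hm'n
    rcases m with - | k
    · rw [hTT0]; exact hTTnn m'
    · rcases m' with - | k'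
      · omega
      · have hk' : k' < n := by omega
        have hk : k < n := by omega
        rw [hTTsucc k hk, hTTsucc k' hk']
        apply rq_mono
        have : (⟨k, hk⟩ : Fin n) ≤ ⟨k', hk'⟩ := by
          simp only [Fin.mk_le_mk]
          omega
        exact e.monotone this
  -- Fin-level time vectors
  set T : Fin (n + 1) → ℝ := fun k => TT k.val with hTdef
  have hTmono : Monotone T := fun k k' hkk' =>
    hTTmono _ _ hkk' (Nat.lt_succ_iff.mp k'.isLt)
  have hT0 : T 0 = 0 := hTT0
  set T' : Fin (n + 1) → ℝ := fun k => c ^ 2 * TT k.val with hT'def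
  have hT'mono : Monotone T' := by
    intro k k' hkk'
    exact mul_le_mul_of_nonneg_left (hTmono hkk') (by positivity)
  have hT'0 : T' 0 = 0 := by
    show c ^ 2 * TT 0 = 0
    rw [hTT0, mul_zero]
  -- increments
  set X : Fin n → Ω → ℝ := fun i ω => W (T i.succ) ω - W (T i.castSucc) ω with hX
  set X' : Fin n → Ω → ℝ := fun i ω => W (T' i.succ) ω - W (T' i.castSucc) ω with hX'
  set Y : Fin n → Ω → ℝ := fun i ω => c⁻¹ * X' i ω with hY
  have hXm : ∀ i, Measurable (X i) := fun i => (hWm _).sub (hWm _)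
  have hX'm : ∀ i, Measurable (X' i) := fun i => (hWm _).sub (hWm _)
  have hYm : ∀ i, Measurable (Y i) := fun i => (hX'm i).const_mul _
  have hXind : iIndepFun X μ :=
    hWi n T hTmono (le_of_eq hT0.symm)
  have hX'ind : iIndepFun X' μ :=
    hWi n T' hT'mono (le_of_eq hT'0.symm)
  have hYind : iIndepFun Y μ := by
    have := hX'ind.comp (fun _ => fun x : ℝ => c⁻¹ * x) (fun _ => measurable_const_mul c⁻¹)
    exact this
  -- marginals agree
  have hmarg : ∀ i, μ.map (Y i) = μ.map (X i) := by
    intro i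
    have hle : T i.castSucc ≤ T i.succ := hTmono (Fin.castSucc_lt_succ : i.castSucc < i.succ).le
    have hle' : T' i.castSucc ≤ T' i.succ := hT'mono (Fin.castSucc_lt_succ : i.castSucc < i.succ).le
    have hXg : μ.map (X i) = gaussianReal 0 ((T i.succ - T i.castSucc).toNNReal) :=
      hWg _ _ (hTTnn _) hle
    have hX'g : μ.map (X' i) = gaussianReal 0 ((T' i.succ - T' i.castSucc).toNNReal) := by
      apply hWg _ _ _ hle'
      exact mul_nonneg (by positivity) (hTTnn _)
    have hYmap : μ.map (Y i) = (μ.map (X' i)).map (fun x : ℝ => c⁻¹ * x) := by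
      rw [Measure.map_map (measurable_const_mul c⁻¹) (hX'm i)]
      rfl
    rw [hYmap, hX'g, gaussianReal_map_const_mul, hXg, mul_zero]
    congr 1
    have hd : (0:ℝ) ≤ T i.succ - T i.castSucc := sub_nonneg.2 hle
    have hdiff : T' i.succ - T' i.castSucc = c ^ 2 * (T i.succ - T i.castSucc) := by
      rw [hT'def, hTdef]; ring
    rw [hdiff, Real.toNNReal_mul (by positivity), ← mul_assoc]
    apply NNReal.coe_injective
    push_cast
    rw [Real.coe_toNNReal _ (by positivity : (0:ℝ) ≤ c ^ 2)]
    field_simp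
  -- joint laws of the increment vectors agree
  have hjoint : μ.map (fun ω i => X i ω) = μ.map (fun ω i => Y i ω) := by
    rw [map_pi_of_iIndep X hXm hXind, map_pi_of_iIndep Y hYm hYind]
    congr 1
    funext i
    exact (hmarg i).symm
  -- reconstruct the values from the increments
  set RST : (Fin n → ℝ) → ({x // x ∈ J} → ℝ) :=
    fun x j => partialSum n x (e.symm j) with hRST
  have hRSTm : Measurable RST :=
    measurable_pi_lambda _ fun j => (measurable_pi_apply _).comp (measurable_partialSum n)
  have hidX : (fun ω => fun j : J => W (rq j) ω) = fun ω => RST (fun i => X i ω) := by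
    funext ω j
    have hps := partialSum_eq (fun i => X i ω) (fun m => W (TT m) ω)
      (fun m hm => rfl) (by show W (TT 0) ω = 0; rw [hTT0]; exact hW0 ω) (e.symm j)
    rw [hRST]
    dsimp only
    rw [hps, hTTsucc _ (e.symm j).isLt]
    congr 2
    have : (⟨(e.symm j).val, (e.symm j).isLt⟩ : Fin n) = e.symm j := rfl
    rw [this, OrderIso.apply_symm_apply]
  have hidY : (fun ω => fun j : J => c⁻¹ * W (c ^ 2 * rq j) ω)
      = fun ω => RST (fun i => Y i ω) := by
    funext ω j
    have hps := partialSum_eq (fun i => Y i ω) (fun m => c⁻¹ * W (c ^ 2 * TT m) ω)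
      (fun m hm => by
        show c⁻¹ * (W (c ^ 2 * TT (m + 1)) ω - W (c ^ 2 * TT m) ω)
            = c⁻¹ * W (c ^ 2 * TT (m + 1)) ω - c⁻¹ * W (c ^ 2 * TT m) ω
        rw [mul_sub])
      (by show c⁻¹ * W (c ^ 2 * TT 0) ω = 0
          rw [hTT0, mul_zero, hW0 ω, mul_zero]) (e.symm j)
    rw [hRST]
    dsimp only
    rw [hps, hTTsucc _ (e.symm j).isLt]
    congr 3
    have : (⟨(e.symm j).val, (e.symm j).isLt⟩ : Fin n) = e.symm j := rfl
    rw [this, OrderIso.apply_symm_apply]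
  rw [hidX, hidY,
    show (fun ω => RST (fun i => X i ω)) = RST ∘ (fun ω i => X i ω) from rfl,
    show (fun ω => RST (fun i => Y i ω)) = RST ∘ (fun ω i => Y i ω) from rfl,
    ← Measure.map_map hRSTm (measurable_pi_lambda _ hXm),
    ← Measure.map_map hRSTm (measurable_pi_lambda _ hYm), hjoint]

open BMAux in
/-- The law of the rational samples of Brownian motion is invariant under Brownian scaling. -/
lemma lawV {W : ℝ → Ω → ℝ} (hW : IsBrownianMotion μ W) {c : ℝ} (hc : 0 < c) :
    μ.map (fun ω => fun q : QNN => W (rq q) ω)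
      = μ.map (fun ω => fun q : QNN => c⁻¹ * W (c ^ 2 * rq q) ω) := by
  have hVm : Measurable (fun ω => fun q : QNN => W (rq q) ω) :=
    measurable_pi_lambda _ fun q => hW.1 _
  have hV'm : Measurable (fun ω => fun q : QNN => c⁻¹ * W (c ^ 2 * rq q) ω) :=
    measurable_pi_lambda _ fun q => (hW.1 _).const_mul _
  haveI h1 : IsProbabilityMeasure (μ.map (fun ω => fun q : QNN => W (rq q) ω)) :=
    Measure.isProbabilityMeasure_map hVm.aemeasurable
  haveI h2 : IsProbabilityMeasure
      (μ.map (fun ω => fun q : QNN => c⁻¹ * W (c ^ 2 * rq q) ω)) :=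
    Measure.isProbabilityMeasure_map hV'm.aemeasurable
  apply ext_of_generate_finite (measurableCylinders (fun _ : QNN => ℝ))
    generateFrom_measurableCylinders.symm isPiSystem_measurableCylinders
  · intro s hs
    obtain ⟨J, B, hB, rfl⟩ := (mem_measurableCylinders s).1 hs
    rw [Measure.map_apply hVm (hB.cylinder), Measure.map_apply hV'm (hB.cylinder)]
    have hpre1 : (fun ω => fun q : QNN => W (rq q) ω) ⁻¹' cylinder J B
        = (fun ω => fun j : J => W (rq j) ω) ⁻¹' B := rfl
    have hpre2 : (fun ω => fun q : QNN => c⁻¹ * W (c ^ 2 * rq q) ω) ⁻¹' cylinder J B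
        = (fun ω => fun j : J => c⁻¹ * W (c ^ 2 * rq j) ω) ⁻¹' B := rfl
    rw [hpre1, hpre2,
      ← Measure.map_apply (measurable_pi_lambda _ fun j => hW.1 _) hB,
      ← Measure.map_apply (measurable_pi_lambda _ fun j => (hW.1 _).const_mul _) hB,
      fdd_eq hW hc J]
  · simp only [measure_univ]

end Prob

/-- For `α ∈ (0,1)`, the process `S_t = ∫₀^{τ_t} sgn_{a,b}(W_s)|W_s|^{1/α−2} ds`
is strictly `α`-stable: `(S_t)ₜ` has the same law (as a process) as
`(c^{−1/α} S_{ct})ₜ` for every `c > 0`. -/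
theorem strictly_stable_of_additive_functional
    {Ω : Type*} [MeasurableSpace Ω] (μ : Measure Ω) [IsProbabilityMeasure μ]
    (W : ℝ → Ω → ℝ) (hW : IsBrownianMotion μ W)
    (L : ℝ → ℝ → Ω → ℝ) (hL : IsLocalTimeFamily μ W L)
    (α : ℝ) (hα : α ∈ Set.Ioo (0 : ℝ) 1) (a b : ℝ)
    (S : ℝ → Ω → ℝ)
    (hS : ∀ t ω, S t ω = ∫ s in (0:ℝ)..(invLocalTime L t ω),
        sgnab a b (W s ω) * |W s ω| ^ (1 / α - 2)) :
    ∀ c : ℝ, 0 < c →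
      μ.map (fun ω => fun t : ℝ => S t ω) =
        μ.map (fun ω => fun t : ℝ => c ^ (-(1 / α)) * S (c * t) ω) := by
  intro c hc
  classical
  set g : ℝ → ℝ := fun x => sgnab a b x * |x| ^ (1 / α - 2) with hgdef
  have hgm : Measurable g := by
    apply Measurable.mul
    · unfold sgnab
      exact Measurable.ite (measurableSet_lt measurable_const measurable_id)
        measurable_const
        (Measurable.ite (measurableSet_lt measurable_id measurable_const)
          measurable_const measurable_const)
    · exact (continuous_abs.measurable).pow measurable_const
  set Gm : (BMAux.QNN → ℝ) → (ℝ → ℝ) := fun v t => BMAux.SQ g t v with hGmdef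
  have hGm : Measurable Gm :=
    measurable_pi_lambda _ fun t => BMAux.measurable_SQ hgm t
  set V : Ω → (BMAux.QNN → ℝ) := fun ω => fun q => W (BMAux.rq q) ω with hVdef
  set V' : Ω → (BMAux.QNN → ℝ) := fun ω => fun q => c⁻¹ * W (c ^ 2 * BMAux.rq q) ω
    with hV'def
  have hVm : Measurable V := measurable_pi_lambda _ fun q => hW.1 _
  have hV'm : Measurable V' := measurable_pi_lambda _ fun q => (hW.1 _).const_mul _
  have hgood : ∀ᵐ ω ∂μ, BMAux.GoodPair (fun s => W s ω) (fun x u => L x u ω) := by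
    filter_upwards [hW.2.2.1, hL.2] with ω h1 h2
    exact ⟨h1, h2.1, h2.2.1, h2.2.2.1, h2.2.2.2⟩
  have hF : (fun ω => fun t : ℝ => S t ω) =ᵐ[μ] fun ω => Gm (V ω) := by
    filter_upwards [hgood] with ω hgp
    funext t
    have e1 : BMAux.SQ g t (V ω)
        = ∫ s in (0:ℝ)..(BMAux.itau (fun x u => L x u ω) t),
            sgnab a b (W s ω) * |W s ω| ^ (1 / α - 2) := hgp.SQ_eq t
    show S t ω = BMAux.SQ g t (V ω)
    rw [e1, hS t ω]
    rfl
  have hG : (fun ω => fun t : ℝ => c ^ (-(1 / α)) * S (c * t) ω)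
      =ᵐ[μ] fun ω => Gm (V' ω) := by
    filter_upwards [hgood] with ω hgp
    funext t
    have hsc := hgp.scaled hc
    have e1 : BMAux.SQ g t (V' ω)
        = ∫ s in (0:ℝ)..(BMAux.itau (fun x u => c⁻¹ * L (c * x) (c ^ 2 * u) ω) t),
            sgnab a b (c⁻¹ * W (c ^ 2 * s) ω) * |c⁻¹ * W (c ^ 2 * s) ω| ^ (1 / α - 2) :=
      hsc.SQ_eq t
    have h2 := BMAux.itau_scaled (ℓ := fun x u => L x u ω) hc t
    have h3 := BMAux.integral_scaled (w := fun s => W s ω) hc α a b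
      (BMAux.itau (fun x u => L x u ω) (c * t))
    show c ^ (-(1 / α)) * S (c * t) ω = BMAux.SQ g t (V' ω)
    rw [e1, h2, h3, hS (c * t) ω]
    rfl
  calc μ.map (fun ω => fun t : ℝ => S t ω)
      = μ.map (fun ω => Gm (V ω)) := Measure.map_congr hF
    _ = (μ.map V).map Gm := (Measure.map_map hGm hVm).symm
    _ = (μ.map V').map Gm := by rw [lawV hW hc]
    _ = μ.map (fun ω => Gm (V' ω)) := Measure.map_map hGm hV'm
    _ = μ.map (fun ω => fun t : ℝ => c ^ (-(1 / α)) * S (c * t) ω) :=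
        (Measure.map_congr hG).symm
end

section
/- Define h_{a,b}(α) = (2^{α−2}π/(α sin(απ/2)))·(α^α/Γ(α))²·(sgn(a)|a|^α + sgn(b)|b|^α) for α > 0 and nonzero reals a, b. Then h_{a,b}(1) = (π/2)(a+b) and h_{a,b} is differentiable at 1 with h_{a,b}'(1) = (π/2)(a+b)[1 + log 2 + 2γ + (a·log|a| + b·log|b|)/(a+b)], where γ is the Euler–Mascheroni constant. -/
open Real

lemma sign_mul_abs' (x : ℝ) (hx : x ≠ 0) : Real.sign x * |x| = x := by
  rcases hx.lt_or_gt with h | h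
  · rw [Real.sign_of_neg h, abs_of_neg h]; ring
  · rw [Real.sign_of_pos h, abs_of_pos h]; ring

/-- `h_{a,b}(α) = (2^{α−2}π/(α sin(απ/2)))(α^α/Γ(α))²(sgn(a)|a|^α + sgn(b)|b|^α)`
satisfies `h_{a,b}(1) = (π/2)(a+b)` and is differentiable at `1` with derivative
`(π/2)(a+b)[1 + log 2 + 2γ + (a log|a| + b log|b|)/(a+b)]`. -/
theorem h_ab_value_and_deriv_at_one
    (a b : ℝ) (ha : a ≠ 0) (hb : b ≠ 0)
    (h : ℝ → ℝ)
    (hdef : ∀ α : ℝ, 0 < α →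
      h α = (2 ^ (α - 2) * π / (α * Real.sin (α * π / 2))) *
        (α ^ α / Real.Gamma α) ^ 2 *
        (Real.sign a * |a| ^ α + Real.sign b * |b| ^ α)) :
    h 1 = π / 2 * (a + b) ∧
    HasDerivAt h
      (π / 2 * (a + b) *
        (1 + Real.log 2 + 2 * Real.eulerMascheroniConstant +
          (a * Real.log |a| + b * Real.log |b|) / (a + b))) 1 := by
  have hsa : Real.sign a * |a| = a := sign_mul_abs' a ha
  have hsb : Real.sign b * |b| = b := sign_mul_abs' b hb
  have h2pow : (2:ℝ) ^ ((1:ℝ) - 2) = 1 / 2 := by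
    rw [show ((1:ℝ) - 2) = (-1:ℝ) by norm_num, Real.rpow_neg_one]
    norm_num
  have hval : h 1 = π / 2 * (a + b) := by
    rw [hdef 1 one_pos]
    simp only [Real.Gamma_one, Real.rpow_one, one_mul, show (1:ℝ) * π / 2 = π / 2 by ring,
      Real.sin_pi_div_two, div_one, Real.one_rpow, one_pow, mul_one, hsa, hsb, h2pow]
    ring
  refine ⟨hval, ?_⟩
  have hA : HasDerivAt (fun α : ℝ => (2:ℝ) ^ (α - 2) * π)
      ((2:ℝ) ^ ((1:ℝ) - 2) * Real.log 2 * π) 1 := by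
    have := ((Real.hasStrictDerivAt_const_rpow (by norm_num : (0:ℝ) < 2)
      ((1:ℝ) - 2)).hasDerivAt.comp 1 ((hasDerivAt_id (1:ℝ)).sub_const 2)).mul_const π
    simpa using this
  have hB : HasDerivAt (fun α : ℝ => α * Real.sin (α * π / 2)) 1 1 := by
    have hs : HasDerivAt (fun α : ℝ => Real.sin (α * π / 2))
        (Real.cos (1 * π / 2) * (π / 2)) 1 := by
      have := (Real.hasDerivAt_sin ((1:ℝ) * π / 2)).comp 1
        (((hasDerivAt_id (1:ℝ)).mul_const π).div_const 2)
      simpa [Function.comp_def] using this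
    have := (hasDerivAt_id (1:ℝ)).mul hs
    simpa [Real.cos_pi_div_two, Real.sin_pi_div_two, Pi.mul_def] using this
  have hC : HasDerivAt (fun α : ℝ => α ^ α) 1 1 := by
    have := (hasDerivAt_id (1:ℝ)).rpow (hasDerivAt_id (1:ℝ)) (by norm_num)
    simpa using this
  have hG : HasDerivAt Real.Gamma (-Real.eulerMascheroniConstant) 1 :=
    Real.hasDerivAt_Gamma_one
  have hE : HasDerivAt (fun α : ℝ => Real.sign a * |a| ^ α + Real.sign b * |b| ^ α)
      (a * Real.log |a| + b * Real.log |b|) 1 := by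
    have h1 := ((Real.hasStrictDerivAt_const_rpow (abs_pos.mpr ha) 1).hasDerivAt).const_mul
      (Real.sign a)
    have h2 := ((Real.hasStrictDerivAt_const_rpow (abs_pos.mpr hb) 1).hasDerivAt).const_mul
      (Real.sign b)
    have h12 := h1.add h2
    have e1 : Real.sign a * (|a| ^ (1:ℝ) * Real.log |a|) = a * Real.log |a| := by
      rw [Real.rpow_one, ← mul_assoc, hsa]
    have e2 : Real.sign b * (|b| ^ (1:ℝ) * Real.log |b|) = b * Real.log |b| := by
      rw [Real.rpow_one, ← mul_assoc, hsb]
    rw [e1, e2] at h12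
    exact h12
  have hBne : ((1:ℝ) * Real.sin (1 * π / 2)) ≠ 0 := by
    simp [Real.sin_pi_div_two]
  have hGne : Real.Gamma 1 ≠ 0 := by simp [Real.Gamma_one]
  have hF := (((hA.div hB hBne).mul ((hC.div hG hGne).pow 2)).mul hE)
  set γ := Real.eulerMascheroniConstant
  have hF1 : HasDerivAt (fun α : ℝ =>
      (2 ^ (α - 2) * π / (α * Real.sin (α * π / 2))) * (α ^ α / Real.Gamma α) ^ 2 *
        (Real.sign a * |a| ^ α + Real.sign b * |b| ^ α))
      (π / 2 * ((1 + Real.log 2 + 2 * γ) * (a + b) +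
        (a * Real.log |a| + b * Real.log |b|))) 1 := by
    refine hF.congr_deriv (Eq.symm ?_)
    simp only [Real.Gamma_one, Real.rpow_one, one_mul, Real.sin_pi_div_two, div_one,
      Real.one_rpow, one_pow, mul_one, hsa, hsb, h2pow, Pi.mul_apply, Pi.div_apply, Pi.pow_apply]
    push_cast
    ring
  have heq : h =ᶠ[nhds (1:ℝ)] (fun α : ℝ =>
      (2 ^ (α - 2) * π / (α * Real.sin (α * π / 2))) * (α ^ α / Real.Gamma α) ^ 2 *
        (Real.sign a * |a| ^ α + Real.sign b * |b| ^ α)) := by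
    filter_upwards [Ioi_mem_nhds (by norm_num : (0:ℝ) < 1)] with x hx
    exact hdef x hx
  have hDh := hF1.congr_of_eventuallyEq heq
  refine hDh.congr_deriv (Eq.symm ?_)
  rcases eq_or_ne (a + b) 0 with hab | hab
  · have hba : b = -a := by linarith
    subst hba
    rw [abs_neg]
    ring
  · field_simp
end
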